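/- arXiv:2012.02480 — 6 statements merged into one kernel-verified Lean document; each statement's English description precedes it below -/
import Mathlib

section
/- For every nonnegative integer ν, the integral ∫₀^π ((sin t / t) · exp(t · cot t))^ν dt equals π ν^ν / Γ(1+ν) = π ν^ν / ν! (with the integrand interpreted by continuity at t = 0, where it equals e^ν, and at t = π, where it equals 0 for ν ≥ 1). -/
open Real Complex MeasureTheory Filter Topology intervalIntegral Set

noncomputable section
namespace NB

lemma hasDerivAt_ofReal (s : ℝ) : HasDerivAt (fun s : ℝ => (s : ℂ)) 1 s := by
  simpa using (hasDerivAt_id s).ofReal_comp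

lemma HasDerivAt.cim {g : ℝ → ℂ} {g' : ℂ} {t : ℝ} (hg : HasDerivAt g g' t) :
    HasDerivAt (fun t => (g t).im) g'.im t := by
  simpa [Function.comp_def] using (Complex.imCLM.hasFDerivAt.comp t hg.hasFDerivAt).hasDerivAt

lemma norm_cexp_sub_one_le (a : ℂ) : ‖Complex.exp a - 1‖ ≤ ‖a‖ * Real.exp ‖a‖ := by
  have key : ∀ y ∈ Icc (0:ℝ) 1, HasDerivWithinAt (fun y : ℝ => Complex.exp (y • a))
      (a * Complex.exp (y • a)) (Icc 0 1) y := by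
    intro y _
    have h1 : HasDerivAt (fun y : ℝ => y • a) a y := by
      simpa using (hasDerivAt_id y).smul_const a
    simpa [mul_comm] using (h1.cexp).hasDerivWithinAt
  have bound : ∀ y ∈ Icc (0:ℝ) 1, ‖a * Complex.exp (y • a)‖ ≤ ‖a‖ * Real.exp ‖a‖ := by
    intro y hy
    rw [norm_mul]
    gcongr
    rw [Complex.norm_exp]
    have : (y • a).re ≤ ‖a‖ := by
      calc (y • a).re ≤ ‖y • a‖ := Complex.re_le_norm _
        _ = |y| * ‖a‖ := by simp [norm_smul]
        _ ≤ 1 * ‖a‖ := by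
            gcongr
            rw [abs_le]; constructor <;> linarith [hy.1, hy.2]
        _ = ‖a‖ := one_mul _
    exact Real.exp_le_exp.2 this
  have := Convex.norm_image_sub_le_of_norm_hasDerivWithin_le key bound (convex_Icc 0 1)
    (left_mem_Icc.2 zero_le_one) (right_mem_Icc.2 zero_le_one)
  simpa using this

/-- `J z m = ∫₀¹ (1-s)^m e^{zs} ds` -/
def J (z : ℂ) (m : ℕ) : ℂ := ∫ s in (0:ℝ)..1, ((1:ℂ) - s) ^ m * Complex.exp (z * s)

lemma J_cont (z : ℂ) (m : ℕ) : Continuous (fun s : ℝ => ((1:ℂ) - s) ^ m * Complex.exp (z * s)) := by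
  fun_prop

lemma g_hasDeriv (z : ℂ) (m : ℕ) (s : ℝ) :
    HasDerivAt (fun s : ℝ => ((1:ℂ) - s) ^ m * Complex.exp (z * s))
      (z * (((1:ℂ) - s) ^ m * Complex.exp (z * s))
        - (m : ℂ) * (((1:ℂ) - s) ^ (m - 1) * Complex.exp (z * s))) s := by
  have houter : HasDerivAt (fun w : ℂ => (1 - w) ^ m)
      ((m : ℂ) * (1 - (s:ℂ)) ^ (m - 1) * (-1)) ((s : ℝ) : ℂ) := by
    have := (((hasDerivAt_id ((s:ℝ):ℂ)).const_sub 1).fun_pow m)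
    simpa using this
  have h1 : HasDerivAt (fun s : ℝ => ((1:ℂ) - s) ^ m)
      ((m : ℂ) * (1 - (s:ℂ)) ^ (m - 1) * (-1)) s := houter.comp_ofReal
  have h2 : HasDerivAt (fun s : ℝ => Complex.exp (z * s)) (z * Complex.exp (z * s)) s := by
    have hz : HasDerivAt (fun s : ℝ => z * (s:ℂ)) z s := by
      simpa using (hasDerivAt_ofReal s).const_mul z
    simpa [mul_comm] using hz.cexp
  have := h1.mul h2
  refine this.congr_deriv (Eq.symm ?_)
  ring

lemma J_zero (z : ℂ) : z * J z 0 = Complex.exp z - 1 := by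
  have h := fun s (_ : s ∈ uIcc (0:ℝ) 1) => g_hasDeriv z 0 s
  have hint : IntervalIntegrable
      (fun s : ℝ => z * (((1:ℂ) - s) ^ 0 * Complex.exp (z * s))
        - ((0:ℕ) : ℂ) * (((1:ℂ) - s) ^ (0-1) * Complex.exp (z * s))) volume 0 1 := by
    apply Continuous.intervalIntegrable; fun_prop
  have key := intervalIntegral.integral_eq_sub_of_hasDerivAt h hint
  simp only [Nat.cast_zero, zero_mul, sub_zero, pow_zero, one_mul] at key ⊢
  rw [intervalIntegral.integral_const_mul] at key
  simpa [J] using key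

lemma J_succ (z : ℂ) (m : ℕ) (hm : 1 ≤ m) : z * J z m = m * J z (m - 1) - 1 := by
  have h := fun s (_ : s ∈ uIcc (0:ℝ) 1) => g_hasDeriv z m s
  have hint : IntervalIntegrable
      (fun s : ℝ => z * (((1:ℂ) - s) ^ m * Complex.exp (z * s))
        - (m:ℂ) * (((1:ℂ) - s) ^ (m-1) * Complex.exp (z * s))) volume 0 1 := by
    apply Continuous.intervalIntegrable; fun_prop
  have key := intervalIntegral.integral_eq_sub_of_hasDerivAt h hint
  rw [intervalIntegral.integral_sub ((J_cont z m).intervalIntegrable 0 1 |>.const_mul z)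
      ((J_cont z (m-1)).intervalIntegrable 0 1 |>.const_mul (m:ℂ)),
    intervalIntegral.integral_const_mul, intervalIntegral.integral_const_mul] at key
  rw [show ((1:ℂ) - ((1:ℝ):ℂ)) = 0 by norm_num, zero_pow (by omega : m ≠ 0)] at key
  norm_num at key
  simp only [J]
  linear_combination key

lemma taylor_rem (z : ℂ) : ∀ m : ℕ, 1 ≤ m →
    Complex.exp z = (∑ k ∈ Finset.range m, z ^ k / (k.factorial : ℂ))
      + z ^ m / (((m - 1).factorial : ℕ) : ℂ) * J z (m - 1) := by
  intro m
  induction m with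
  | zero => omega
  | succ m ih =>
    intro _
    rcases Nat.eq_zero_or_pos m with hm | hm
    · subst hm
      norm_num [Finset.sum_range_one]
      linear_combination (-1 : ℂ) * J_zero z
    · have hrec := ih hm
      have hstep := J_succ z m hm
      have hm1 : (m - 1) + 1 = m := by omega
      have hfac : ((m:ℂ)) * (((m-1).factorial : ℕ) : ℂ) = ((m.factorial : ℕ) : ℂ) := by
        rw [← Nat.cast_mul]
        congr 1
        calc m * (m-1).factorial = ((m-1)+1) * (m-1).factorial := by rw [hm1]
          _ = ((m-1)+1).factorial := (Nat.factorial_succ _).symm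
          _ = m.factorial := by rw [hm1]
      have hfacne : (((m-1).factorial : ℕ) : ℂ) ≠ 0 := Nat.cast_ne_zero.2 (Nat.factorial_ne_zero _)
      have hfacne2 : (((m).factorial : ℕ) : ℂ) ≠ 0 := Nat.cast_ne_zero.2 (Nat.factorial_ne_zero _)
      rw [Finset.sum_range_succ, show m + 1 - 1 = m from rfl, hrec]
      field_simp
      ring_nf
      linear_combination (-(z^m * (((m-1).factorial : ℕ) : ℂ))) * hstep +
        (-(z^m * J z (m-1))) * hfac



/-- the entire function `R` with `w^n R w = e^{nw} - ∑_{k<n} (nw)^k/k!` -/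
def Rf (n : ℕ) (w : ℂ) : ℂ := (n:ℂ)^n / (((n-1).factorial : ℕ) : ℂ) * J ((n:ℂ)*w) (n-1)

lemma Rf_eq (n : ℕ) (hn : 1 ≤ n) (w : ℂ) :
    w^n * Rf n w = Complex.exp ((n:ℂ)*w) - ∑ k ∈ Finset.range n, ((n:ℂ)*w)^k / (k.factorial : ℂ) := by
  have ht := taylor_rem ((n:ℂ)*w) n hn
  have : ((n:ℂ)*w)^n = (n:ℂ)^n * w^n := mul_pow _ _ _
  rw [Rf]
  linear_combination -ht - (J ((n:ℂ)*w) (n-1) / (((n-1).factorial : ℕ) : ℂ)) * this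

def Kc (n : ℕ) : ℝ := 1 + ∑ k ∈ Finset.range n, (n:ℝ)^k / (k.factorial : ℝ)

lemma Kc_nonneg (n : ℕ) : 0 ≤ Kc n := by
  have : ∀ k ∈ Finset.range n, (0:ℝ) ≤ (n:ℝ)^k / (k.factorial : ℝ) := by
    intro k _; positivity
  have := Finset.sum_nonneg this
  unfold Kc; linarith

lemma Rf_bound (n : ℕ) (hn : 1 ≤ n) {w : ℂ} (h1 : 1 ≤ ‖w‖) (h2 : w.re ≤ 0) :
    ‖Rf n w‖ ≤ Kc n / ‖w‖ := by
  have hw0 : w ≠ 0 := by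
    intro h; rw [h] at h1; simp at h1; linarith
  have hnorm : (0:ℝ) < ‖w‖ := lt_of_lt_of_le one_pos h1
  have hEnorm : ‖Complex.exp ((n:ℂ)*w)‖ ≤ 1 := by
    rw [Complex.norm_exp]
    have : ((n:ℂ)*w).re = (n:ℝ) * w.re := by simp
    rw [this]
    exact Real.exp_le_one_iff.2 (mul_nonpos_of_nonneg_of_nonpos (Nat.cast_nonneg n) h2)
  have hsum : ‖∑ k ∈ Finset.range n, ((n:ℂ)*w)^k / (k.factorial : ℂ)‖
      ≤ (∑ k ∈ Finset.range n, (n:ℝ)^k / (k.factorial : ℝ)) * ‖w‖^(n-1) := by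
    calc ‖∑ k ∈ Finset.range n, ((n:ℂ)*w)^k / (k.factorial : ℂ)‖
        ≤ ∑ k ∈ Finset.range n, ‖((n:ℂ)*w)^k / (k.factorial : ℂ)‖ := norm_sum_le _ _
      _ ≤ ∑ k ∈ Finset.range n, (n:ℝ)^k / (k.factorial : ℝ) * ‖w‖^(n-1) := by
          apply Finset.sum_le_sum
          intro k hk
          have hk' := Finset.mem_range.mp hk
          have hkn : ‖w‖^k ≤ ‖w‖^(n-1) :=
            pow_le_pow_right₀ h1 (by omega : k ≤ n-1)
          have heq : ‖((n:ℂ)*w)^k / (k.factorial : ℂ)‖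
              = (n:ℝ)^k * ‖w‖^k / (k.factorial : ℝ) := by
            rw [norm_div, norm_pow, norm_mul, Complex.norm_natCast, Complex.norm_natCast, mul_pow]
          rw [heq]
          calc (n:ℝ)^k * ‖w‖^k / (k.factorial : ℝ)
              ≤ (n:ℝ)^k * ‖w‖^(n-1) / (k.factorial : ℝ) := by gcongr
            _ = (n:ℝ)^k / (k.factorial : ℝ) * ‖w‖^(n-1) := by ring
      _ = (∑ k ∈ Finset.range n, (n:ℝ)^k / (k.factorial : ℝ)) * ‖w‖^(n-1) := by
          rw [Finset.sum_mul]
  have hkey : ‖Rf n w‖ * ‖w‖^n ≤ Kc n * ‖w‖^(n-1) := by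
    have h := Rf_eq n hn w
    have : ‖w^n * Rf n w‖ ≤ 1 + (∑ k ∈ Finset.range n, (n:ℝ)^k / (k.factorial : ℝ)) * ‖w‖^(n-1) := by
      rw [h]
      calc ‖Complex.exp ((n:ℂ)*w) - ∑ k ∈ Finset.range n, ((n:ℂ)*w)^k / (k.factorial : ℂ)‖
          ≤ ‖Complex.exp ((n:ℂ)*w)‖ + ‖∑ k ∈ Finset.range n, ((n:ℂ)*w)^k / (k.factorial : ℂ)‖ :=
            norm_sub_le _ _
        _ ≤ 1 + (∑ k ∈ Finset.range n, (n:ℝ)^k / (k.factorial : ℝ)) * ‖w‖^(n-1) := by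
            gcongr
    rw [norm_mul, norm_pow] at this
    have hw1 : (1:ℝ) ≤ ‖w‖^(n-1) := by calc (1:ℝ) = 1^(n-1) := (one_pow _).symm
      _ ≤ ‖w‖^(n-1) := pow_le_pow_left₀ (by norm_num) h1 _
    calc ‖Rf n w‖ * ‖w‖^n = ‖w‖^n * ‖Rf n w‖ := by ring
      _ ≤ 1 + (∑ k ∈ Finset.range n, (n:ℝ)^k / (k.factorial : ℝ)) * ‖w‖^(n-1) := this
      _ ≤ ‖w‖^(n-1) + (∑ k ∈ Finset.range n, (n:ℝ)^k / (k.factorial : ℝ)) * ‖w‖^(n-1) := by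
          linarith
      _ = Kc n * ‖w‖^(n-1) := by rw [Kc]; ring
  rw [div_eq_mul_inv]
  have hpow : ‖w‖^n = ‖w‖^(n-1) * ‖w‖ := by
    rw [← pow_succ]
    congr 1
    omega
  rw [hpow] at hkey
  have hp : (0:ℝ) < ‖w‖^(n-1) := by positivity
  rw [← mul_le_mul_iff_left₀ hnorm, mul_assoc, inv_mul_cancel₀ (ne_of_gt hnorm), mul_one]
  nlinarith

/-- entire primitive of `Rf n` -/
def Mf (n : ℕ) (w : ℂ) : ℂ := (n:ℂ)^(n-1) / (((n-1).factorial : ℕ) : ℂ) *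
    ∫ s in (0:ℝ)..1, ((1:ℂ) - s)^(n-1) * (Complex.exp ((n:ℂ)*w*s) - 1) / s

lemma Gcont (n : ℕ) (x : ℂ) :
    Continuous (fun s : ℝ => ((1:ℂ) - s)^(n-1) * ((n:ℂ) * Complex.exp ((n:ℂ)*x*s))) := by
  fun_prop

lemma Fmeas (n : ℕ) (x : ℂ) :
    AEStronglyMeasurable (fun s : ℝ => ((1:ℂ) - s)^(n-1) * (Complex.exp ((n:ℂ)*x*s) - 1) / s)
      (volume.restrict (Set.uIoc (0:ℝ) 1)) := by
  apply Measurable.aestronglyMeasurable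
  apply Measurable.div
  · fun_prop
  · exact Complex.measurable_ofReal

lemma hasDerivAt_Mf (n : ℕ) (hn : 1 ≤ n) (w₀ : ℂ) : HasDerivAt (Mf n) (Rf n w₀) w₀ := by
  set F : ℂ → ℝ → ℂ := fun x s => ((1:ℂ) - s)^(n-1) * (Complex.exp ((n:ℂ)*x*s) - 1) / s with hF
  set F' : ℂ → ℝ → ℂ := fun x s => ((1:ℂ) - s)^(n-1) * ((n:ℂ) * Complex.exp ((n:ℂ)*x*s)) with hF'
  have hIoc : Set.uIoc (0:ℝ) 1 = Set.Ioc (0:ℝ) 1 := Set.uIoc_of_le zero_le_one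
  have hbnd : ∀ᵐ s ∂(volume : Measure ℝ), s ∈ Set.uIoc (0:ℝ) 1 →
      ∀ x ∈ Metric.ball w₀ 1, ‖F' x s‖ ≤ (n:ℝ) * Real.exp ((n:ℝ) * (‖w₀‖ + 1)) := by
    filter_upwards with s hs x hx
    rw [hIoc] at hs
    rw [hF', norm_mul, norm_mul, norm_pow, Complex.norm_natCast]
    have h1 : ‖(1:ℂ) - (s:ℂ)‖ ≤ 1 := by
      rw [show ((1:ℂ) - (s:ℂ)) = ((1 - s : ℝ) : ℂ) by push_cast; ring]
      rw [Complex.norm_real, Real.norm_eq_abs]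
      rw [abs_le]; constructor <;> [linarith [hs.2]; linarith [hs.1]]
    have h2 : ‖Complex.exp ((n:ℂ)*x*s)‖ ≤ Real.exp ((n:ℝ) * (‖w₀‖ + 1)) := by
      rw [Complex.norm_exp]
      apply Real.exp_le_exp.2
      calc ((n:ℂ)*x*s).re ≤ ‖(n:ℂ)*x*(s:ℂ)‖ := Complex.re_le_norm _
        _ = (n:ℝ) * ‖x‖ * |s| := by
            rw [norm_mul, norm_mul, Complex.norm_natCast, Complex.norm_real]; rfl
        _ ≤ (n:ℝ) * (‖w₀‖ + 1) * 1 := by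
            have hxb : ‖x‖ ≤ ‖w₀‖ + 1 := by
              have := mem_ball_iff_norm.1 hx
              calc ‖x‖ = ‖w₀ + (x - w₀)‖ := by ring_nf
                _ ≤ ‖w₀‖ + ‖x - w₀‖ := norm_add_le _ _
                _ ≤ ‖w₀‖ + 1 := by linarith
            have hs1 : |s| ≤ 1 := by rw [abs_le]; constructor <;> [linarith [hs.1]; linarith [hs.2]]
            have : (0:ℝ) ≤ (n:ℝ) * ‖x‖ := by positivity
            nlinarith [norm_nonneg x, Nat.cast_nonneg (α := ℝ) n]
        _ = (n:ℝ) * (‖w₀‖ + 1) := mul_one _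
    calc ‖(1:ℂ) - (s:ℂ)‖^(n-1) * ((n:ℝ) * ‖Complex.exp ((n:ℂ)*x*s)‖)
        ≤ 1^(n-1) * ((n:ℝ) * Real.exp ((n:ℝ) * (‖w₀‖ + 1))) := by gcongr
      _ = (n:ℝ) * Real.exp ((n:ℝ) * (‖w₀‖ + 1)) := by rw [one_pow, one_mul]
  have hdiff : ∀ᵐ s ∂(volume : Measure ℝ), s ∈ Set.uIoc (0:ℝ) 1 →
      ∀ x ∈ Metric.ball w₀ 1, HasDerivAt (fun x => F x s) (F' x s) x := by
    filter_upwards with s hs x _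
    rw [hIoc] at hs
    have hs0 : (s:ℂ) ≠ 0 := by
      simp only [ne_eq, Complex.ofReal_eq_zero]
      exact ne_of_gt hs.1
    have hlin : HasDerivAt (fun x : ℂ => (n:ℂ)*x*s) ((n:ℂ)*s) x := by
      have : (fun x : ℂ => (n:ℂ)*x*(s:ℂ)) = fun x : ℂ => ((n:ℂ)*(s:ℂ))*x := by
        funext x; ring
      rw [this]
      simpa using (hasDerivAt_id x).const_mul ((n:ℂ)*(s:ℂ))
    have hexp := hlin.cexp
    have h3 := ((hexp.sub_const 1).div_const (s:ℂ)).const_mul (((1:ℂ) - s)^(n-1))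
    have h4 : (fun y : ℂ => ((1:ℂ) - s)^(n-1) * ((Complex.exp ((n:ℂ)*y*s) - 1) / (s:ℂ)))
        = fun y : ℂ => F y s := by
      funext y; rw [hF]; ring
    rw [h4] at h3
    refine h3.congr_deriv (Eq.symm ?_)
    rw [hF']
    field_simp
  have key := intervalIntegral.hasDerivAt_integral_of_dominated_loc_of_deriv_le
    (F := F) (F' := F') (x₀ := w₀) (bound := fun _ => (n:ℝ) * Real.exp ((n:ℝ) * (‖w₀‖ + 1)))
    (a := 0) (b := 1) (μ := volume) (Metric.ball_mem_nhds w₀ one_pos)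
    (Filter.Eventually.of_forall (fun x => Fmeas n x))
    ?_ ?_ hbnd ?_ hdiff
  · have hM : Mf n = fun w => (n:ℂ)^(n-1) / (((n-1).factorial : ℕ) : ℂ) * ∫ s in (0:ℝ)..1, F w s := rfl
    rw [hM]
    have h2 := (key.2.const_mul ((n:ℂ)^(n-1) / (((n-1).factorial : ℕ) : ℂ)))
    refine h2.congr_deriv (Eq.symm ?_)
    simp only [hF']
    have : (∫ s in (0:ℝ)..1, ((1:ℂ) - s)^(n-1) * ((n:ℂ) * Complex.exp ((n:ℂ)*w₀*s)))
        = (n:ℂ) * J ((n:ℂ)*w₀) (n-1) := by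
      rw [J, ← intervalIntegral.integral_const_mul]
      congr 1
      funext s
      ring_nf
    have hpow : (n:ℂ)^(n-1) * (n:ℂ) = (n:ℂ)^n := by
      rw [← pow_succ]
      congr 1
      omega
    rw [this, Rf]
    linear_combination (-(J ((n:ℂ)*w₀) (n-1) / (((n-1).factorial : ℕ) : ℂ))) * hpow
  · -- integrability of F w₀
    apply IntervalIntegrable.mono_fun' (g := fun _ => (n:ℝ) * (‖w₀‖+1) * Real.exp ((n:ℝ) * (‖w₀‖+1)))
    · exact intervalIntegrable_const
    · exact Fmeas n w₀
    · refine (ae_restrict_iff' measurableSet_uIoc).2 ?_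
      filter_upwards with s hs
      rw [hIoc] at hs
      rw [hF]
      simp only [norm_div]
      have hnorm_s : ‖(s:ℂ)‖ = s := by
        rw [Complex.norm_real, Real.norm_eq_abs, abs_of_pos hs.1]
      have h1 : ‖(1:ℂ) - (s:ℂ)‖^(n-1) ≤ 1 := by
        apply pow_le_one₀ (norm_nonneg _)
        rw [show ((1:ℂ) - (s:ℂ)) = ((1 - s : ℝ) : ℂ) by push_cast; ring, Complex.norm_real,
          Real.norm_eq_abs]
        rw [abs_le]; constructor <;> [linarith [hs.2]; linarith [hs.1]]
      have h2 : ‖Complex.exp ((n:ℂ)*w₀*s) - 1‖ ≤ ((n:ℝ) * ‖w₀‖ * s) * Real.exp ((n:ℝ) * (‖w₀‖+1)) := by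
        have hb := norm_cexp_sub_one_le ((n:ℂ)*w₀*s)
        have hna : ‖(n:ℂ)*w₀*(s:ℂ)‖ = (n:ℝ) * ‖w₀‖ * s := by
          rw [norm_mul, norm_mul, Complex.norm_natCast, hnorm_s]
        rw [hna] at hb
        apply le_trans hb
        have hexp : Real.exp ((n:ℝ) * ‖w₀‖ * s) ≤ Real.exp ((n:ℝ) * (‖w₀‖+1)) := by
          apply Real.exp_le_exp.2
          have hs1 : s ≤ 1 := hs.2
          have h0 : (0:ℝ) ≤ (n:ℝ) * ‖w₀‖ := by positivity
          nlinarith [norm_nonneg w₀, Nat.cast_nonneg (α := ℝ) n]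
        have h0 : (0:ℝ) ≤ (n:ℝ) * ‖w₀‖ * s := mul_nonneg (by positivity) hs.1.le
        nlinarith [Real.exp_pos ((n:ℝ) * ‖w₀‖ * s)]
      rw [norm_mul, norm_pow, hnorm_s]
      calc ‖(1:ℂ) - (s:ℂ)‖^(n-1) * ‖Complex.exp ((n:ℂ)*w₀*s) - 1‖ / s
          ≤ 1 * (((n:ℝ) * ‖w₀‖ * s) * Real.exp ((n:ℝ) * (‖w₀‖+1))) / s := by
            gcongr
            exact hs.1.le
        _ = (n:ℝ) * ‖w₀‖ * Real.exp ((n:ℝ) * (‖w₀‖+1)) * (s / s) := by ring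
        _ = (n:ℝ) * ‖w₀‖ * Real.exp ((n:ℝ) * (‖w₀‖+1)) := by
            rw [div_self (ne_of_gt hs.1), mul_one]
        _ ≤ (n:ℝ) * (‖w₀‖+1) * Real.exp ((n:ℝ) * (‖w₀‖+1)) := by
            have := Real.exp_pos ((n:ℝ) * (‖w₀‖+1))
            nlinarith [norm_nonneg w₀, Nat.cast_nonneg (α := ℝ) n]
  · exact (Gcont n w₀).aestronglyMeasurable
  · exact intervalIntegrable_const

lemma Mf_real (n : ℕ) (x : ℝ) : (Mf n ((x:ℝ) : ℂ)).im = 0 := by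
  have hfun : (fun s : ℝ => ((1:ℂ) - s)^(n-1) * (Complex.exp ((n:ℂ)*(x:ℂ)*s) - 1) / s)
      = fun s : ℝ => (((1-s)^(n-1) * (Real.exp (n*x*s) - 1)/s : ℝ) : ℂ) := by
    funext s
    push_cast
    ring
  rw [Mf, hfun, intervalIntegral.integral_ofReal,
    show (n:ℂ)^(n-1)/(((n-1).factorial : ℕ) : ℂ)
      = (((n:ℝ)^(n-1)/(((n-1).factorial : ℕ) : ℝ) : ℝ) : ℂ) by push_cast; ring,
    ← Complex.ofReal_mul, Complex.ofReal_im]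

lemma hasDerivAt_Mf_vert (n : ℕ) (hn : 1 ≤ n) (x u : ℝ) :
    HasDerivAt (fun u : ℝ => Mf n ((x:ℂ) + (u:ℂ) * Complex.I))
      (Rf n ((x:ℂ) + (u:ℂ) * Complex.I) * Complex.I) u := by
  have inner : HasDerivAt (fun u : ℝ => ((x:ℂ) + (u:ℂ) * Complex.I)) Complex.I u := by
    have := ((hasDerivAt_ofReal u).mul_const Complex.I).const_add (x:ℂ)
    simpa using this
  have outer := hasDerivAt_Mf n hn ((x:ℂ) + (u:ℂ) * Complex.I)
  have := HasDerivAt.comp (x := u) outer inner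
  simpa [Function.comp_def] using this

lemma Mf_im_bound (n : ℕ) (hn : 1 ≤ n) {x : ℝ} (hx : x ≤ -1) {y : ℝ} (hy : 0 ≤ y) (hy2 : y ≤ π) :
    |(Mf n ((x:ℂ) + (y:ℂ) * Complex.I)).im| ≤ Kc n * π / (-x) := by
  have hxpos : (0:ℝ) < -x := by linarith
  set C := Kc n / (-x) with hC
  have hCnn : 0 ≤ C := div_nonneg (Kc_nonneg n) hxpos.le
  have hder : ∀ u ∈ Icc (0:ℝ) y, HasDerivWithinAt (fun u : ℝ => Mf n ((x:ℂ) + (u:ℂ) * Complex.I))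
      (Rf n ((x:ℂ) + (u:ℂ) * Complex.I) * Complex.I) (Icc 0 y) u :=
    fun u _ => (hasDerivAt_Mf_vert n hn x u).hasDerivWithinAt
  have hbnd : ∀ u ∈ Icc (0:ℝ) y, ‖Rf n ((x:ℂ) + (u:ℂ) * Complex.I) * Complex.I‖ ≤ C := by
    intro u _
    rw [norm_mul, Complex.norm_I, mul_one]
    set w : ℂ := (x:ℂ) + (u:ℂ) * Complex.I with hw
    have hre : w.re = x := by simp [hw]
    have hnw : -x ≤ ‖w‖ := by
      calc -x ≤ |x| := le_abs_self (-x) |>.trans (by rw [abs_neg])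
        _ = |w.re| := by rw [hre]
        _ ≤ ‖w‖ := Complex.abs_re_le_norm w
        _ = ‖w‖ := rfl
    have h1 : 1 ≤ ‖w‖ := le_trans (by linarith) hnw
    have h2 : w.re ≤ 0 := by rw [hre]; linarith
    calc ‖Rf n w‖ ≤ Kc n / ‖w‖ := Rf_bound n hn h1 h2
      _ ≤ Kc n / (-x) := by
          apply div_le_div_of_nonneg_left (Kc_nonneg n) hxpos  -- maybe wrong arg order
          exact hnw
      _ = C := rfl
  have key := Convex.norm_image_sub_le_of_norm_hasDerivWithin_le hder hbnd (convex_Icc 0 y)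
    (left_mem_Icc.2 hy) (right_mem_Icc.2 hy)
  have hg0 : ((x:ℂ) + ((0:ℝ):ℂ) * Complex.I) = ((x:ℝ) : ℂ) := by norm_num
  rw [hg0] at key
  have him : |(Mf n ((x:ℂ) + (y:ℂ) * Complex.I)).im|
      ≤ ‖Mf n ((x:ℂ) + (y:ℂ) * Complex.I) - Mf n ((x:ℝ) : ℂ)‖ := by
    have h0 := Mf_real n x
    calc |(Mf n ((x:ℂ) + (y:ℂ) * Complex.I)).im|
        = |(Mf n ((x:ℂ) + (y:ℂ) * Complex.I) - Mf n ((x:ℝ):ℂ)).im| := by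
          rw [Complex.sub_im, h0, sub_zero]
      _ ≤ ‖Mf n ((x:ℂ) + (y:ℂ) * Complex.I) - Mf n ((x:ℝ):ℂ)‖ :=
          Complex.abs_im_le_norm _
      _ = ‖Mf n ((x:ℂ) + (y:ℂ) * Complex.I) - Mf n ((x:ℝ):ℂ)‖ := rfl
  calc |(Mf n ((x:ℂ) + (y:ℂ) * Complex.I)).im|
      ≤ ‖Mf n ((x:ℂ) + (y:ℂ) * Complex.I) - Mf n ((x:ℝ) : ℂ)‖ := him
    _ ≤ C * ‖y - 0‖ := key
    _ = C * y := by rw [sub_zero, Real.norm_eq_abs, _root_.abs_of_nonneg hy]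
    _ ≤ C * π := by nlinarith
    _ = Kc n * π / (-x) := by rw [hC]; ring

def ac (n k : ℕ) : ℝ := (n:ℝ)^k / ((k.factorial : ℝ) * ((k:ℝ) - n + 1))

def Pf (n : ℕ) (w : ℂ) : ℂ := ∑ k ∈ Finset.range (n-1), ((ac n k : ℝ) : ℂ) * w^((k:ℤ) - n + 1)

def cc (n : ℕ) : ℝ := (n:ℝ)^(n-1) / (((n-1).factorial : ℕ) : ℝ)

def hf (n : ℕ) (w : ℂ) : ℂ := Pf n w + ((cc n : ℝ) : ℂ) * Complex.log w + Mf n w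

lemma hasDerivAt_Pf (n : ℕ) {w : ℂ} (hw0 : w ≠ 0) :
    HasDerivAt (Pf n) (∑ k ∈ Finset.range (n-1), ((n:ℂ)^k/(k.factorial:ℂ)) * w^((k:ℤ) - n)) w := by
  apply HasDerivAt.fun_sum
  intro k hk
  have hk' := Finset.mem_range.mp hk
  have hz := (hasDerivAt_zpow ((k:ℤ) - n + 1) w (Or.inl hw0)).const_mul ((ac n k : ℝ) : ℂ)
  have hcoef : ((ac n k : ℝ) : ℂ) * (((k:ℤ) - n + 1 : ℤ) : ℂ) = (n:ℂ)^k/(k.factorial:ℂ) := by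
    have hkn : k + 2 ≤ n := by omega
    have hneR : ((k:ℝ) - n + 1) ≠ 0 := by
      have : (k:ℝ) + 2 ≤ (n:ℝ) := by exact_mod_cast hkn
      intro h; linarith
    have hne : ((k:ℂ) - n + 1) ≠ 0 := by
      have : ((k:ℂ) - n + 1) = (((k:ℝ) - n + 1 : ℝ) : ℂ) := by push_cast; ring
      rw [this]
      exact Complex.ofReal_ne_zero.2 hneR
    have hfac : ((k.factorial : ℕ) : ℂ) ≠ 0 := Nat.cast_ne_zero.2 (Nat.factorial_ne_zero _)
    rw [ac]
    push_cast
    field_simp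
  have hexp : (k:ℤ) - n + 1 - 1 = (k:ℤ) - n := by ring
  rw [hexp] at hz
  refine hz.congr_deriv (Eq.symm ?_)
  rw [← hcoef]
  ring

lemma hasDerivAt_hf (n : ℕ) (hn : 1 ≤ n) {w : ℂ} (hw : w ∈ Complex.slitPlane) :
    HasDerivAt (hf n) (Complex.exp ((n:ℂ)*w) / w^n) w := by
  have hw0 : w ≠ 0 := Complex.slitPlane_ne_zero hw
  have hwn : w^n ≠ 0 := pow_ne_zero n hw0
  have h1 := hasDerivAt_Pf n hw0
  have h2 := (Complex.hasDerivAt_log hw).const_mul ((cc n : ℝ) : ℂ)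
  have h3 := hasDerivAt_Mf n hn w
  have hD := (h1.add h2).add h3
  have hDval : (∑ k ∈ Finset.range (n-1), ((n:ℂ)^k/(k.factorial:ℂ)) * w^((k:ℤ) - n))
      + ((cc n : ℝ) : ℂ) * w⁻¹ + Rf n w = Complex.exp ((n:ℂ)*w) / w^n := by
    rw [eq_div_iff hwn]
    have hzp : ∀ k : ℕ, k < n → w^((k:ℤ) - n) * w^n = w^k := by
      intro k hk
      have : w^(n:ℕ) = w^((n:ℕ):ℤ) := (zpow_natCast w n).symm
      rw [this, ← zpow_add₀ hw0, show (k:ℤ) - n + n = (k:ℤ) by ring, zpow_natCast]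
    have hsum1 : (∑ k ∈ Finset.range (n-1), ((n:ℂ)^k/(k.factorial:ℂ)) * w^((k:ℤ) - n)) * w^n
        = ∑ k ∈ Finset.range (n-1), ((n:ℂ)^k/(k.factorial:ℂ)) * w^k := by
      rw [Finset.sum_mul]
      apply Finset.sum_congr rfl
      intro k hk
      have hk' := Finset.mem_range.mp hk
      rw [mul_assoc, hzp k (by omega)]
    have hccw : ((cc n : ℝ) : ℂ) * w⁻¹ * w^n = ((n:ℂ)^(n-1)/(((n-1).factorial : ℕ):ℂ)) * w^(n-1) := by
      have hpow : w^n = w^(n-1) * w := by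
        conv_lhs => rw [show n = (n-1)+1 by omega]
        rw [pow_succ]
      have hcast : ((cc n : ℝ) : ℂ) = (n:ℂ)^(n-1)/(((n-1).factorial : ℕ):ℂ) := by
        rw [cc]; push_cast; ring
      calc ((cc n : ℝ) : ℂ) * w⁻¹ * w^n = ((cc n : ℝ) : ℂ) * w^(n-1) * (w⁻¹ * w) := by
            rw [hpow]; ring
        _ = ((cc n : ℝ) : ℂ) * w^(n-1) := by rw [inv_mul_cancel₀ hw0, mul_one]
        _ = ((n:ℂ)^(n-1)/(((n-1).factorial : ℕ):ℂ)) * w^(n-1) := by rw [hcast]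
    have hRf := Rf_eq n hn w
    have hsum2 : ∑ k ∈ Finset.range n, ((n:ℂ)*w)^k / (k.factorial : ℂ)
        = (∑ k ∈ Finset.range (n-1), ((n:ℂ)^k/(k.factorial:ℂ)) * w^k)
          + ((n:ℂ)^(n-1)/(((n-1).factorial : ℕ):ℂ)) * w^(n-1) := by
      conv_lhs => rw [show Finset.range n = Finset.range ((n-1)+1) from by
        rw [show (n-1)+1 = n by omega]]
      rw [Finset.sum_range_succ]
      congr 1
      · apply Finset.sum_congr rfl
        intro k _
        rw [mul_pow]
        ring
      · rw [mul_pow]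
        ring
    calc ((∑ k ∈ Finset.range (n-1), ((n:ℂ)^k/(k.factorial:ℂ)) * w^((k:ℤ) - n))
          + ((cc n : ℝ) : ℂ) * w⁻¹ + Rf n w) * w^n
        = (∑ k ∈ Finset.range (n-1), ((n:ℂ)^k/(k.factorial:ℂ)) * w^((k:ℤ) - n)) * w^n
          + ((cc n : ℝ) : ℂ) * w⁻¹ * w^n + w^n * Rf n w := by ring
      _ = (∑ k ∈ Finset.range (n-1), ((n:ℂ)^k/(k.factorial:ℂ)) * w^k)
          + ((n:ℂ)^(n-1)/(((n-1).factorial : ℕ):ℂ)) * w^(n-1)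
          + (Complex.exp ((n:ℂ)*w) - ∑ k ∈ Finset.range n, ((n:ℂ)*w)^k / (k.factorial : ℂ)) := by
            rw [hsum1, hccw, hRf]
      _ = Complex.exp ((n:ℂ)*w) := by
            rw [hsum2]
            ring
  rw [← hDval]
  exact hD

def zc (t : ℝ) : ℂ := (↑(t * Real.cot t) : ℂ) + ↑t * Complex.I

def dc (t : ℝ) : ℝ := (Real.cos t * Real.sin t - t) / (Real.sin t)^2

def Ff (t : ℝ) : ℝ := (Real.sin t / t) * Real.exp (t * Real.cot t)

lemma zc_re (t : ℝ) : (zc t).re = t * Real.cot t := by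
  simp only [zc, Complex.add_re, Complex.ofReal_re, Complex.mul_re, Complex.I_re,
    Complex.I_im, Complex.ofReal_im]
  ring

lemma zc_im (t : ℝ) : (zc t).im = t := by
  simp only [zc, Complex.add_im, Complex.ofReal_im, Complex.mul_im, Complex.I_re,
    Complex.I_im, Complex.ofReal_re]
  ring

lemma zc_mem {t : ℝ} (h1 : 0 < t) : zc t ∈ Complex.slitPlane := by
  rw [Complex.mem_slitPlane_iff]
  right
  rw [zc_im]
  exact ne_of_gt h1

lemma hasDerivAt_zc {t : ℝ} (h1 : 0 < t) (h2 : t < π) :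
    HasDerivAt zc ((↑(dc t) : ℂ) + Complex.I) t := by
  have hsin : Real.sin t ≠ 0 := ne_of_gt (Real.sin_pos_of_pos_of_lt_pi h1 h2)
  have hu : HasDerivAt (fun t : ℝ => t * Real.cot t) (dc t) t := by
    have heq : (fun t : ℝ => t * Real.cot t) = fun t : ℝ => t * Real.cos t / Real.sin t := by
      funext u
      rw [Real.cot_eq_cos_div_sin]
      ring
    rw [heq]
    have hnum : HasDerivAt (fun t : ℝ => t * Real.cos t)
        (1 * Real.cos t + t * (-Real.sin t)) t :=
      (hasDerivAt_id t).mul (Real.hasDerivAt_cos t)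
    have := hnum.div (Real.hasDerivAt_sin t) hsin
    refine this.congr_deriv (Eq.symm ?_)
    rw [dc]
    have hpyth := Real.sin_sq_add_cos_sq t
    field_simp
    ring_nf
    nlinarith [hpyth]
  have h1' : HasDerivAt (fun t : ℝ => (↑(t * Real.cot t) : ℂ)) ((dc t : ℝ) : ℂ) t :=
    hu.ofReal_comp
  have h2' : HasDerivAt (fun t : ℝ => (↑t : ℂ) * Complex.I) Complex.I t := by
    simpa using (hasDerivAt_ofReal t).mul_const Complex.I
  exact h1'.add h2'

lemma zc_factor {t : ℝ} (h1 : 0 < t) (h2 : t < π) :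
    zc t = (↑(t / Real.sin t) : ℂ) * Complex.exp ((↑t : ℂ) * Complex.I) := by
  have hsin : Real.sin t ≠ 0 := ne_of_gt (Real.sin_pos_of_pos_of_lt_pi h1 h2)
  have e1 : t / Real.sin t * Real.cos t = t * Real.cot t := by
    rw [Real.cot_eq_cos_div_sin]; field_simp
  have e2 : t / Real.sin t * Real.sin t = t := by field_simp
  have expand : (↑(t / Real.sin t) : ℂ) * Complex.exp ((↑t : ℂ) * Complex.I)
      = ↑(t / Real.sin t * Real.cos t) + ↑(t / Real.sin t * Real.sin t) * Complex.I := by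
    rw [Complex.exp_mul_I, ← Complex.ofReal_cos, ← Complex.ofReal_sin]
    push_cast
    ring
  rw [expand, e1, e2, zc]

lemma exp_zc_div {t : ℝ} (h1 : 0 < t) (h2 : t < π) :
    Complex.exp (zc t) / zc t = ((Ff t : ℝ) : ℂ) := by
  have hsin : Real.sin t ≠ 0 := ne_of_gt (Real.sin_pos_of_pos_of_lt_pi h1 h2)
  have hQ : Complex.exp ((↑t:ℂ) * Complex.I) ≠ 0 := Complex.exp_ne_zero _
  have hexp : Complex.exp (zc t)
      = ↑(Real.exp (t * Real.cot t)) * Complex.exp ((↑t:ℂ) * Complex.I) := by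
    rw [zc, Complex.exp_add, ← Complex.ofReal_exp]
  rw [hexp, zc_factor h1 h2, mul_div_mul_right _ _ hQ, ← Complex.ofReal_div]
  norm_cast
  rw [Ff]
  field_simp

lemma exp_zc_pow (n : ℕ) {t : ℝ} (h1 : 0 < t) (h2 : t < π) :
    Complex.exp ((n:ℂ) * zc t) / (zc t)^n = ((Ff t ^ n : ℝ) : ℂ) := by
  rw [Complex.exp_nat_mul, ← div_pow, exp_zc_div h1 h2]
  push_cast
  ring

lemma Aderiv (n : ℕ) (hn : 1 ≤ n) {t : ℝ} (h1 : 0 < t) (h2 : t < π) :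
    HasDerivAt (fun t => (hf n (zc t)).im) (Ff t ^ n) t := by
  have hcomp := HasDerivAt.comp (x := t) (hasDerivAt_hf n hn (zc_mem h1)) (hasDerivAt_zc h1 h2)
  have him := HasDerivAt.cim (by simpa [Function.comp_def] using hcomp)
  refine him.congr_deriv (Eq.symm ?_)
  rw [exp_zc_pow n h1 h2]
  simp [Complex.mul_im, ← Complex.ofReal_pow]

lemma Ff_pos {t : ℝ} (h1 : 0 < t) (h2 : t < π) : 0 < Ff t := by
  have hsin : 0 < Real.sin t := Real.sin_pos_of_pos_of_lt_pi h1 h2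
  rw [Ff]
  positivity

lemma tcot_le_one {t : ℝ} (h1 : 0 < t) (h2 : t < π) : t * Real.cot t ≤ 1 := by
  have hsin : 0 < Real.sin t := Real.sin_pos_of_pos_of_lt_pi h1 h2
  have hkey : t * Real.cos t ≤ Real.sin t := by
    rcases lt_or_ge t (π/2) with hlt | hge
    · have hcos : 0 < Real.cos t := Real.cos_pos_of_mem_Ioo ⟨by linarith [Real.pi_pos], hlt⟩
      have htan := Real.lt_tan h1 hlt
      rw [Real.tan_eq_sin_div_cos] at htan
      rw [lt_div_iff₀ hcos] at htan
      linarith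
    · have hcos : Real.cos t ≤ 0 :=
        Real.cos_nonpos_of_pi_div_two_le_of_le hge (by linarith [Real.pi_pos])
      nlinarith
  rw [Real.cot_eq_cos_div_sin]
  rw [show t * (Real.cos t / Real.sin t) = t * Real.cos t / Real.sin t by ring]
  rw [div_le_one hsin]
  exact hkey

lemma Ff_le {t : ℝ} (h1 : 0 < t) (h2 : t < π) : Ff t ≤ Real.exp 1 := by
  have hsin : 0 < Real.sin t := Real.sin_pos_of_pos_of_lt_pi h1 h2
  have hs1 : Real.sin t / t ≤ 1 := by
    rw [div_le_one h1]
    exact (Real.sin_lt h1).le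
  have hexp : Real.exp (t * Real.cot t) ≤ Real.exp 1 := Real.exp_le_exp.2 (tcot_le_one h1 h2)
  calc Ff t = Real.sin t / t * Real.exp (t * Real.cot t) := rfl
    _ ≤ 1 * Real.exp 1 := by
        apply mul_le_mul hs1 hexp (Real.exp_pos _).le zero_le_one
    _ = Real.exp 1 := one_mul _

lemma Ff_pi : Ff π = 0 := by
  rw [Ff, Real.sin_pi]
  simp

lemma Ff_pow_bound (n : ℕ) {t : ℝ} (h1 : 0 < t) (h2 : t ≤ π) :
    |Ff t ^ n| ≤ Real.exp 1 ^ n := by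
  rcases eq_or_lt_of_le h2 with rfl | h2'
  · rw [Ff_pi]
    rcases Nat.eq_zero_or_pos n with rfl | hn
    · norm_num
    · rw [zero_pow (by omega), abs_zero]
      positivity
  · rw [_root_.abs_of_nonneg (pow_nonneg (Ff_pos h1 h2').le n)]
    exact pow_le_pow_left₀ (Ff_pos h1 h2').le (Ff_le h1 h2') n

lemma tendsto_sin_div : Tendsto (fun t : ℝ => Real.sin t / t) (𝓝[>] (0:ℝ)) (𝓝 1) := by
  have hd := Real.hasDerivAt_sin 0
  rw [hasDerivAt_iff_tendsto_slope] at hd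
  have heq : ∀ t : ℝ, slope Real.sin 0 t = Real.sin t / t := by
    intro t
    rw [slope_def_field]
    simp
  rw [Real.cos_zero] at hd
  have := hd.mono_left (nhdsWithin_mono _ (fun x hx => by
    simp only [Set.mem_compl_iff, Set.mem_singleton_iff]
    exact ne_of_gt hx))
  apply this.congr
  intro t
  exact heq t

lemma tendsto_t_div_sin : Tendsto (fun t : ℝ => t / Real.sin t) (𝓝[>] (0:ℝ)) (𝓝 1) := by
  have := tendsto_sin_div.inv₀ one_ne_zero
  rw [inv_one] at this
  apply this.congr
  intro t
  rw [inv_div]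

lemma tendsto_tcot_zero : Tendsto (fun t : ℝ => t * Real.cot t) (𝓝[>] (0:ℝ)) (𝓝 1) := by
  have hcos : Tendsto Real.cos (𝓝[>] (0:ℝ)) (𝓝 1) := by
    have := (Real.continuous_cos.tendsto 0).mono_left
      (nhdsWithin_le_nhds : 𝓝[>] (0:ℝ) ≤ 𝓝 0)
    rwa [Real.cos_zero] at this
  have := hcos.mul tendsto_t_div_sin
  rw [mul_one] at this
  apply this.congr
  intro t
  rw [Real.cot_eq_cos_div_sin]
  ring

lemma tendsto_zc_zero : Tendsto zc (𝓝[>] (0:ℝ)) (𝓝 (1:ℂ)) := by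
  have h1 : Tendsto (fun t : ℝ => ((t * Real.cot t : ℝ) : ℂ)) (𝓝[>] (0:ℝ)) (𝓝 ((1:ℝ):ℂ)) :=
    (Complex.continuous_ofReal.tendsto _).comp tendsto_tcot_zero
  have hid : Tendsto (fun t : ℝ => t) (𝓝[>] (0:ℝ)) (𝓝 (0:ℝ)) :=
    tendsto_id.mono_left nhdsWithin_le_nhds
  have h2 : Tendsto (fun t : ℝ => (t:ℂ) * Complex.I) (𝓝[>] (0:ℝ))
      (𝓝 (((0:ℝ):ℂ) * Complex.I)) :=
    ((Complex.continuous_ofReal.tendsto _).comp hid).mul_const Complex.I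
  have h3 := h1.add h2
  have heq : ((1:ℝ):ℂ) + ((0:ℝ):ℂ) * Complex.I = 1 := by simp
  rw [heq] at h3
  exact h3

lemma one_mem_slitPlane : (1:ℂ) ∈ Complex.slitPlane := by
  rw [Complex.mem_slitPlane_iff]
  left
  norm_num

lemma hf_one_im (n : ℕ) : (hf n 1).im = 0 := by
  rw [hf, Complex.add_im, Complex.add_im, Complex.log_one, mul_zero, Complex.zero_im]
  have h1 : (Pf n 1).im = 0 := by
    rw [Pf]
    rw [Complex.im_sum]
    apply Finset.sum_eq_zero
    intro k _
    rw [one_zpow, mul_one, Complex.ofReal_im]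
  have h2 : (Mf n 1).im = 0 := by
    have := Mf_real n 1
    rwa [Complex.ofReal_one] at this
  rw [h1, h2]
  ring

lemma tendsto_A_zero (n : ℕ) (hn : 1 ≤ n) :
    Tendsto (fun t => (hf n (zc t)).im) (𝓝[>] (0:ℝ)) (𝓝 0) := by
  have hcont : ContinuousAt (hf n) 1 :=
    (hasDerivAt_hf n hn one_mem_slitPlane).differentiableAt.continuousAt
  have h1 : Tendsto (fun t => hf n (zc t)) (𝓝[>] (0:ℝ)) (𝓝 (hf n 1)) :=
    hcont.tendsto.comp tendsto_zc_zero
  have h2 := (Complex.continuous_im.tendsto (hf n 1)).comp h1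
  rwa [hf_one_im] at h2

lemma tendsto_tcot_pi : Tendsto (fun t : ℝ => t * Real.cot t) (𝓝[<] π) atBot := by
  have hsin0 : Tendsto Real.sin (𝓝[<] π) (𝓝[>] 0) := by
    rw [tendsto_nhdsWithin_iff]
    constructor
    · have hs : Tendsto Real.sin (𝓝[<] π) (𝓝 (Real.sin π)) :=
        (Real.continuous_sin.tendsto π).mono_left nhdsWithin_le_nhds
      rwa [Real.sin_pi] at hs
    · have hmem : Set.Ioo 0 π ∈ 𝓝[<] π :=
        Ioo_mem_nhdsLT_of_mem ⟨Real.pi_pos, le_refl π⟩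
      filter_upwards [hmem] with t ht
      exact Real.sin_pos_of_pos_of_lt_pi ht.1 ht.2
  have hinv : Tendsto (fun t => (Real.sin t)⁻¹) (𝓝[<] π) atTop :=
    tendsto_inv_nhdsGT_zero.comp hsin0
  have htcos : Tendsto (fun t : ℝ => t * Real.cos t) (𝓝[<] π) (𝓝 (-π)) := by
    have : Tendsto (fun t : ℝ => t * Real.cos t) (𝓝 π) (𝓝 (π * Real.cos π)) :=
      (continuous_id.mul Real.continuous_cos).tendsto π
    rw [Real.cos_pi, mul_neg_one] at this
    exact this.mono_left nhdsWithin_le_nhds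
  have := htcos.neg_mul_atTop (by linarith [Real.pi_pos] : -π < 0) hinv
  apply this.congr
  intro t
  rw [Real.cot_eq_cos_div_sin]
  ring

lemma tendsto_norm_zc_atTop : Tendsto (fun t => ‖zc t‖) (𝓝[<] π) atTop := by
  have h1 : Tendsto (fun t => |t * Real.cot t|) (𝓝[<] π) atTop :=
    tendsto_abs_atBot_atTop.comp tendsto_tcot_pi
  apply tendsto_atTop_mono _ h1
  intro t
  calc |t * Real.cot t| = |(zc t).re| := by rw [zc_re]
    _ ≤ ‖zc t‖ := Complex.abs_re_le_norm _
    _ = ‖zc t‖ := rfl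

lemma tendsto_invnorm_zc : Tendsto (fun t => ‖zc t‖⁻¹) (𝓝[<] π) (𝓝 0) :=
  tendsto_inv_atTop_zero.comp tendsto_norm_zc_atTop

lemma Pf_im_le (n : ℕ) {w : ℂ} (hw : 1 ≤ ‖w‖) :
    |(Pf n w).im| ≤ (∑ k ∈ Finset.range (n-1), |ac n k|) * ‖w‖⁻¹ := by
  calc |(Pf n w).im| ≤ ‖Pf n w‖ := Complex.abs_im_le_norm _
    _ = ‖Pf n w‖ := rfl
    _ ≤ ∑ k ∈ Finset.range (n-1), ‖((ac n k : ℝ) : ℂ) * w^((k:ℤ) - n + 1)‖ := norm_sum_le _ _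
    _ ≤ ∑ k ∈ Finset.range (n-1), |ac n k| * ‖w‖⁻¹ := by
        apply Finset.sum_le_sum
        intro k hk
        rw [norm_mul, norm_zpow, Complex.norm_real, Real.norm_eq_abs]
        have hz : ‖w‖^((k:ℤ) - n + 1) ≤ ‖w‖⁻¹ := by
          have h2 : ((k:ℤ) - n + 1) ≤ -1 := by
            have := Finset.mem_range.mp hk
            omega
          calc ‖w‖^((k:ℤ) - n + 1) ≤ ‖w‖^(-1 : ℤ) := zpow_le_zpow_right₀ hw h2
            _ = ‖w‖⁻¹ := by rw [zpow_neg_one]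
        exact mul_le_mul_of_nonneg_left hz (abs_nonneg _)
    _ = (∑ k ∈ Finset.range (n-1), |ac n k|) * ‖w‖⁻¹ := by rw [Finset.sum_mul]

lemma Pf_im_tendsto (n : ℕ) : Tendsto (fun t => (Pf n (zc t)).im) (𝓝[<] π) (𝓝 0) := by
  apply squeeze_zero_norm' (a := fun t => (∑ k ∈ Finset.range (n-1), |ac n k|) * ‖zc t‖⁻¹)
  · filter_upwards [tendsto_norm_zc_atTop.eventually_ge_atTop 1] with t ht
    rw [Real.norm_eq_abs]
    exact Pf_im_le n ht
  · have := tendsto_invnorm_zc.const_mul (∑ k ∈ Finset.range (n-1), |ac n k|)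
    simpa using this

lemma tendsto_arg_zc : Tendsto (fun t => (zc t).arg) (𝓝[<] π) (𝓝 π) := by
  have hq : Tendsto (fun t => (-(zc t)).im / ‖zc t‖) (𝓝[<] π) (𝓝 0) := by
    apply squeeze_zero_norm' (a := fun t => π * ‖zc t‖⁻¹)
    · have hmem : Set.Ioo 0 π ∈ 𝓝[<] π := Ioo_mem_nhdsLT_of_mem ⟨Real.pi_pos, le_refl π⟩
      filter_upwards [hmem, tendsto_norm_zc_atTop.eventually_ge_atTop 1] with t ht hn1
      have hpos : (0:ℝ) < ‖zc t‖ := lt_of_lt_of_le one_pos hn1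
      have habs : ‖zc t‖ = ‖zc t‖ := rfl
      rw [Real.norm_eq_abs, Complex.neg_im, zc_im, abs_div, abs_neg, _root_.abs_of_pos ht.1,
        habs, _root_.abs_of_pos hpos, div_eq_mul_inv]
      gcongr
      linarith [ht.2]
    · have := tendsto_invnorm_zc.const_mul π
      simpa using this
  have harcsin : Tendsto (fun t => Real.arcsin ((-(zc t)).im / ‖zc t‖) + π)
      (𝓝[<] π) (𝓝 π) := by
    have h1 := (Real.continuous_arcsin.tendsto 0).comp hq
    rw [Real.arcsin_zero] at h1
    have := h1.add_const π
    rwa [zero_add] at this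
  apply harcsin.congr'
  filter_upwards [tendsto_tcot_pi.eventually_le_atBot (-1),
    Ioo_mem_nhdsLT_of_mem ⟨Real.pi_pos, le_refl π⟩] with t hle ht
  rw [Complex.arg_of_re_neg_of_im_nonneg]
  · rw [zc_re]; linarith
  · rw [zc_im]; exact ht.1.le

lemma Mf_im_tendsto (n : ℕ) (hn : 1 ≤ n) :
    Tendsto (fun t => (Mf n (zc t)).im) (𝓝[<] π) (𝓝 0) := by
  apply squeeze_zero_norm' (a := fun t => Kc n * π / (-(t * Real.cot t)))
  · filter_upwards [tendsto_tcot_pi.eventually_le_atBot (-1),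
      Ioo_mem_nhdsLT_of_mem ⟨Real.pi_pos, le_refl π⟩] with t hle ht
    rw [Real.norm_eq_abs]
    exact Mf_im_bound n hn hle ht.1.le ht.2.le
  · have hneg : Tendsto (fun t : ℝ => -(t * Real.cot t)) (𝓝[<] π) atTop :=
      tendsto_neg_atBot_atTop.comp tendsto_tcot_pi
    have := (tendsto_inv_atTop_zero.comp hneg).const_mul (Kc n * π)
    simp only [mul_zero] at this
    apply this.congr
    intro t
    rw [div_eq_mul_inv]
    rfl

lemma hf_im_split (n : ℕ) (w : ℂ) :
    (hf n w).im = (Pf n w).im + cc n * w.arg + (Mf n w).im := by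
  rw [hf, Complex.add_im, Complex.add_im, Complex.mul_im, Complex.ofReal_re, Complex.ofReal_im,
    Complex.log_im]
  ring

lemma tendsto_A_pi (n : ℕ) (hn : 1 ≤ n) :
    Tendsto (fun t => (hf n (zc t)).im) (𝓝[<] π) (𝓝 (π * cc n)) := by
  have h1 := (Pf_im_tendsto n).add ((tendsto_arg_zc.const_mul (cc n)).add (Mf_im_tendsto n hn))
  rw [zero_add, add_zero] at h1
  have h2 : cc n * π = π * cc n := mul_comm _ _
  rw [h2] at h1
  apply h1.congr
  intro t
  rw [hf_im_split]
  ring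

lemma Ff_measurable (n : ℕ) : Measurable (fun t : ℝ => Ff t ^ n) := by
  have hcot : Real.cot = fun t => Real.cos t / Real.sin t :=
    funext fun t => Real.cot_eq_cos_div_sin t
  have h1 : Measurable Ff := by
    rw [show Ff = fun t => (Real.sin t / t) * Real.exp (t * Real.cot t) from rfl, hcot]
    exact ((Real.continuous_sin.measurable).div measurable_id).mul
      (Real.continuous_exp.measurable.comp
        (measurable_id.mul ((Real.continuous_cos.measurable).div Real.continuous_sin.measurable)))
  exact h1.pow_const n

lemma Ff_intable (n : ℕ) : IntervalIntegrable (fun t : ℝ => Ff t ^ n) volume 0 π := by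
  rw [intervalIntegrable_iff_integrableOn_Ioc_of_le Real.pi_pos.le]
  apply Measure.integrableOn_of_bounded (M := Real.exp 1 ^ n)
  · exact (measure_Ioc_lt_top).ne
  · exact (Ff_measurable n).aestronglyMeasurable
  · rw [ae_restrict_iff' measurableSet_Ioc]
    filter_upwards with t ht
    rw [Real.norm_eq_abs]
    exact Ff_pow_bound n ht.1 ht.2

lemma ftc_piece (n : ℕ) (hn : 1 ≤ n) {a b : ℝ} (ha : 0 < a) (hab : a ≤ b) (hb : b < π) :
    ∫ t in a..b, Ff t ^ n = (hf n (zc b)).im - (hf n (zc a)).im := by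
  apply intervalIntegral.integral_eq_sub_of_hasDerivAt
  · intro t ht
    rw [Set.uIcc_of_le hab] at ht
    exact Aderiv n hn (lt_of_lt_of_le ha ht.1) (lt_of_le_of_lt ht.2 hb)
  · apply (Ff_intable n).mono_set
    rw [Set.uIcc_of_le hab, Set.uIcc_of_le Real.pi_pos.le]
    exact Set.Icc_subset_Icc ha.le hb.le

lemma integral_Ff (n : ℕ) (hn : 1 ≤ n) :
    ∫ t in (0:ℝ)..π, Ff t ^ n = π * cc n := by
  have hpi := Real.pi_pos
  have hev : Set.Ioo (0:ℝ) (π/2) ∈ 𝓝[>] (0:ℝ) :=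
    Ioo_mem_nhdsGT_of_mem ⟨le_refl 0, by linarith⟩
  have hπδ : Tendsto (fun δ : ℝ => π - δ) (𝓝[>] (0:ℝ)) (𝓝[<] π) := by
    rw [tendsto_nhdsWithin_iff]
    constructor
    · have : Tendsto (fun δ : ℝ => π - δ) (𝓝 (0:ℝ)) (𝓝 (π - 0)) :=
        tendsto_const_nhds.sub tendsto_id
      rw [sub_zero] at this
      exact this.mono_left nhdsWithin_le_nhds
    · filter_upwards [self_mem_nhdsWithin] with δ hδ
      simp only [Set.mem_Iio]
      simp only [Set.mem_Ioi] at hδ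
      linarith
  have h1 : Tendsto (fun δ : ℝ => (hf n (zc (π - δ))).im) (𝓝[>] (0:ℝ)) (𝓝 (π * cc n)) :=
    (tendsto_A_pi n hn).comp hπδ
  have h2 : Tendsto (fun δ : ℝ => (hf n (zc δ)).im) (𝓝[>] (0:ℝ)) (𝓝 0) := tendsto_A_zero n hn
  have h3 : Tendsto (fun δ : ℝ => ∫ t in δ..(π - δ), Ff t ^ n) (𝓝[>] (0:ℝ))
      (𝓝 (π * cc n)) := by
    have hcomb := h1.sub h2
    rw [sub_zero] at hcomb
    apply hcomb.congr'
    filter_upwards [hev] with δ hδ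
    rw [ftc_piece n hn hδ.1 (by linarith [hδ.2]) (by linarith [hδ.1])]
  have hsmall1 : Tendsto (fun δ : ℝ => ∫ t in (0:ℝ)..δ, Ff t ^ n) (𝓝[>] (0:ℝ)) (𝓝 0) := by
    apply squeeze_zero_norm' (a := fun δ : ℝ => Real.exp 1 ^ n * |δ|)
    · filter_upwards [hev] with δ hδ
      have hb := intervalIntegral.norm_integral_le_of_norm_le_const
        (C := Real.exp 1 ^ n) (f := fun t : ℝ => Ff t ^ n) (a := 0) (b := δ) ?_
      · rw [sub_zero] at hb
        exact hb
      · intro x hx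
        rw [Set.uIoc_of_le hδ.1.le] at hx
        rw [Real.norm_eq_abs]
        exact Ff_pow_bound n hx.1 (by linarith [hx.2, hδ.2])
    · have hb : Tendsto (fun δ : ℝ => δ) (𝓝[>] (0:ℝ)) (𝓝 0) :=
        tendsto_id.mono_left nhdsWithin_le_nhds
      have := hb.abs.const_mul (Real.exp 1 ^ n)
      simpa using this
  have hsmall2 : Tendsto (fun δ : ℝ => ∫ t in (π - δ)..π, Ff t ^ n) (𝓝[>] (0:ℝ)) (𝓝 0) := by
    apply squeeze_zero_norm' (a := fun δ : ℝ => Real.exp 1 ^ n * |δ|)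
    · filter_upwards [hev] with δ hδ
      have hb := intervalIntegral.norm_integral_le_of_norm_le_const
        (C := Real.exp 1 ^ n) (f := fun t : ℝ => Ff t ^ n) (a := π - δ) (b := π) ?_
      · rw [show π - (π - δ) = δ by ring] at hb
        exact hb
      · intro x hx
        rw [Set.uIoc_of_le (by linarith [hδ.1] : π - δ ≤ π)] at hx
        rw [Real.norm_eq_abs]
        exact Ff_pow_bound n (by linarith [hx.1, hδ.2]) hx.2
    · have hb : Tendsto (fun δ : ℝ => δ) (𝓝[>] (0:ℝ)) (𝓝 0) :=
        tendsto_id.mono_left nhdsWithin_le_nhds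
      have := hb.abs.const_mul (Real.exp 1 ^ n)
      simpa using this
  have h4 : Tendsto (fun δ : ℝ => ∫ t in δ..(π - δ), Ff t ^ n) (𝓝[>] (0:ℝ))
      (𝓝 (∫ t in (0:ℝ)..π, Ff t ^ n)) := by
    have hcomb : Tendsto (fun δ : ℝ => (∫ t in (0:ℝ)..π, Ff t ^ n)
        - (∫ t in (0:ℝ)..δ, Ff t ^ n) - (∫ t in (π - δ)..π, Ff t ^ n)) (𝓝[>] (0:ℝ))
        (𝓝 ((∫ t in (0:ℝ)..π, Ff t ^ n) - 0 - 0)) :=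
      (tendsto_const_nhds.sub hsmall1).sub hsmall2
    rw [sub_zero, sub_zero] at hcomb
    apply hcomb.congr'
    filter_upwards [hev] with δ hδ
    have hint : ∀ c d : ℝ, 0 ≤ c → c ≤ d → d ≤ π →
        IntervalIntegrable (fun t : ℝ => Ff t ^ n) volume c d := by
      intro c d hc hcd hd
      apply (Ff_intable n).mono_set
      rw [Set.uIcc_of_le hcd, Set.uIcc_of_le Real.pi_pos.le]
      exact Set.Icc_subset_Icc hc hd
    have e1 : (∫ t in (0:ℝ)..δ, Ff t ^ n) + (∫ t in δ..(π - δ), Ff t ^ n)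
        = ∫ t in (0:ℝ)..(π - δ), Ff t ^ n :=
      intervalIntegral.integral_add_adjacent_intervals
        (hint 0 δ le_rfl hδ.1.le (by linarith [hδ.2]))
        (hint δ (π - δ) hδ.1.le (by linarith [hδ.2]) (by linarith [hδ.1]))
    have e2 : (∫ t in (0:ℝ)..(π - δ), Ff t ^ n) + (∫ t in (π - δ)..π, Ff t ^ n)
        = ∫ t in (0:ℝ)..π, Ff t ^ n :=
      intervalIntegral.integral_add_adjacent_intervals
        (hint 0 (π - δ) le_rfl (by linarith [hδ.2]) (by linarith [hδ.1]))
        (hint (π - δ) π (by linarith [hδ.2]) (by linarith [hδ.1]) le_rfl)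
    linarith [e1, e2]
  exact tendsto_nhds_unique h4 h3

end NB

end

theorem nuttall_bouwkamp_nat (ν : ℕ) :
    ∫ t in (0:ℝ)..π, ((Real.sin t / t) * Real.exp (t * Real.cot t)) ^ ν
      = π * (ν : ℝ) ^ ν / Real.Gamma (1 + ν) ∧
    Real.Gamma (1 + ν) = (ν.factorial : ℝ) := by
  have hGamma : Real.Gamma (1 + ν) = (ν.factorial : ℝ) := by
    rw [show (1:ℝ) + ν = (ν:ℝ) + 1 by ring]
    exact Real.Gamma_nat_eq_factorial ν
  refine ⟨?_, hGamma⟩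
  rw [hGamma]
  rcases Nat.eq_zero_or_pos ν with rfl | hν
  · simp [Real.pi_pos.le]
  · have hkey := NB.integral_Ff ν hν
    have heq : (∫ t in (0:ℝ)..π, ((Real.sin t / t) * Real.exp (t * Real.cot t)) ^ ν)
        = ∫ t in (0:ℝ)..π, NB.Ff t ^ ν := rfl
    rw [heq, hkey, NB.cc]
    have hfac : (ν.factorial : ℝ) = (ν : ℝ) * ((ν - 1).factorial : ℝ) := by
      rw [← Nat.cast_mul, Nat.mul_factorial_pred hν.ne']
    have hpow : (ν : ℝ) ^ ν = (ν : ℝ) ^ (ν - 1) * (ν : ℝ) := by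
      rw [← pow_succ]
      congr 1
      omega
    have hν0 : (ν : ℝ) ≠ 0 := Nat.cast_ne_zero.2 (by omega)
    have hf0 : (((ν - 1).factorial : ℕ) : ℝ) ≠ 0 := Nat.cast_ne_zero.2 (Nat.factorial_ne_zero _)
    rw [hfac, hpow]
    field_simp
end

section
/- For every real x with |x| < 1/e, the series ∑_{n=1}^∞ ((-n)^{n-1} / n!) x^n converges absolutely. -/
open Real

theorem lambertW_series_abs_convergent (x : ℝ) (hx : |x| < 1 / Real.exp 1) :
    Summable (fun n : ℕ => |(-(n + 1 : ℝ)) ^ n / (n + 1).factorial * x ^ (n + 1)|) := by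
  have he : (0:ℝ) < Real.exp 1 := Real.exp_pos 1
  have hlt : Real.exp 1 * |x| < 1 := by
    rw [lt_div_iff₀ he] at hx; linarith [hx]
  refine Summable.of_nonneg_of_le (fun n => abs_nonneg _)
    (fun n => ?_) ((summable_geometric_of_lt_one (by positivity) hlt).mul_left
      (Real.exp 1 * |x|))
  have h1 : |(-(n + 1 : ℝ)) ^ n / (n + 1).factorial * x ^ (n + 1)|
      = (n + 1 : ℝ) ^ n / (n + 1).factorial * |x| ^ (n + 1) := by
    rw [abs_mul, abs_div, abs_pow, abs_neg, abs_pow]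
    rw [abs_of_nonneg (by positivity : (0:ℝ) ≤ (n:ℝ)+1), Nat.abs_cast]
  rw [h1]
  have h2 : ((n + 1 : ℝ)) ^ n / (n + 1).factorial ≤ Real.exp 1 ^ (n + 1) := by
    calc ((n + 1 : ℝ)) ^ n / (n + 1).factorial
        ≤ ((n + 1 : ℝ)) ^ (n + 1) / (n + 1).factorial := by
          apply div_le_div_of_nonneg_right ?_ (by positivity)
          · exact pow_le_pow_right₀ (by norm_num : (1:ℝ) ≤ (n:ℝ)+1) (Nat.le_succ n)
      _ ≤ Real.exp ((n : ℝ) + 1) := by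
          have := Real.pow_div_factorial_le_exp (x := (n : ℝ) + 1) (by positivity) (n + 1)
          simpa using this
      _ = Real.exp 1 ^ (n + 1) := by
          rw [← Real.exp_nat_mul]; norm_num
  calc (n + 1 : ℝ) ^ n / (n + 1).factorial * |x| ^ (n + 1)
      ≤ Real.exp 1 ^ (n + 1) * |x| ^ (n + 1) := by
        apply mul_le_mul_of_nonneg_right h2 (by positivity)
    _ = Real.exp 1 * |x| * (Real.exp 1 * |x|) ^ n := by ring
end

section
/- For every real x with |x| < 1/e, the sum w = ∑_{n=1}^∞ ((-n)^{n-1} / n!) x^n satisfies w · exp(w) = x. -/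
open Real Finset

namespace LambertAux

noncomputable def u (k : ℕ) (x : ℝ) : ℝ := if k = 0 then 1 else x * (x + k) ^ (k - 1)
noncomputable def c (k : ℕ) : ℝ := if k = 0 then 0 else (k:ℝ)^(k-1)
noncomputable def du (k : ℕ) (y : ℝ) : ℝ :=
  if k = 0 then 0 else ((y+k)^(k-1) + y*((k:ℝ)-1)*(y+k)^(k-2))

lemma u_zero (x : ℝ) : u 0 x = 1 := rfl
lemma u_succ (k : ℕ) (x : ℝ) : u (k+1) x = x * (x + (k+1 : ℕ)) ^ k := by simp [u]

lemma choose_cast_mul (n k : ℕ) :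
    ((n+1).choose k : ℝ) * ((n+1-k : ℕ) : ℝ) = (n+1 : ℝ) * (n.choose k : ℝ) := by
  have h : (n+1).choose k * (n+1-k) = (n+1) * n.choose k := by
    have h1 := Nat.choose_succ_right_eq (n+1) k
    have h2 := Nat.add_one_mul_choose_eq n k
    rw [← h1] at *
    rw [h2]
  exact_mod_cast congrArg (Nat.cast : ℕ → ℝ) h

/-- Alternating finite differences of a polynomial of low degree vanish. -/
lemma sum_alt (m : ℕ) : ∀ j < m, ∀ x : ℝ,
    ∑ k ∈ range (m+1), (-1:ℝ)^(m-k) * (m.choose k) * (x+k)^j = 0 := by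
  induction m with
  | zero => intro j hj; omega
  | succ m IH =>
    intro j hj x
    have key : ∑ k ∈ range (m+2), (-1:ℝ)^(m+1-k) * ((m+1).choose k) * (x+k)^j
        = (∑ k ∈ range (m+1), (-1:ℝ)^(m-k) * (m.choose k) * ((x+1)+k)^j)
          - ∑ k ∈ range (m+1), (-1:ℝ)^(m-k) * (m.choose k) * (x+k)^j := by
      rw [Finset.sum_range_succ' (fun k => (-1:ℝ)^(m+1-k) * ((m+1).choose k) * (x+k)^j) (m+1)]
      have h1 : ∀ k ∈ range (m+1),
          (-1:ℝ)^(m+1-(k+1)) * ((m+1).choose (k+1)) * (x+((k:ℕ)+1:ℕ))^j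
          = (-1:ℝ)^(m-k) * (m.choose k) * ((x+1)+k)^j
            + (-1:ℝ)^(m-k) * (m.choose (k+1)) * (x+((k:ℝ)+1))^j := by
        intro k hk
        have h : m+1-(k+1) = m-k := by omega
        rw [h, Nat.choose_succ_succ m k, Nat.cast_add]
        push_cast
        ring
      rw [Finset.sum_congr rfl h1, Finset.sum_add_distrib]
      have h2 : ∑ k ∈ range (m+1), (-1:ℝ)^(m-k) * (m.choose (k+1)) * (x+((k:ℝ)+1))^j
          = -(∑ k ∈ range (m+1), (-1:ℝ)^(m-k) * (m.choose k) * (x+k)^j)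
            + (-1:ℝ)^m * x^j := by
        rw [Finset.sum_range_succ (fun k => (-1:ℝ)^(m-k) * (m.choose (k+1)) * (x+((k:ℝ)+1))^j)]
        rw [Finset.sum_range_succ' (fun k => (-1:ℝ)^(m-k) * (m.choose k) * (x+k)^j)]
        simp only [Nat.choose_succ_self, Nat.cast_zero, Nat.sub_self, pow_zero,
          Nat.choose_zero_right, Nat.cast_one, add_zero, mul_zero, zero_mul]
        have h3 : ∀ k ∈ range m,
            (-1:ℝ)^(m-k) * (m.choose (k+1)) * (x+((k:ℝ)+1))^j
            = -((-1:ℝ)^(m-(k+1)) * (m.choose (k+1)) * (x+((k:ℕ)+1:ℕ))^j) := by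
          intro k hk
          simp only [mem_range] at hk
          have h : m - k = (m - (k+1)) + 1 := by omega
          rw [h, pow_succ]
          push_cast
          ring
        rw [Finset.sum_congr rfl h3, Finset.sum_neg_distrib]
        simp only [Nat.sub_zero]
        push_cast
        ring
      rw [h2]
      simp only [Nat.choose_zero_right, Nat.cast_one]
      push_cast
      ring
    rw [key, ← Finset.sum_sub_distrib]
    have expand : ∀ t : ℝ, (t+1)^j - t^j = ∑ i ∈ range j, (j.choose i : ℝ) * t^i := by
      intro t
      rw [add_pow t 1 j, Finset.sum_range_succ]
      simp only [one_pow, mul_one, Nat.choose_self, Nat.cast_one, Nat.sub_self, pow_zero]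
      rw [add_sub_cancel_right]
      exact Finset.sum_congr rfl fun i _ => mul_comm _ _
    have h4 : ∀ k ∈ range (m+1),
        (-1:ℝ)^(m-k) * (m.choose k) * ((x+1)+k)^j - (-1:ℝ)^(m-k) * (m.choose k) * (x+k)^j
        = ∑ i ∈ range j, (j.choose i : ℝ) * ((-1:ℝ)^(m-k) * (m.choose k) * (x+k)^i) := by
      intro k hk
      have : (x+1+(k:ℝ))^j - (x+(k:ℝ))^j = ∑ i ∈ range j, (j.choose i : ℝ) * (x+k)^i := by
        rw [show x+1+(k:ℝ) = (x+(k:ℝ))+1 by ring]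
        exact expand _
      calc (-1:ℝ)^(m-k) * (m.choose k) * ((x+1)+k)^j - (-1:ℝ)^(m-k) * (m.choose k) * (x+k)^j
          = (-1:ℝ)^(m-k) * (m.choose k) * ((x+1+(k:ℝ))^j - (x+(k:ℝ))^j) := by ring
        _ = (-1:ℝ)^(m-k) * (m.choose k) * ∑ i ∈ range j, (j.choose i : ℝ) * (x+k)^i := by rw [this]
        _ = _ := by rw [Finset.mul_sum]; exact Finset.sum_congr rfl fun i _ => by ring
    rw [Finset.sum_congr rfl h4, Finset.sum_comm]
    have h5 : ∀ i ∈ range j,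
        ∑ k ∈ range (m+1), (j.choose i : ℝ) * ((-1:ℝ)^(m-k) * (m.choose k) * (x+k)^i)
        = 0 := by
      intro i hi
      rw [← Finset.mul_sum, IH i (by simp only [mem_range] at hi; omega) x, mul_zero]
    rw [Finset.sum_congr rfl h5, Finset.sum_const_zero]

/-- Abel's binomial identity. -/
lemma abel1 (n : ℕ) (x : ℝ) : ∀ y : ℝ,
    ∑ k ∈ range (n+1), (n.choose k : ℝ) * u k x * (y + ((n-k : ℕ) : ℝ)) ^ (n-k)
      = (x + y + n) ^ n := by
  induction n with
  | zero => intro y; simp [u_zero]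
  | succ n IH =>
    intro y
    set g : ℝ → ℝ := fun z => ∑ k ∈ range (n+2),
      ((n+1).choose k : ℝ) * u k x * (z + ((n+1-k : ℕ) : ℝ)) ^ (n+1-k) with hgdef
    have hg : ∀ z : ℝ, HasDerivAt g
        (∑ k ∈ range (n+2), ((n+1).choose k : ℝ) * u k x *
          (((n+1-k : ℕ) : ℝ) * (z + ((n+1-k : ℕ) : ℝ)) ^ (n+1-k-1))) z := by
      intro z
      apply HasDerivAt.fun_sum
      intro k hk
      have h1 : HasDerivAt (fun z : ℝ => (z + ((n+1-k : ℕ) : ℝ)) ^ (n+1-k))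
          (((n+1-k : ℕ):ℝ) * (z + ((n+1-k : ℕ) : ℝ)) ^ (n+1-k-1)) z := by
        have := ((hasDerivAt_id z).add_const ((n+1-k : ℕ) : ℝ)).fun_pow (n+1-k)
        simpa using this
      simpa [mul_assoc] using h1.const_mul (((n+1).choose k : ℝ) * u k x)
    have hderiv : ∀ z : ℝ, (∑ k ∈ range (n+2), ((n+1).choose k : ℝ) * u k x *
          (((n+1-k : ℕ) : ℝ) * (z + ((n+1-k : ℕ) : ℝ)) ^ (n+1-k-1)))
        = ((n:ℝ)+1) * (x + z + (n+1)) ^ n := by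
      intro z
      rw [Finset.sum_range_succ]
      simp only [Nat.sub_self, Nat.cast_zero, zero_mul, mul_zero, add_zero]
      have h2 : ∀ k ∈ range (n+1), ((n+1).choose k : ℝ) * u k x *
          (((n+1-k : ℕ) : ℝ) * (z + ((n+1-k : ℕ) : ℝ)) ^ (n+1-k-1))
          = ((n:ℝ)+1) * ((n.choose k : ℝ) * u k x * ((z+1) + ((n-k : ℕ) : ℝ)) ^ (n-k)) := by
        intro k hk
        simp only [mem_range] at hk
        have hk' : k ≤ n := by omega
        have e1 : n+1-k-1 = n-k := by omega
        have e2 : ((n+1-k : ℕ) : ℝ) = ((n-k : ℕ) : ℝ) + 1 := by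
          have : (n+1-k : ℕ) = (n-k) + 1 := by omega
          rw [this]; push_cast; ring
        have e3 : (z + (((n-k : ℕ) : ℝ) + 1)) = ((z+1) + ((n-k : ℕ) : ℝ)) := by ring
        rw [e1, e2, e3]
        have := choose_cast_mul n k
        rw [e2] at this
        calc ((n+1).choose k : ℝ) * u k x * ((((n-k:ℕ):ℝ)+1) * (z + 1 + ((n-k:ℕ):ℝ)) ^ (n-k))
            = (((n+1).choose k : ℝ) * (((n-k:ℕ):ℝ)+1)) * (u k x * (z + 1 + ((n-k:ℕ):ℝ)) ^ (n-k)) := by ring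
          _ = (((n:ℝ)+1) * (n.choose k : ℝ)) * (u k x * (z + 1 + ((n-k:ℕ):ℝ)) ^ (n-k)) := by rw [this]
          _ = _ := by ring
      rw [Finset.sum_congr rfl h2, ← Finset.mul_sum, IH (z+1)]
      have : x + (z+1) + (n:ℝ) = x + z + ((n:ℝ)+1) := by ring
      rw [this]
    -- the function φ has zero derivative
    have hφ : ∀ z : ℝ, HasDerivAt (fun z => g z - (x + z + ((n:ℝ)+1)) ^ (n+1)) 0 z := by
      intro z
      have h3 : HasDerivAt (fun z : ℝ => (x + z + ((n:ℝ)+1)) ^ (n+1))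
          (((n:ℝ)+1) * (x + z + ((n:ℝ)+1)) ^ n) z := by
        have h4 : HasDerivAt (fun z : ℝ => (z + (x + ((n:ℝ)+1))) ^ (n+1))
            (((n:ℝ)+1) * (z + (x + ((n:ℝ)+1))) ^ n) z := by
          have := ((hasDerivAt_id z).add_const (x + ((n:ℝ)+1))).fun_pow (n+1)
          simpa using this
        have e : (fun z : ℝ => (z + (x + ((n:ℝ)+1))) ^ (n+1))
            = (fun z : ℝ => (x + z + ((n:ℝ)+1)) ^ (n+1)) := by
          funext w; ring_nf
        rw [e] at h4
        convert h4 using 1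
        ring
      have := (hg z).fun_sub h3
      rw [hderiv z] at this
      simpa using this
    have hconst : ∀ z w : ℝ, g z - (x + z + ((n:ℝ)+1)) ^ (n+1)
        = g w - (x + w + ((n:ℝ)+1)) ^ (n+1) :=
      fun z w => is_const_of_deriv_eq_zero
        (fun t => (hφ t).differentiableAt) (fun t => (hφ t).deriv) z w
    -- evaluate at y₀
    set y₀ : ℝ := -(x + ((n:ℝ)+1)) with hy₀
    have hRHS0 : (x + y₀ + ((n:ℝ)+1)) ^ (n+1) = 0 := by
      rw [hy₀]; ring_nf
    have hg0 : g y₀ = 0 := by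
      show (∑ k ∈ range (n+2),
        ((n+1).choose k : ℝ) * u k x * (y₀ + ((n+1-k : ℕ) : ℝ)) ^ (n+1-k)) = 0
      have hterm : ∀ k ∈ range (n+2),
          ((n+1).choose k : ℝ) * u k x * (y₀ + ((n+1-k : ℕ) : ℝ)) ^ (n+1-k)
          = ((n+1).choose k : ℝ) * u k x * ((-1:ℝ)^(n+1-k) * (x + k) ^ (n+1-k)) := by
        intro k hk
        simp only [mem_range] at hk
        have e : y₀ + ((n+1-k : ℕ) : ℝ) = -(x + k) := by
          rw [hy₀]
          have : ((n+1-k : ℕ) : ℝ) = (n:ℝ) + 1 - k := by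
            have : (n+1-k) + k = n+1 := by omega
            have := congrArg (Nat.cast : ℕ → ℝ) this
            push_cast at this
            linarith
          rw [this]; ring
        rw [e, neg_pow]
      rw [Finset.sum_congr rfl hterm]
      rw [Finset.sum_range_succ' _ (n+1)]
      simp only [Nat.sub_zero, Nat.cast_zero, add_zero, Nat.choose_zero_right, Nat.cast_one,
        u_zero, mul_one, one_mul]
      have hterm2 : ∀ k ∈ range (n+1),
          ((n+1).choose (k+1) : ℝ) * u (k+1) x * ((-1:ℝ)^(n+1-(k+1)) * (x + (k+1:ℕ)) ^ (n+1-(k+1)))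
          = x * ((-1:ℝ)^(n-k) * ((n+1).choose (k+1) : ℝ) * (x + ((k+1:ℕ):ℝ)) ^ n) := by
        intro k hk
        simp only [mem_range] at hk
        have e1 : n+1-(k+1) = n-k := by omega
        rw [e1, u_succ]
        have e2 : (x + ((k+1:ℕ):ℝ)) ^ k * (x + ((k+1:ℕ):ℝ)) ^ (n-k) = (x + ((k+1:ℕ):ℝ)) ^ n := by
          rw [← pow_add]
          congr 1
          omega
        calc ((n+1).choose (k+1) : ℝ) * (x * (x + ((k+1:ℕ):ℝ)) ^ k) *
              ((-1:ℝ)^(n-k) * (x + ((k+1:ℕ):ℝ)) ^ (n-k))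
            = x * ((-1:ℝ)^(n-k) * ((n+1).choose (k+1) : ℝ) *
              ((x + ((k+1:ℕ):ℝ)) ^ k * (x + ((k+1:ℕ):ℝ)) ^ (n-k))) := by ring
          _ = _ := by rw [e2]
      rw [Finset.sum_congr rfl hterm2, ← Finset.mul_sum]
      -- use sum_alt
      have halt := sum_alt (n+1) n (by omega) x
      rw [Finset.sum_range_succ' _ (n+1)] at halt
      simp only [Nat.sub_zero, Nat.cast_zero, add_zero, Nat.choose_zero_right, Nat.cast_one,
        mul_one] at halt
      have e4 : ∀ k ∈ range (n+1),
          (-1:ℝ)^(n+1-(k+1)) * ((n+1).choose (k+1) : ℝ) * (x + ((k+1:ℕ):ℝ)) ^ n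
          = (-1:ℝ)^(n-k) * ((n+1).choose (k+1) : ℝ) * (x + ((k+1:ℕ):ℝ)) ^ n := by
        intro k hk
        have : n+1-(k+1) = n-k := by omega
        rw [this]
      rw [Finset.sum_congr rfl e4] at halt
      have e5 : ∑ k ∈ range (n+1), (-1:ℝ)^(n-k) * ((n+1).choose (k+1) : ℝ) * (x + ((k+1:ℕ):ℝ)) ^ n
          = -((-1:ℝ)^(n+1) * x ^ n) := by linarith
      rw [e5]
      have : (-1:ℝ)^(n+1) = -((-1:ℝ)^n) := by rw [pow_succ]; ring
      rw [this]
      ring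
    have := hconst y y₀
    rw [hg0, hRHS0] at this
    have : g y = (x + y + ((n:ℝ)+1)) ^ (n+1) := by linarith
    have e : ((n+1:ℕ):ℝ) = (n:ℝ)+1 := by push_cast; ring
    rw [e]
    exact this
  

lemma deriv_sum_eq (n : ℕ) (x z : ℝ) :
    (∑ k ∈ range (n+2), ((n+1).choose k : ℝ) * u k x *
      (((n+1-k : ℕ) : ℝ) * (z + ((n+1-k : ℕ) : ℝ)) ^ (n+1-k-1)))
    = ((n:ℝ)+1) * (x + z + ((n:ℝ)+1)) ^ n := by
  rw [Finset.sum_range_succ]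
  simp only [Nat.sub_self, Nat.cast_zero, zero_mul, mul_zero, add_zero]
  have h2 : ∀ k ∈ range (n+1), ((n+1).choose k : ℝ) * u k x *
      (((n+1-k : ℕ) : ℝ) * (z + ((n+1-k : ℕ) : ℝ)) ^ (n+1-k-1))
      = ((n:ℝ)+1) * ((n.choose k : ℝ) * u k x * ((z+1) + ((n-k : ℕ) : ℝ)) ^ (n-k)) := by
    intro k hk
    simp only [mem_range] at hk
    have e1 : n+1-k-1 = n-k := by omega
    have e2 : ((n+1-k : ℕ) : ℝ) = ((n-k : ℕ) : ℝ) + 1 := by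
      have : (n+1-k : ℕ) = (n-k) + 1 := by omega
      rw [this]; push_cast; ring
    have e3 : (z + (((n-k : ℕ) : ℝ) + 1)) = ((z+1) + ((n-k : ℕ) : ℝ)) := by ring
    rw [e1, e2, e3]
    have h := choose_cast_mul n k
    rw [e2] at h
    calc ((n+1).choose k : ℝ) * u k x * ((((n-k:ℕ):ℝ)+1) * (z + 1 + ((n-k:ℕ):ℝ)) ^ (n-k))
        = (((n+1).choose k : ℝ) * (((n-k:ℕ):ℝ)+1)) * (u k x * (z + 1 + ((n-k:ℕ):ℝ)) ^ (n-k)) := by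
          ring
      _ = (((n:ℝ)+1) * (n.choose k : ℝ)) * (u k x * (z + 1 + ((n-k:ℕ):ℝ)) ^ (n-k)) := by rw [h]
      _ = _ := by ring
  rw [Finset.sum_congr rfl h2, ← Finset.mul_sum, abel1 n x (z+1)]
  have : x + (z+1) + (n:ℝ) = x + z + ((n:ℝ)+1) := by ring
  rw [this]

lemma u_eq (m : ℕ) (y : ℝ) :
    u m y = (y + ((m:ℕ):ℝ)) ^ m - ((m:ℕ):ℝ) * (y + ((m:ℕ):ℝ)) ^ (m-1) := by
  cases m with
  | zero => simp [u_zero]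
  | succ j =>
    rw [u_succ]
    have : (y + ((j+1:ℕ):ℝ)) ^ (j+1) = (y + ((j+1:ℕ):ℝ)) ^ j * (y + ((j+1:ℕ):ℝ)) := pow_succ _ _
    rw [show (j+1) - 1 = j from rfl, this]
    push_cast
    ring

/-- Abel's convolution identity for Abel polynomials. -/
lemma abel2 (n : ℕ) (x y : ℝ) :
    ∑ k ∈ range (n+2), ((n+1).choose k : ℝ) * u k x * u (n+1-k) y
      = (x+y) * (x + y + ((n:ℝ)+1)) ^ n := by
  have h1 : ∀ k ∈ range (n+2), ((n+1).choose k : ℝ) * u k x * u (n+1-k) y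
      = ((n+1).choose k : ℝ) * u k x * (y + ((n+1-k : ℕ) : ℝ)) ^ (n+1-k)
        - ((n+1).choose k : ℝ) * u k x *
          (((n+1-k : ℕ) : ℝ) * (y + ((n+1-k : ℕ) : ℝ)) ^ (n+1-k-1)) := by
    intro k hk
    rw [u_eq (n+1-k) y]
    ring
  rw [Finset.sum_congr rfl h1, Finset.sum_sub_distrib]
  have ha := abel1 (n+1) x y
  have e : ((n+1:ℕ):ℝ) = (n:ℝ)+1 := by push_cast; ring
  rw [e] at ha
  rw [ha, deriv_sum_eq n x y]
  rw [pow_succ]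
  ring


lemma du_succ (j : ℕ) (y : ℝ) :
    du (j+1) y = (y+((j+1:ℕ):ℝ))^j + y*(j:ℝ)*(y+((j+1:ℕ):ℝ))^(j-1) := by
  simp only [du, if_neg (Nat.succ_ne_zero j)]
  rw [show (j+1) - 1 = j by omega, show (j+1) - 2 = j - 1 by omega]
  push_cast
  ring

lemma hasDerivAt_u (k : ℕ) (y : ℝ) : HasDerivAt (u k) (du k y) y := by
  cases k with
  | zero =>
    have : u 0 = fun _ : ℝ => (1:ℝ) := funext fun t => u_zero t
    rw [this, show du 0 y = 0 from rfl]
    exact hasDerivAt_const y (1:ℝ)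
  | succ j =>
    have hu : u (j+1) = fun t : ℝ => t * (t + ((j+1:ℕ):ℝ)) ^ j := funext fun t => u_succ j t
    rw [hu, du_succ]
    have h2 : HasDerivAt (fun t : ℝ => (t + ((j+1:ℕ):ℝ)) ^ j)
        ((j:ℝ) * (y + ((j+1:ℕ):ℝ)) ^ (j-1)) y := by
      have := ((hasDerivAt_id y).add_const ((j+1:ℕ):ℝ)).fun_pow j
      simpa using this
    have := (hasDerivAt_id y).fun_mul h2
    simpa [mul_comm, mul_assoc, add_comm] using this

lemma du_zero_eq (k : ℕ) : du k 0 = c k := by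
  cases k with
  | zero => rfl
  | succ j =>
    rw [du_succ, c, if_neg (Nat.succ_ne_zero j)]
    simp

/-- differentiate abel2 in y at 0 -/
lemma abel3 (n : ℕ) (x : ℝ) :
    ∑ k ∈ range (n+2), ((n+1).choose k : ℝ) * u k x * c (n+1-k) = du (n+1) x := by
  have hF : HasDerivAt (fun y => ∑ k ∈ range (n+2), ((n+1).choose k : ℝ) * u k x * u (n+1-k) y)
      (∑ k ∈ range (n+2), ((n+1).choose k : ℝ) * u k x * du (n+1-k) 0) 0 := by
    apply HasDerivAt.fun_sum
    intro k hk
    simpa [mul_assoc] using (hasDerivAt_u (n+1-k) 0).const_mul (((n+1).choose k : ℝ) * u k x)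
  have hG : HasDerivAt (fun y : ℝ => (x+y) * (x + y + ((n:ℝ)+1)) ^ n)
      ((x + ((n:ℝ)+1)) ^ n + x * ((n:ℝ) * (x + ((n:ℝ)+1)) ^ (n-1))) 0 := by
    have h1 : HasDerivAt (fun y : ℝ => x + y) 1 0 := by
      simpa using (hasDerivAt_id (0:ℝ)).const_add x
    have h2 : HasDerivAt (fun y : ℝ => (x + y + ((n:ℝ)+1)) ^ n)
        ((n:ℝ) * (x + ((n:ℝ)+1)) ^ (n-1)) 0 := by
      have h3 : HasDerivAt (fun y : ℝ => (y + (x + ((n:ℝ)+1))) ^ n)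
          ((n:ℝ) * ((0:ℝ) + (x + ((n:ℝ)+1))) ^ (n-1)) 0 := by
        have := ((hasDerivAt_id (0:ℝ)).add_const (x + ((n:ℝ)+1))).fun_pow n
        simpa using this
      have e : (fun y : ℝ => (y + (x + ((n:ℝ)+1))) ^ n)
          = (fun y : ℝ => (x + y + ((n:ℝ)+1)) ^ n) := by funext t; ring_nf
      rw [e] at h3
      simpa using h3
    have := h1.fun_mul h2
    simpa using this
  have heq : (fun y => ∑ k ∈ range (n+2), ((n+1).choose k : ℝ) * u k x * u (n+1-k) y)
      = (fun y : ℝ => (x+y) * (x + y + ((n:ℝ)+1)) ^ n) := funext fun y => abel2 n x y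
  rw [heq] at hF
  have huniq := hF.unique hG
  have : ∑ k ∈ range (n+2), ((n+1).choose k : ℝ) * u k x * du (n+1-k) 0
      = ∑ k ∈ range (n+2), ((n+1).choose k : ℝ) * u k x * c (n+1-k) :=
    Finset.sum_congr rfl fun k _ => by rw [du_zero_eq]
  rw [this] at huniq
  rw [huniq, du_succ]
  have e : ((n+1:ℕ):ℝ) = (n:ℝ)+1 := by push_cast; ring
  rw [e]
  ring

/-- differentiate abel3 in x at 0 -/
lemma abel4 (n : ℕ) :
    ∑ k ∈ range (n+3), ((n+2).choose k : ℝ) * c k * c (n+2-k)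
      = 2*((n:ℝ)+1)*((n:ℝ)+2)^n := by
  have hF : HasDerivAt (fun x => ∑ k ∈ range (n+3), ((n+2).choose k : ℝ) * u k x * c (n+2-k))
      (∑ k ∈ range (n+3), ((n+2).choose k : ℝ) * du k 0 * c (n+2-k)) 0 := by
    apply HasDerivAt.fun_sum
    intro k hk
    have h := (hasDerivAt_u k 0).const_mul (((n+2).choose k : ℝ))
    have h2 := h.mul_const (c (n+2-k))
    convert h2 using 1
  have hG : HasDerivAt (fun x : ℝ => du (n+2) x)
      (((n:ℝ)+1) * ((n:ℝ)+2) ^ n + ((n:ℝ)+1) * ((n:ℝ)+2) ^ n) 0 := by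
    have e : (fun x : ℝ => du (n+2) x)
        = fun x : ℝ => (x+((n+2:ℕ):ℝ))^(n+1) + x*((n:ℝ)+1)*(x+((n+2:ℕ):ℝ))^n := by
      funext t
      rw [show n+2 = (n+1)+1 from rfl, du_succ]
      push_cast
      ring_nf
    rw [e]
    have h1 : HasDerivAt (fun x : ℝ => (x+((n+2:ℕ):ℝ))^(n+1))
        (((n:ℝ)+1) * ((0:ℝ)+((n+2:ℕ):ℝ)) ^ n) 0 := by
      have := ((hasDerivAt_id (0:ℝ)).add_const ((n+2:ℕ):ℝ)).fun_pow (n+1)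
      simpa using this
    have h2 : HasDerivAt (fun x : ℝ => x*((n:ℝ)+1)*(x+((n+2:ℕ):ℝ))^n)
        (((n:ℝ)+1) * ((0:ℝ)+((n+2:ℕ):ℝ)) ^ n) 0 := by
      have ha : HasDerivAt (fun x : ℝ => x*((n:ℝ)+1)) ((n:ℝ)+1) 0 := by
        simpa using (hasDerivAt_id (0:ℝ)).mul_const ((n:ℝ)+1)
      have hb : HasDerivAt (fun x : ℝ => (x+((n+2:ℕ):ℝ))^n)
          ((n:ℝ) * ((0:ℝ)+((n+2:ℕ):ℝ)) ^ (n-1)) 0 := by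
        have := ((hasDerivAt_id (0:ℝ)).add_const ((n+2:ℕ):ℝ)).fun_pow n
        simpa using this
      have := ha.fun_mul hb
      simpa using this
    have := h1.add h2
    have e2 : ((0:ℝ)+((n+2:ℕ):ℝ)) = (n:ℝ)+2 := by push_cast; ring
    rw [e2] at this
    exact this
  have heq : (fun x => ∑ k ∈ range (n+3), ((n+2).choose k : ℝ) * u k x * c (n+2-k))
      = (fun x : ℝ => du (n+2) x) := funext fun x => by
    have := abel3 (n+1) x
    rw [show n+1+2 = n+3 from rfl] at this
    rw [show (n+1)+1 = n+2 from rfl] at this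
    exact this
  rw [heq] at hF
  have huniq := hF.unique hG
  have hdu : ∀ k ∈ range (n+3), ((n+2).choose k : ℝ) * du k 0 * c (n+2-k)
      = ((n+2).choose k : ℝ) * c k * c (n+2-k) :=
    fun k _ => by rw [du_zero_eq]
  rw [Finset.sum_congr rfl hdu] at huniq
  rw [huniq]
  ring


lemma c_zero : c 0 = 0 := rfl
lemma c_one : c 1 = 1 := by simp [c]

lemma key_id (n : ℕ) :
    ∑ k ∈ range (n+1), (n.choose k : ℝ) * k * c k * c (n-k) = ((n:ℝ)-1) * c n := by
  match n with
  | 0 => simp [c_zero]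
  | 1 =>
    rw [show (1:ℕ)+1 = 2 from rfl]
    rw [Finset.sum_range_succ, Finset.sum_range_one]
    simp [c_zero, c_one]
  | (m+2) =>
    set n := m+2 with hn
    have hrefl := Finset.sum_range_reflect
      (fun k => (n.choose k : ℝ) * k * c k * c (n-k)) (n+1)
    simp only [Nat.add_sub_cancel] at hrefl
    have hswap : ∀ k ∈ range (n+1),
        (n.choose (n-k) : ℝ) * ((n-k:ℕ):ℝ) * c (n-k) * c (n-(n-k))
        = (n.choose k : ℝ) * ((n-k:ℕ):ℝ) * c k * c (n-k) := by
      intro k hk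
      simp only [mem_range] at hk
      have hkn : k ≤ n := by omega
      rw [Nat.choose_symm hkn, Nat.sub_sub_self hkn]
      ring
    rw [Finset.sum_congr rfl hswap] at hrefl
    have hsum2 : ∑ k ∈ range (n+1), (n.choose k : ℝ) * k * c k * c (n-k)
          + ∑ k ∈ range (n+1), (n.choose k : ℝ) * ((n-k:ℕ):ℝ) * c k * c (n-k)
        = (n:ℝ) * ∑ k ∈ range (n+1), (n.choose k : ℝ) * c k * c (n-k) := by
      rw [← Finset.sum_add_distrib, Finset.mul_sum]
      apply Finset.sum_congr rfl
      intro k hk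
      simp only [mem_range] at hk
      have : ((n-k:ℕ):ℝ) = (n:ℝ) - (k:ℝ) := by
        have h := Nat.cast_sub (show k ≤ n by omega) (R := ℝ)
        exact h
      rw [this]
      ring
    have habel : ∑ k ∈ range (n+1), (n.choose k : ℝ) * c k * c (n-k)
        = 2*((m:ℝ)+1)*((m:ℝ)+2)^m := by
      have := abel4 m
      rw [show m+3 = n+1 by omega] at this
      exact this
    -- 2T = n * (2 (m+1) (m+2)^m)
    have hT : (2:ℝ) * ∑ k ∈ range (n+1), (n.choose k : ℝ) * k * c k * c (n-k)
        = (n:ℝ) * (2*((m:ℝ)+1)*((m:ℝ)+2)^m) := by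
      rw [← habel, ← hsum2]
      rw [← hrefl]
      ring
    have hcn : c n = ((n:ℝ))^(n-1) := by rw [c, if_neg (by omega)]
    have hncast : (n:ℝ) = (m:ℝ)+2 := by rw [hn]; push_cast; ring
    have hpow : ((n:ℝ)) * ((m:ℝ)+2)^m = ((n:ℝ))^(n-1) := by
      rw [hncast, show n-1 = m+1 by omega, pow_succ]
      ring
    have : (2:ℝ) * ∑ k ∈ range (n+1), (n.choose k : ℝ) * k * c k * c (n-k)
        = 2 * (((n:ℝ)-1) * c n) := by
      rw [hT, hcn, ← hpow, hncast]
      ring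
    linarith

noncomputable def a (k : ℕ) : ℝ := (-1)^(k+1) * c k / k.factorial

lemma star_id (n : ℕ) :
    ∑ k ∈ range (n+1), ((k:ℝ) * a k) * a (n-k) = (1 - (n:ℝ)) * a n := by
  have hfac : ((n.factorial : ℝ)) ≠ 0 := by
    exact_mod_cast Nat.factorial_ne_zero n
  apply mul_left_cancel₀ hfac
  rw [Finset.mul_sum]
  have hterm : ∀ k ∈ range (n+1),
      (n.factorial : ℝ) * (((k:ℝ) * a k) * a (n-k))
      = (-1:ℝ)^n * ((n.choose k : ℝ) * k * c k * c (n-k)) := by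
    intro k hk
    simp only [mem_range] at hk
    have hkn : k ≤ n := by omega
    have hchoose : (n.choose k : ℝ) = (n.factorial : ℝ) / (k.factorial * (n-k).factorial) :=
      Nat.cast_choose ℝ hkn
    have hsign : ((-1:ℝ))^(k+1) * (-1:ℝ)^(n-k+1) = (-1:ℝ)^n := by
      rw [← pow_add, show (k+1)+(n-k+1) = n+2 by omega, pow_add]
      norm_num
    have hk0 : ((k.factorial : ℝ)) ≠ 0 := by exact_mod_cast Nat.factorial_ne_zero k
    have hk1 : (((n-k).factorial : ℝ)) ≠ 0 := by exact_mod_cast Nat.factorial_ne_zero (n-k)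
    rw [a, a, hchoose]
    field_simp
    have hs2 : (-1:ℝ)^k * (-1:ℝ)^(n-k) = (-1:ℝ)^n := by
      rw [← pow_add, show k+(n-k) = n by omega]
    linear_combination ((k:ℝ) * c k * c (n-k)) * hs2
  rw [Finset.sum_congr rfl hterm, ← Finset.mul_sum, key_id n]
  rw [a]
  field_simp
  rw [show (-1:ℝ)^(n+1) = (-1:ℝ)^n * (-1) by rw [pow_succ]]
  ring

lemma a_zero : a 0 = 0 := by simp [a, c]
lemma a_one : a 1 = 1 := by simp [a, c]

lemma c_nonneg (k : ℕ) : 0 ≤ c k := by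
  unfold c; split
  · exact le_refl 0
  · positivity

lemma abs_a (k : ℕ) : |a k| = c k / k.factorial := by
  rw [a, abs_div, abs_mul, abs_pow, abs_neg, abs_one, one_pow, one_mul,
    abs_of_nonneg (c_nonneg k), Nat.abs_cast]

lemma abs_a_mul_le (k : ℕ) : |a k| * k ≤ Real.exp 1 ^ k := by
  cases k with
  | zero => simp [a_zero]
  | succ j =>
    rw [abs_a]
    have hc : c (j+1) * ((j:ℝ)+1) = ((j:ℝ)+1)^(j+1) := by
      rw [c, if_neg (Nat.succ_ne_zero j), show (j+1)-1 = j from rfl]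
      push_cast
      ring
    have h1 : c (j+1) / (j+1).factorial * (((j+1):ℕ):ℝ)
        = ((j:ℝ)+1)^(j+1) / (j+1).factorial := by
      rw [div_mul_eq_mul_div]
      push_cast
      rw [hc]
    rw [h1]
    calc ((j:ℝ)+1)^(j+1) / (j+1).factorial ≤ Real.exp ((j:ℝ)+1) :=
          Real.pow_div_factorial_le_exp (x := (j:ℝ)+1) (by positivity) (j+1)
      _ = Real.exp 1 ^ (j+1) := by
          rw [show ((j:ℝ)+1) = ((j+1:ℕ):ℝ) * 1 by push_cast; ring, Real.exp_nat_mul]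

lemma abs_a_le (k : ℕ) : |a k| ≤ Real.exp 1 ^ k := by
  cases k with
  | zero => simp [a_zero]
  | succ j =>
    have h := abs_a_mul_le (j+1)
    push_cast at h
    have hj : (1:ℝ) ≤ (j:ℝ)+1 := by
      have : (0:ℝ) ≤ (j:ℝ) := Nat.cast_nonneg j
      linarith
    calc |a (j+1)| ≤ |a (j+1)| * ((j:ℝ)+1) :=
          le_mul_of_one_le_right (abs_nonneg _) hj
      _ ≤ _ := h


noncomputable def W (t : ℝ) : ℝ := ∑' k : ℕ, a k * t ^ k
noncomputable def D (t : ℝ) : ℝ := ∑' k : ℕ, a k * ((k:ℝ) * t ^ (k-1))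

section radius
variable {r : ℝ} (hr0 : 0 < r) (hr1 : Real.exp 1 * r < 1)

lemma summable_geom (hr0 : 0 < r) (hr1 : Real.exp 1 * r < 1) :
    Summable (fun k : ℕ => (Real.exp 1 * r) ^ k) :=
  summable_geometric_of_lt_one (by positivity) hr1

lemma term_bound (hr0 : 0 < r) {t : ℝ} (ht : |t| ≤ r) (k : ℕ) :
    |a k * t ^ k| ≤ (Real.exp 1 * r) ^ k := by
  rw [abs_mul, abs_pow, mul_pow]
  have h1 : |a k| ≤ Real.exp 1 ^ k := abs_a_le k
  have h2 : |t| ^ k ≤ r ^ k := pow_le_pow_left₀ (abs_nonneg t) ht k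
  have h3 : (0:ℝ) ≤ |t| ^ k := by positivity
  nlinarith [pow_nonneg (abs_nonneg (a k)) k, pow_nonneg (le_of_lt hr0) k,
    pow_nonneg (Real.exp_pos 1).le k]

lemma summable_W (hr0 : 0 < r) (hr1 : Real.exp 1 * r < 1) {t : ℝ} (ht : |t| ≤ r) :
    Summable (fun k : ℕ => a k * t ^ k) :=
  Summable.of_norm_bounded (summable_geom hr0 hr1) (term_bound hr0 ht)

lemma mul_term_bound (hr0 : 0 < r) {t : ℝ} (ht : |t| ≤ r) (k : ℕ) :
    |(k:ℝ) * a k * t ^ k| ≤ (Real.exp 1 * r) ^ k := by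
  rw [abs_mul, abs_mul, abs_pow, mul_pow, Nat.abs_cast]
  have h1 : (k:ℝ) * |a k| ≤ Real.exp 1 ^ k := by
    rw [mul_comm]; exact abs_a_mul_le k
  have h2 : |t| ^ k ≤ r ^ k := pow_le_pow_left₀ (abs_nonneg t) ht k
  have h4 : (0:ℝ) ≤ (k:ℝ) * |a k| := by positivity
  nlinarith [pow_nonneg (le_of_lt hr0) k, pow_nonneg (Real.exp_pos 1).le k]

lemma summable_mulW (hr0 : 0 < r) (hr1 : Real.exp 1 * r < 1) {t : ℝ} (ht : |t| ≤ r) :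
    Summable (fun k : ℕ => (k:ℝ) * a k * t ^ k) :=
  Summable.of_norm_bounded (summable_geom hr0 hr1) (mul_term_bound hr0 ht)

lemma summable_W_zero : Summable (fun k : ℕ => a k * (0:ℝ) ^ k) := by
  have h : (fun k : ℕ => a k * (0:ℝ) ^ k) = fun _ => (0:ℝ) := by
    funext k
    cases k with
    | zero => simp [a_zero]
    | succ j => simp
  rw [h]
  exact summable_zero

lemma W_zero : W 0 = 0 := by
  unfold W
  have h : (fun k : ℕ => a k * (0:ℝ) ^ k) = fun _ => (0:ℝ) := by
    funext k
    cases k with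
    | zero => simp [a_zero]
    | succ j => simp
  rw [h, tsum_zero]

lemma deriv_bound (hr0 : 0 < r) {t : ℝ} (ht : |t| ≤ r) (k : ℕ) :
    ‖a k * ((k:ℝ) * t ^ (k-1))‖ ≤ Real.exp 1 * (Real.exp 1 * r) ^ (k-1) := by
  cases k with
  | zero =>
    simp only [Nat.cast_zero, zero_mul, mul_zero, norm_zero]
    positivity
  | succ j =>
    rw [Real.norm_eq_abs, show (j+1)-1 = j from rfl]
    have h : |a (j+1) * (((j+1:ℕ):ℝ) * t ^ j)| = (|a (j+1)| * ((j+1:ℕ):ℝ)) * |t| ^ j := by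
      rw [abs_mul, abs_mul, abs_pow, Nat.abs_cast]
      ring
    rw [h]
    have h1 : |a (j+1)| * ((j+1:ℕ):ℝ) ≤ Real.exp 1 ^ (j+1) := abs_a_mul_le (j+1)
    have h2 : |t| ^ j ≤ r ^ j := pow_le_pow_left₀ (abs_nonneg t) ht j
    have h3 : Real.exp 1 ^ (j+1) = Real.exp 1 * Real.exp 1 ^ j := by rw [pow_succ]; ring
    calc (|a (j+1)| * ((j+1:ℕ):ℝ)) * |t| ^ j ≤ Real.exp 1 ^ (j+1) * r ^ j := by
          have := mul_le_mul h1 h2 (by positivity) (by positivity)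
          exact this
      _ = Real.exp 1 * (Real.exp 1 * r) ^ j := by rw [h3, mul_pow]; ring

lemma summable_deriv_bound (hr0 : 0 < r) (hr1 : Real.exp 1 * r < 1) :
    Summable (fun k : ℕ => Real.exp 1 * (Real.exp 1 * r) ^ (k-1)) := by
  rw [← summable_nat_add_iff 1]
  simp only [Nat.add_sub_cancel]
  exact (summable_geom hr0 hr1).mul_left _

lemma hasDerivAt_W (hr0 : 0 < r) (hr1 : Real.exp 1 * r < 1) {t : ℝ} (ht : |t| < r) :
    HasDerivAt W (D t) t := by
  have := hasDerivAt_tsum_of_isPreconnected (summable_deriv_bound hr0 hr1)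
    (Metric.isOpen_ball (x := (0:ℝ)) (ε := r))
    ((convex_ball (0:ℝ) r).isPreconnected)
    (g := fun k t => a k * t ^ k)
    (g' := fun k t => a k * ((k:ℝ) * t ^ (k-1)))
    (fun k y _ => (hasDerivAt_pow k y).const_mul (a k))
    (fun k y hy => deriv_bound hr0 (le_of_lt (mem_ball_zero_iff.mp hy)) k)
    (Metric.mem_ball_self hr0)
    summable_W_zero
    (mem_ball_zero_iff.mpr (show ‖t‖ < r from ht))
  exact this


lemma D_zero : D 0 = 1 := by
  unfold D
  rw [tsum_eq_single 1]
  · simp [a_one]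
  · intro k hk
    match k, hk with
    | 0, _ => simp
    | (j+2), _ => simp [zero_pow]

lemma t_mul_D (hr0 : 0 < r) (hr1 : Real.exp 1 * r < 1) {t : ℝ} (ht : |t| < r) :
    t * D t = ∑' k : ℕ, (k:ℝ) * a k * t ^ k := by
  unfold D
  rw [← tsum_mul_left]
  apply tsum_congr
  intro k
  cases k with
  | zero => simp
  | succ j =>
    rw [show (j+1)-1 = j from rfl]
    rw [pow_succ]
    ring

lemma cauchy (hr0 : 0 < r) (hr1 : Real.exp 1 * r < 1) {t : ℝ} (ht : |t| < r) :
    (∑' k : ℕ, (k:ℝ) * a k * t ^ k) * W t = W t - t * D t := by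
  unfold W
  have hf : Summable fun k : ℕ => ‖(k:ℝ) * a k * t ^ k‖ := by
    apply Summable.of_nonneg_of_le (fun k => norm_nonneg _)
      (fun k => mul_term_bound hr0 ht.le k) (summable_geom hr0 hr1)
  have hg : Summable fun k : ℕ => ‖a k * t ^ k‖ := by
    apply Summable.of_nonneg_of_le (fun k => norm_nonneg _)
      (fun k => term_bound hr0 ht.le k) (summable_geom hr0 hr1)
  rw [tsum_mul_tsum_eq_tsum_sum_antidiagonal_of_summable_norm hf hg]
  have hinner : ∀ n : ℕ, (∑ kl ∈ Finset.HasAntidiagonal.antidiagonal n,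
      ((kl.1:ℝ) * a kl.1 * t ^ kl.1) * (a kl.2 * t ^ kl.2)) = (1 - (n:ℝ)) * a n * t ^ n := by
    intro n
    rw [Finset.Nat.sum_antidiagonal_eq_sum_range_succ_mk]
    have h : ∀ k ∈ range (n+1),
        ((k:ℝ) * a k * t ^ k) * (a (n-k) * t ^ (n-k))
        = (((k:ℝ) * a k) * a (n-k)) * t ^ n := by
      intro k hk
      simp only [mem_range] at hk
      rw [show t^n = t^k * t^(n-k) by rw [← pow_add]; congr 1; omega]
      ring
    rw [Finset.sum_congr rfl h, ← Finset.sum_mul, star_id n]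
  rw [tsum_congr hinner]
  have hsplit : ∀ n : ℕ, (1 - (n:ℝ)) * a n * t ^ n
      = a n * t ^ n - (n:ℝ) * a n * t ^ n := by intro n; ring
  rw [tsum_congr hsplit, Summable.tsum_sub (summable_W hr0 hr1 ht.le) (summable_mulW hr0 hr1 ht.le)]
  rw [t_mul_D hr0 hr1 ht]

lemma ode (hr0 : 0 < r) (hr1 : Real.exp 1 * r < 1) {t : ℝ} (ht : |t| < r) :
    t * D t * (1 + W t) = W t := by
  have h := cauchy hr0 hr1 ht
  rw [← t_mul_D hr0 hr1 ht] at h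
  nlinarith [h]

noncomputable def K (t : ℝ) : ℝ := W t * Real.exp (W t) - t

lemma hasDerivAt_K (hr0 : 0 < r) (hr1 : Real.exp 1 * r < 1) {t : ℝ} (ht : |t| < r) :
    HasDerivAt K (D t * (1 + W t) * Real.exp (W t) - 1) t := by
  have hW := hasDerivAt_W hr0 hr1 ht
  have h1 : HasDerivAt (fun t => W t * Real.exp (W t))
      (D t * Real.exp (W t) + W t * (Real.exp (W t) * D t)) t := hW.mul hW.exp
  have h2 := h1.sub (hasDerivAt_id t)
  have e : D t * Real.exp (W t) + W t * (Real.exp (W t) * D t) - 1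
      = D t * (1 + W t) * Real.exp (W t) - 1 := by ring
  rw [e] at h2
  exact h2

lemma K_deriv_zero (hr0 : 0 < r) (hr1 : Real.exp 1 * r < 1) :
    HasDerivAt K 0 0 := by
  have h := hasDerivAt_K hr0 hr1 (t := 0) (by rwa [abs_zero])
  rw [W_zero, D_zero] at h
  simpa using h

lemma K_zero : K 0 = 0 := by
  unfold K
  rw [W_zero]
  simp

/-- The main endgame lemma: on an interval with endpoint 0, K vanishes. -/
lemma K_eq_zero (hr0 : 0 < r) (hr1 : Real.exp 1 * r < 1) (p q x : ℝ)
    (hsub : Set.Ioo p q ⊆ Metric.ball (0:ℝ) r)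
    (h0 : (0:ℝ) ∉ Set.Ioo p q)
    (hcl : (0:ℝ) ∈ closure (Set.Ioo p q))
    (hx : x ∈ Set.Ioo p q) : K x = 0 := by
  set s := Set.Ioo p q with hs
  have hball : ∀ t ∈ s, |t| < r := fun t ht => by
    have := hsub ht
    rwa [mem_ball_zero_iff] at this
  have hne : ∀ t ∈ s, t ≠ 0 := fun t ht h => h0 (h ▸ ht)
  -- G = K t / t has zero derivative on s
  have hG : ∀ t ∈ s, HasDerivAt (fun t => K t / t) 0 t := by
    intro t ht
    have htr := hball t ht
    have ht0 := hne t ht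
    have hK := hasDerivAt_K hr0 hr1 htr
    have hdiv := hK.fun_div (hasDerivAt_id t) ht0
    simp only [id_eq] at hdiv
    have hnum : (D t * (1 + W t) * Real.exp (W t) - 1) * t - K t * 1 = 0 := by
      have hode := ode hr0 hr1 htr
      unfold K
      linear_combination Real.exp (W t) * hode
    rw [hnum] at hdiv
    simpa using hdiv
  -- constancy of G on s
  have hconst : ∀ z ∈ s, ∀ w ∈ s, K z / z = K w / w := by
    intro z hz w hw
    have hopen : IsOpen s := isOpen_Ioo
    apply Convex.is_const_of_fderivWithin_eq_zero (𝕜 := ℝ) (convex_Ioo p q)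
      (f := fun t => K t / t)
    · intro t ht
      exact ((hG t ht).differentiableAt).differentiableWithinAt
    · intro t ht
      rw [fderivWithin_of_isOpen hopen ht]
      have := ((hG t ht).hasFDerivAt).fderiv
      rw [this]
      ext y
      simp
    · exact hz
    · exact hw
  -- limit argument
  have hKd := K_deriv_zero hr0 hr1
  rw [hasDerivAt_iff_tendsto_slope] at hKd
  have hle : nhdsWithin (0:ℝ) s ≤ nhdsWithin (0:ℝ) {(0:ℝ)}ᶜ := by
    apply nhdsWithin_mono
    intro t ht
    exact hne t ht
  have htend : Filter.Tendsto (slope K 0) (nhdsWithin (0:ℝ) s) (nhds 0) :=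
    hKd.mono_left hle
  have hslope : ∀ t ∈ s, slope K 0 t = K x / x := by
    intro t ht
    rw [slope_def_field, K_zero, sub_zero, sub_zero]
    exact hconst t ht x hx
  have hNB : (nhdsWithin (0:ℝ) s).NeBot := mem_closure_iff_nhdsWithin_neBot.mp hcl
  have htend2 : Filter.Tendsto (fun _ : ℝ => K x / x) (nhdsWithin (0:ℝ) s) (nhds 0) := by
    apply htend.congr'
    apply Filter.eventually_of_mem self_mem_nhdsWithin
    intro t ht
    exact (hslope t ht)
  have : K x / x = 0 := (tendsto_nhds_unique htend2 tendsto_const_nhds).symm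
  have hx0 := hne x hx
  field_simp at this
  simpa using this

end radius


lemma a_succ (n : ℕ) : a (n+1) = (-((n:ℝ) + 1)) ^ n / (n+1).factorial := by
  rw [a, c, if_neg (Nat.succ_ne_zero n), show (n+1)-1 = n from rfl]
  have h1 : ((-1:ℝ))^(n+1+1) = (-1)^n := by rw [pow_succ, pow_succ]; ring
  have h2 : (-((n:ℝ)+1))^n = (-1)^n * ((n:ℝ)+1)^n := by rw [neg_pow]
  rw [h1, h2]
  push_cast
  ring

lemma sum_eq_W (t : ℝ) (h : Summable (fun k : ℕ => a k * t ^ k)) :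
    (∑' n : ℕ, (-(n + 1 : ℝ)) ^ n / (n + 1).factorial * t ^ (n + 1)) = W t := by
  unfold W
  rw [Summable.tsum_eq_zero_add h]
  rw [show a 0 * t ^ 0 = 0 by simp [a_zero]]
  rw [zero_add]
  apply tsum_congr
  intro n
  rw [a_succ]

end LambertAux

theorem lambertW_series_solves (x : ℝ) (hx : |x| < 1 / Real.exp 1) :
    (∑' n : ℕ, (-(n + 1 : ℝ)) ^ n / (n + 1).factorial * x ^ (n + 1)) *
      Real.exp (∑' n : ℕ, (-(n + 1 : ℝ)) ^ n / (n + 1).factorial * x ^ (n + 1)) = x := by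
  rcases eq_or_ne x 0 with rfl | hx0
  · have h : (∑' n : ℕ, (-(n + 1 : ℝ)) ^ n / (n + 1).factorial * (0:ℝ) ^ (n + 1)) = 0 := by
      have : ∀ n : ℕ, (-(n + 1 : ℝ)) ^ n / (n + 1).factorial * (0:ℝ) ^ (n + 1) = 0 := by
        intro n; simp [zero_pow]
      rw [tsum_congr this, tsum_zero]
    rw [h]
    simp
  · set E := Real.exp 1 with hE
    have hEpos : 0 < E := Real.exp_pos 1
    set r : ℝ := (|x| + 1/E)/2 with hr
    have hxr : |x| < r := by
      rw [hr]
      have := abs_nonneg x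
      linarith
    have hr0 : 0 < r := lt_of_le_of_lt (abs_nonneg x) hxr
    have hrE : r < 1/E := by
      rw [hr]; linarith
    have hr1 : E * r < 1 := by
      have h := (mul_lt_mul_iff_right₀ hEpos).mpr hrE
      rwa [mul_one_div, div_self (ne_of_gt hEpos)] at h
    have hsum : Summable (fun k : ℕ => LambertAux.a k * x ^ k) :=
      LambertAux.summable_W hr0 hr1 hxr.le
    rw [LambertAux.sum_eq_W x hsum]
    have hK : LambertAux.K x = 0 := by
      rcases lt_or_gt_of_ne hx0 with hneg | hpos
      · apply LambertAux.K_eq_zero hr0 hr1 (-r) 0 x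
        · intro t ht
          rw [mem_ball_zero_iff, Real.norm_eq_abs, abs_lt]
          exact ⟨ht.1, lt_trans ht.2 hr0⟩
        · simp
        · rw [closure_Ioo (by linarith : -r ≠ 0)]
          exact Set.mem_Icc.mpr ⟨by linarith, le_refl 0⟩
        · constructor
          · have : x ≤ |x| := le_abs_self x
            have h2 : -|x| ≤ x := neg_abs_le x
            linarith
          · exact hneg
      · apply LambertAux.K_eq_zero hr0 hr1 0 r x
        · intro t ht
          rw [mem_ball_zero_iff, Real.norm_eq_abs, abs_lt]
          exact ⟨lt_trans (by linarith) ht.1, ht.2⟩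
        · simp
        · rw [closure_Ioo (ne_of_lt hr0)]
          exact Set.mem_Icc.mpr ⟨le_refl 0, hr0.le⟩
        · exact ⟨hpos, lt_of_le_of_lt (le_abs_self x) hxr⟩
    unfold LambertAux.K at hK
    linarith
end

section
/- The Omega constant Ω, defined as the unique real number satisfying Ω e^Ω = 1, equals (1/π) ∫₀^π log(1 + (sin t / t) exp(t cot t)) dt. -/
open Real

open Filter MeasureTheory intervalIntegral

noncomputable section
namespace OmegaRep

noncomputable def F (w : ℂ) : ℂ := 1 - Complex.exp (-w) / w
noncomputable def Fd (w : ℂ) : ℂ := Complex.exp (-w) * (w + 1) / w ^ 2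
noncomputable def q (w : ℂ) : ℂ := Complex.log (F w)
noncomputable def qd (w : ℂ) : ℂ := Fd w / F w
noncomputable def x1 (y : ℝ) : ℝ := -(y * Real.cot y)
noncomputable def zc (t : ℝ) : ℂ := Complex.mk (x1 t) t
noncomputable def psi (t : ℝ) : ℝ := Real.log (1 + Real.sin t / t * Real.exp (t * Real.cot t))


-- ===== from frag1.lean
lemma hasDerivAt_F {w : ℂ} (hw : w ≠ 0) : HasDerivAt F (Fd w) w := by
  have h1 : HasDerivAt (fun w : ℂ => Complex.exp (-w)) (-Complex.exp (-w)) w := by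
    simpa [Function.comp_def] using (Complex.hasDerivAt_exp (-w)).comp w ((hasDerivAt_id w).neg)
  have h2 : HasDerivAt (fun w : ℂ => Complex.exp (-w) / w)
      ((-Complex.exp (-w) * w - Complex.exp (-w) * 1) / w ^ 2) w :=
    h1.div (hasDerivAt_id w) hw
  have h3 := (hasDerivAt_const w (1:ℂ)).sub h2
  refine h3.congr_deriv ?_
  simp only [Fd]; field_simp
  ring

lemma F_mem_slitPlane {w : ℂ} (h0 : 0 < w.im) (h1 : w.im < π) :
    F w ∈ Complex.slitPlane := by
  have hw : w ≠ 0 := fun h => by simp [h] at h0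
  rw [Complex.mem_slitPlane_iff]
  by_contra hc
  push_neg at hc
  obtain ⟨hre, him⟩ := hc
  -- F w is a nonpositive real; so e^{-w}/w = r real, r ≥ 1
  set r : ℝ := 1 - (F w).re with hr
  have hr1 : (1:ℝ) ≤ r := by simp [hr]; linarith
  have hFw : Complex.exp (-w) / w = (r : ℂ) := by
    apply Complex.ext
    · simp [hr, F, Complex.sub_re]
    · have : (F w).im = 0 := him
      simp [F, Complex.sub_im] at this
      simpa using this
  -- then w * exp w * r = 1
  have hkey : w * Complex.exp w * (r : ℂ) = 1 := by
    have : w * Complex.exp w * (Complex.exp (-w) / w) = 1 := by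
      field_simp
      rw [← Complex.exp_add]
      simp
    rw [hFw] at this; exact this
  -- write a = re, b = im
  set a := w.re; set b := w.im
  have hsin : 0 < Real.sin b := Real.sin_pos_of_pos_of_lt_pi h0 h1
  have hexp : (Complex.exp w).re = Real.exp a * Real.cos b := by
    simp [Complex.exp_re, a, b]
  have hexpi : (Complex.exp w).im = Real.exp a * Real.sin b := by
    simp [Complex.exp_im, a, b]
  have hmim : (w * Complex.exp w).im = Real.exp a * (a * Real.sin b + b * Real.cos b) := by
    simp [Complex.mul_im, hexp, hexpi]; ring
  have hmre : (w * Complex.exp w).re = Real.exp a * (a * Real.cos b - b * Real.sin b) := by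
    simp [Complex.mul_re, hexp, hexpi]; ring
  -- imaginary part of hkey is 0, real part is 1
  have him0 : (w * Complex.exp w).im * r = 0 := by
    have := congrArg Complex.im hkey
    simpa [Complex.mul_im] using this
  have hre1 : (w * Complex.exp w).re * r = 1 := by
    have := congrArg Complex.re hkey
    simpa [Complex.mul_re] using this
  have hrpos : (0:ℝ) < r := by linarith
  have him0' : a * Real.sin b + b * Real.cos b = 0 := by
    have h := him0
    rw [hmim] at h
    have := Real.exp_pos a
    rcases mul_eq_zero.mp h with h' | h'
    · rcases mul_eq_zero.mp h' with h'' | h''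
      · linarith
      · exact h''
    · linarith
  -- then re * sin b = -exp a * b < 0
  have hre_neg : (w * Complex.exp w).re < 0 := by
    have hcalc : (w * Complex.exp w).re * Real.sin b = -(Real.exp a * b) := by
      rw [hmre]
      have : a * Real.sin b = -(b * Real.cos b) := by linarith
      have hpyth := Real.sin_sq_add_cos_sq b
      linear_combination (Real.exp a * Real.cos b) * him0' - (Real.exp a * b) * hpyth
    by_contra hcon
    push_neg at hcon
    nlinarith [Real.exp_pos a, h0, hsin]
  nlinarith [mul_pos (neg_pos.mpr hre_neg) hrpos]

-- ===== from frag2.lean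
lemma im_ne_zero_ne {w : ℂ} (h0 : 0 < w.im) : w ≠ 0 := fun h => by simp [h] at h0

lemma hasDerivAt_q {w : ℂ} (h0 : 0 < w.im) (h1 : w.im < π) :
    HasDerivAt q (qd w) w := by
  have hs := F_mem_slitPlane h0 h1
  have hF := hasDerivAt_F (im_ne_zero_ne h0)
  have hlog := (Complex.hasDerivAt_log hs).comp w hF
  show HasDerivAt (fun w => Complex.log (F w)) _ w
  simpa [q, qd, div_eq_inv_mul, Function.comp_def] using hlog

lemma F_ne_zero {w : ℂ} (h0 : 0 < w.im) (h1 : w.im < π) : F w ≠ 0 :=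
  Complex.slitPlane_ne_zero (F_mem_slitPlane h0 h1)

lemma continuousOn_qd : ContinuousOn qd {w : ℂ | 0 < w.im ∧ w.im < π} := by
  have hne : ∀ w ∈ {w : ℂ | 0 < w.im ∧ w.im < π}, w ≠ 0 :=
    fun w hw => im_ne_zero_ne hw.1
  apply ContinuousOn.div
  · apply ContinuousOn.div
    · exact (Complex.continuous_exp.comp continuous_neg).continuousOn.mul
        (by fun_prop)
    · fun_prop
    · intro w hw
      exact pow_ne_zero 2 (hne w hw)
  · apply ContinuousOn.sub continuousOn_const
    apply ContinuousOn.div (Complex.continuous_exp.comp continuous_neg).continuousOn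
      continuousOn_id hne
  · intro w hw
    exact F_ne_zero hw.1 hw.2

lemma sin_pos' {t : ℝ} (h0 : 0 < t) (h1 : t < π) : 0 < Real.sin t :=
  Real.sin_pos_of_pos_of_lt_pi h0 h1

lemma exp_neg_zc {t : ℝ} (h0 : 0 < t) (h1 : t < π) :
    Complex.exp (-(zc t)) = (↑(-(Real.sin t / t * Real.exp (t * Real.cot t))) : ℂ) * zc t := by
  have hsin := sin_pos' h0 h1
  have hcot : Real.cot t = Real.cos t / Real.sin t := Real.cot_eq_cos_div_sin t
  apply Complex.ext
  · show (Complex.exp (-(zc t))).re = _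
    rw [Complex.exp_re]
    simp only [zc, x1, Complex.neg_re, Complex.neg_im, Complex.mul_re, Complex.ofReal_re,
      Complex.ofReal_im]
    rw [Real.cos_neg, hcot]
    field_simp
    ring
  · show (Complex.exp (-(zc t))).im = _
    rw [Complex.exp_im]
    simp only [zc, x1, Complex.neg_re, Complex.neg_im, Complex.mul_im, Complex.ofReal_re,
      Complex.ofReal_im]
    rw [Real.sin_neg, hcot]
    field_simp
    try ring
    try tauto

lemma F_zc {t : ℝ} (h0 : 0 < t) (h1 : t < π) :
    F (zc t) = ((1 + Real.sin t / t * Real.exp (t * Real.cot t) : ℝ) : ℂ) := by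
  have hz : zc t ≠ 0 := im_ne_zero_ne (by simpa [zc] using h0)
  have h := exp_neg_zc h0 h1
  have : Complex.exp (-(zc t)) / zc t = (↑(-(Real.sin t / t * Real.exp (t * Real.cot t))) : ℂ) := by
    rw [h, mul_div_assoc, div_self hz, mul_one]
  rw [F, this]
  push_cast
  ring

lemma psi_pos {t : ℝ} (h0 : 0 < t) (h1 : t < π) :
    0 < 1 + Real.sin t / t * Real.exp (t * Real.cot t) := by
  have := sin_pos' h0 h1
  positivity

lemma q_zc {t : ℝ} (h0 : 0 < t) (h1 : t < π) : q (zc t) = ((psi t : ℝ) : ℂ) := by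
  rw [q, F_zc h0 h1, ← Complex.ofReal_log (psi_pos h0 h1).le, psi]

-- ===== from frag3.lean
lemma hasDerivAt_x1 {t : ℝ} (h0 : 0 < t) (h1 : t < π) :
    HasDerivAt x1 ((t - Real.sin t * Real.cos t) / (Real.sin t)^2) t := by
  have hsin : Real.sin t ≠ 0 := (Real.sin_pos_of_pos_of_lt_pi h0 h1).ne'
  have h : HasDerivAt (fun y : ℝ => -(y * (Real.cos y / Real.sin y)))
      ((t - Real.sin t * Real.cos t) / (Real.sin t)^2) t := by
    have hd : HasDerivAt (fun y : ℝ => y * (Real.cos y / Real.sin y))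
        (1 * (Real.cos t / Real.sin t) + t * ((-Real.sin t * Real.sin t - Real.cos t * Real.cos t) / (Real.sin t)^2)) t := by
      exact (hasDerivAt_id t).mul ((Real.hasDerivAt_cos t).div (Real.hasDerivAt_sin t) hsin)
    have := hd.neg
    refine this.congr_deriv ?_
    have hpyth := Real.sin_sq_add_cos_sq t
    have hh : -Real.sin t * Real.sin t - Real.cos t * Real.cos t = -1 := by nlinarith [hpyth]
    rw [hh]
    field_simp
    ring
  apply h.congr_of_eventuallyEq
  filter_upwards [] with y
  simp [x1, Real.cot_eq_cos_div_sin]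

lemma x1_deriv_pos {t : ℝ} (h0 : 0 < t) (h1 : t < π) :
    0 < (t - Real.sin t * Real.cos t) / (Real.sin t)^2 := by
  have hsin : 0 < Real.sin t := Real.sin_pos_of_pos_of_lt_pi h0 h1
  have h2 : Real.sin (2*t) < 2*t := Real.sin_lt (by linarith)
  rw [Real.sin_two_mul] at h2
  have h3 : Real.sin t * Real.cos t < t := by linarith
  exact div_pos (by linarith) (pow_pos hsin 2)

lemma continuousOn_x1 : ContinuousOn x1 (Set.Ioo 0 π) := by
  intro t ht
  exact ((hasDerivAt_x1 ht.1 ht.2).continuousAt).continuousWithinAt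

lemma x1_strictMonoOn : StrictMonoOn x1 (Set.Ioo 0 π) := by
  apply StrictMonoOn.mono (s := Set.Ioo 0 π) ?_ le_rfl
  apply strictMonoOn_of_hasDerivWithinAt_pos (convex_Ioo 0 π) (continuousOn_x1)
  · intro t ht
    rw [interior_Ioo] at ht
    exact ((hasDerivAt_x1 ht.1 ht.2).hasDerivWithinAt)
  · intro t ht
    rw [interior_Ioo] at ht
    exact x1_deriv_pos ht.1 ht.2

lemma t_cot_lt_one {t : ℝ} (h0 : 0 < t) (h1 : t < π) : t * Real.cot t < 1 := by
  rcases le_or_gt t (π/2) with h | h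
  · rcases lt_or_ge t (π/2) with h' | h'
    · have htan : t < Real.tan t := Real.lt_tan h0 h'
      have hcos : 0 < Real.cos t := Real.cos_pos_of_mem_Ioo ⟨by linarith [Real.pi_pos], h'⟩
      have hsin : 0 < Real.sin t := Real.sin_pos_of_pos_of_lt_pi h0 h1
      rw [Real.tan_eq_sin_div_cos, lt_div_iff₀ hcos] at htan
      rw [Real.cot_eq_cos_div_sin, ← mul_div_assoc, div_lt_one hsin]
      linarith
    · have ht : t = π / 2 := le_antisymm h h'
      rw [ht, Real.cot_eq_cos_div_sin, Real.cos_pi_div_two]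
      norm_num
  · have hcot : Real.cot t < 0 := by
      rw [Real.cot_eq_cos_div_sin]
      apply div_neg_of_neg_of_pos
      · exact Real.cos_neg_of_pi_div_two_lt_of_lt h (by linarith [Real.pi_pos])
      · exact Real.sin_pos_of_pos_of_lt_pi h0 h1
    nlinarith

lemma x1_gt_neg_one {t : ℝ} (h0 : 0 < t) (h1 : t < π) : -1 < x1 t := by
  have := t_cot_lt_one h0 h1
  simp only [x1]
  linarith

lemma psi_le {t : ℝ} (h0 : 0 < t) (h1 : t < π) :
    Real.sin t / t * Real.exp (t * Real.cot t) ≤ Real.exp 1 := by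
  have hsin : 0 < Real.sin t := Real.sin_pos_of_pos_of_lt_pi h0 h1
  have h1' : Real.sin t / t ≤ 1 := by
    rw [div_le_one h0]
    exact le_of_lt (Real.sin_lt h0)
  have h2 : Real.exp (t * Real.cot t) ≤ Real.exp 1 :=
    Real.exp_le_exp.mpr (t_cot_lt_one h0 h1).le
  have := Real.exp_pos (t * Real.cot t)
  nlinarith [div_pos hsin h0]

lemma psi_nonneg {t : ℝ} (h0 : 0 < t) (h1 : t < π) : 0 ≤ psi t := by
  have hsin : 0 < Real.sin t := Real.sin_pos_of_pos_of_lt_pi h0 h1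
  apply Real.log_nonneg
  nlinarith [div_pos hsin h0, Real.exp_pos (t * Real.cot t)]

lemma psi_bound {t : ℝ} (h0 : 0 < t) (h1 : t < π) : psi t ≤ Real.log (1 + Real.exp 1) := by
  have hsin : 0 < Real.sin t := Real.sin_pos_of_pos_of_lt_pi h0 h1
  apply Real.log_le_log (by nlinarith [div_pos hsin h0, Real.exp_pos (t * Real.cot t)])
  linarith [psi_le h0 h1]

lemma measurable_psi : Measurable psi := by
  apply Measurable.log
  apply Measurable.add measurable_const
  apply Measurable.mul
  · exact Real.measurable_sin.div measurable_id
  · apply Real.measurable_exp.comp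
    apply measurable_id.mul
    have : Real.cot = fun y => Real.cos y / Real.sin y := by
      funext y; exact Real.cot_eq_cos_div_sin y
    rw [this]
    exact Real.measurable_cos.div Real.measurable_sin

-- ===== from frag4.lean
lemma cmk_eq (x y : ℝ) : Complex.mk x y = (x : ℂ) + (y : ℂ) * Complex.I :=
  Complex.mk_eq_add_mul_I x y

lemma continuous_mkx (x : ℝ) : Continuous fun δ : ℝ => Complex.mk x δ := by
  simp only [cmk_eq]; continuity

lemma exp_neg_ofReal (x : ℝ) : Complex.exp (-(x:ℂ)) = ((Real.exp (-x) : ℝ) : ℂ) := by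
  rw [← Complex.ofReal_neg, Complex.ofReal_exp]

/-- Over the reals, `F` is the real function `1 - e^{-x}/x`. -/
lemma F_ofReal (x : ℝ) (hx : x ≠ 0) :
    F (x : ℂ) = ((1 - Real.exp (-x) / x : ℝ) : ℂ) := by
  simp only [F, exp_neg_ofReal]
  push_cast
  ring

lemma Omega_pos {Ω : ℝ} (hΩ : Ω * Real.exp Ω = 1) : 0 < Ω := by
  rcases le_or_gt Ω 0 with h | h
  · nlinarith [Real.exp_pos Ω]
  · exact h

lemma Omega_lt_one {Ω : ℝ} (hΩ : Ω * Real.exp Ω = 1) : Ω < 1 := by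
  by_contra h
  push_neg at h
  nlinarith [Real.exp_one_gt_d9, Real.exp_le_exp.mpr h, Real.exp_pos 1]

lemma Freal_pos_of_neg {x : ℝ} (hx : x < 0) : 0 < 1 - Real.exp (-x) / x := by
  have h1 := Real.exp_pos (-x)
  have h2 : Real.exp (-x) / x < 0 := div_neg_of_pos_of_neg h1 hx
  linarith

lemma Freal_neg_of_mem {Ω x : ℝ} (hΩ : Ω * Real.exp Ω = 1) (h0 : 0 < x) (h1 : x < Ω) :
    1 - Real.exp (-x) / x < 0 := by
  have hxe : x * Real.exp x < 1 := by
    calc x * Real.exp x < Ω * Real.exp Ω := by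
          have := Real.exp_lt_exp.mpr h1
          nlinarith [Real.exp_pos x]
      _ = 1 := hΩ
  have hid : (Real.exp x)⁻¹ * Real.exp x = 1 := inv_mul_cancel₀ (Real.exp_pos x).ne'
  rw [sub_neg, lt_div_iff₀ h0, Real.exp_neg]
  nlinarith [Real.exp_pos x]

lemma Freal_pos_of_gt {Ω x : ℝ} (hΩ : Ω * Real.exp Ω = 1) (h1 : Ω < x) :
    0 < 1 - Real.exp (-x) / x := by
  have h0 : 0 < x := (Omega_pos hΩ).trans h1
  have hxe : 1 < x * Real.exp x := by
    calc 1 = Ω * Real.exp Ω := hΩ.symm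
      _ < x * Real.exp x := by
          have := Real.exp_lt_exp.mpr h1
          nlinarith [Real.exp_pos Ω, Omega_pos hΩ]
  have hid : (Real.exp x)⁻¹ * Real.exp x = 1 := inv_mul_cancel₀ (Real.exp_pos x).ne'
  rw [sub_pos, div_lt_iff₀ h0, Real.exp_neg]
  nlinarith [Real.exp_pos x]

lemma tendsto_F_vert (x : ℝ) (hx : x ≠ 0) :
    Tendsto (fun δ : ℝ => F (Complex.mk x δ)) (nhdsWithin 0 (Set.Ioi 0))
      (nhds (F (x : ℂ))) := by
  have hc : ContinuousAt F (x : ℂ) := ((hasDerivAt_F (by simpa using hx)).continuousAt)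
  have hm : Tendsto (fun δ : ℝ => Complex.mk x δ) (nhdsWithin (0:ℝ) (Set.Ioi 0))
      (nhds (Complex.mk x 0)) :=
    ((continuous_mkx x).tendsto 0).mono_left nhdsWithin_le_nhds
  have h0 : Complex.mk x 0 = (x : ℂ) := by apply Complex.ext <;> simp
  rw [h0] at hm
  exact hc.tendsto.comp hm

lemma tendsto_arg_zero {x : ℝ} (hx : x ≠ 0) (hpos : 0 < 1 - Real.exp (-x) / x) :
    Tendsto (fun δ : ℝ => (q (Complex.mk x δ)).im) (nhdsWithin 0 (Set.Ioi 0)) (nhds 0) := by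
  have hF := tendsto_F_vert x hx
  rw [F_ofReal x hx] at hF
  have hs : ((1 - Real.exp (-x) / x : ℝ) : ℂ) ∈ Complex.slitPlane := by
    rw [Complex.mem_slitPlane_iff]; left
    simpa only [Complex.ofReal_re] using hpos
  have h1 := (Complex.continuousAt_arg hs).tendsto.comp hF
  have h2 : Complex.arg ((1 - Real.exp (-x) / x : ℝ) : ℂ) = 0 :=
    Complex.arg_ofReal_of_nonneg hpos.le
  rw [h2] at h1
  simpa only [q, Complex.log_im, Function.comp_def] using h1

lemma eventually_pos_of_deriv_pos {h₀ : ℝ → ℝ} {d : ℝ} (hd : HasDerivAt h₀ d 0)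
    (h00 : h₀ 0 = 0) (hdp : 0 < d) : ∀ᶠ δ in nhdsWithin 0 (Set.Ioi 0), 0 < h₀ δ := by
  have hs := hasDerivAt_iff_tendsto_slope.mp hd
  have hmono : nhdsWithin (0:ℝ) (Set.Ioi 0) ≤ nhdsWithin 0 {0}ᶜ :=
    nhdsWithin_mono 0 (fun y hy => ne_of_gt hy)
  have hs' := hs.mono_left hmono
  have hev : ∀ᶠ δ in nhdsWithin (0:ℝ) (Set.Ioi 0), 0 < slope h₀ 0 δ :=
    hs' (Ioi_mem_nhds hdp)
  filter_upwards [hev, self_mem_nhdsWithin] with δ hδ hδ'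
  have hδ0 : (0:ℝ) < δ := hδ'
  have hsl : slope h₀ 0 δ = h₀ δ / δ := by
    simp [slope_def_field, h00]
  rw [hsl] at hδ
  have := mul_pos hδ hδ0
  rwa [div_mul_cancel₀ _ hδ0.ne'] at this

lemma tendsto_arg_pi {Ω x : ℝ} (hΩ : Ω * Real.exp Ω = 1) (h0 : 0 < x) (h1 : x < Ω) :
    Tendsto (fun δ : ℝ => (q (Complex.mk x δ)).im) (nhdsWithin 0 (Set.Ioi 0)) (nhds π) := by
  have hx : x ≠ 0 := h0.ne'
  have hneg := Freal_neg_of_mem hΩ h0 h1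
  have hF := tendsto_F_vert x hx
  have hFneg : Tendsto (fun δ : ℝ => -F (Complex.mk x δ)) (nhdsWithin 0 (Set.Ioi 0))
      (nhds ((-(1 - Real.exp (-x) / x) : ℝ) : ℂ)) := by
    have h := hF.neg
    rw [F_ofReal x hx] at h
    have : ((-(1 - Real.exp (-x) / x) : ℝ) : ℂ) = -(((1 - Real.exp (-x) / x : ℝ)) : ℂ) := by
      push_cast; ring
    rw [this]
    exact h
  have hs : ((-(1 - Real.exp (-x) / x) : ℝ) : ℂ) ∈ Complex.slitPlane := by
    rw [Complex.mem_slitPlane_iff]; left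
    simp only [Complex.ofReal_re]
    linarith
  have harg0 : Tendsto (fun δ : ℝ => Complex.arg (-F (Complex.mk x δ)))
      (nhdsWithin 0 (Set.Ioi 0)) (nhds 0) := by
    have h := (Complex.continuousAt_arg hs).tendsto.comp hFneg
    have h2 : Complex.arg ((-(1 - Real.exp (-x) / x) : ℝ) : ℂ) = 0 :=
      Complex.arg_ofReal_of_nonneg (by linarith)
    rw [h2] at h
    exact h
  -- eventually Im F > 0
  have hl : HasDerivAt (fun δ : ℝ => (x : ℂ) + (δ : ℂ) * Complex.I) Complex.I 0 := by
    simpa using ((Complex.ofRealCLM.hasDerivAt (x := (0:ℝ))).mul_const Complex.I).const_add (x : ℂ)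
  have hline : HasDerivAt (fun δ : ℝ => F (Complex.mk x δ)) (Fd (x : ℂ) * Complex.I) 0 := by
    have hF' : HasDerivAt F (Fd ((x:ℂ) + ((0:ℝ):ℂ) * Complex.I)) ((x:ℂ) + ((0:ℝ):ℂ) * Complex.I) :=
      hasDerivAt_F (by simp [Complex.ext_iff, hx])
    have hcomp := hF'.scomp (0:ℝ) hl
    simp only [cmk_eq]
    have hx0 : ((x:ℂ) + ((0:ℝ):ℂ) * Complex.I) = (x:ℂ) := by push_cast; ring
    rw [hx0] at hcomp
    simpa [smul_eq_mul, mul_comm, Function.comp_def] using hcomp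
  have him : HasDerivAt (fun δ : ℝ => (F (Complex.mk x δ)).im) ((Fd (x : ℂ) * Complex.I).im) 0 := by
    simpa [Function.comp_def] using (Complex.imCLM.hasFDerivAt.comp 0 hline.hasFDerivAt).hasDerivAt
  have hdpos : 0 < (Fd (x : ℂ) * Complex.I).im := by
    have hFd : Fd (x : ℂ) = ((Real.exp (-x) * (x + 1) / x ^ 2 : ℝ) : ℂ) := by
      simp only [Fd, exp_neg_ofReal]
      push_cast
      ring
    rw [hFd]
    simp only [Complex.mul_im, Complex.I_re, Complex.I_im, Complex.ofReal_re,
      Complex.ofReal_im, mul_zero, zero_mul, mul_one, zero_add, add_zero]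
    exact div_pos (mul_pos (Real.exp_pos _) (by linarith)) (by positivity)
  have hval : (F (Complex.mk x 0)).im = 0 := by
    have h0' : Complex.mk x 0 = (x : ℂ) := by apply Complex.ext <;> simp
    rw [h0', F_ofReal x hx]; exact Complex.ofReal_im _
  have hev : ∀ᶠ δ in nhdsWithin (0:ℝ) (Set.Ioi 0), 0 < (F (Complex.mk x δ)).im := by
    apply eventually_pos_of_deriv_pos him _ hdpos
    exact hval
  have heq : ∀ᶠ δ in nhdsWithin (0:ℝ) (Set.Ioi 0),
      (q (Complex.mk x δ)).im = Complex.arg (-F (Complex.mk x δ)) + π := by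
    filter_upwards [hev] with δ hδ
    have h := Complex.arg_neg_eq_arg_sub_pi_of_im_pos hδ
    simp only [q, Complex.log_im]
    linarith
  rw [tendsto_congr' heq]
  simpa using harg0.add_const π

-- ===== from frag5.lean

lemma continuousAt_qd {w : ℂ} (h0 : 0 < w.im) (h1 : w.im < π) : ContinuousAt qd w := by
  have hw : w ≠ 0 := im_ne_zero_ne h0
  apply ContinuousAt.div
  · exact ContinuousAt.div
      ((Complex.continuous_exp.comp continuous_neg).continuousAt.mul (by fun_prop))
      (by fun_prop) (pow_ne_zero 2 hw)
  · exact ContinuousAt.sub continuousAt_const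
      (ContinuousAt.div (Complex.continuous_exp.comp continuous_neg).continuousAt
        continuousAt_id hw)
  · exact F_ne_zero h0 h1

lemma continuous_mk2 : Continuous fun p : ℝ × ℝ => Complex.mk p.1 p.2 := by
  simp only [cmk_eq]; continuity

lemma continuous_mkh (y : ℝ) : Continuous fun x : ℝ => Complex.mk x y := by
  simp only [cmk_eq]; continuity

lemma continuous_mkv (x : ℝ) : Continuous fun y : ℝ => Complex.mk x y := by
  simp only [cmk_eq]; continuity

lemma hasDerivAt_re' {f : ℝ → ℂ} {f' : ℂ} {t : ℝ} (h : HasDerivAt f f' t) :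
    HasDerivAt (fun y => (f y).re) f'.re t := by
  simpa [Function.comp_def] using (Complex.reCLM.hasFDerivAt.comp t h.hasFDerivAt).hasDerivAt

lemma hasDerivAt_im' {f : ℝ → ℂ} {f' : ℂ} {t : ℝ} (h : HasDerivAt f f' t) :
    HasDerivAt (fun y => (f y).im) f'.im t := by
  simpa [Function.comp_def] using (Complex.imCLM.hasFDerivAt.comp t h.hasFDerivAt).hasDerivAt

lemma hasDerivAt_q_horiz {y : ℝ} (h0 : 0 < y) (h1 : y < π) (x : ℝ) :
    HasDerivAt (fun x' : ℝ => q (Complex.mk x' y)) (qd (Complex.mk x y)) x := by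
  have hl : HasDerivAt (fun x' : ℝ => ((x' : ℂ) + (y : ℂ) * Complex.I)) 1 x := by
    simpa using (Complex.ofRealCLM.hasDerivAt (x := x)).add_const ((y : ℂ) * Complex.I)
  have hq : HasDerivAt q (qd ((x : ℂ) + (y : ℂ) * Complex.I)) ((x : ℂ) + (y : ℂ) * Complex.I) := by
    have := hasDerivAt_q (w := Complex.mk x y) (by simpa using h0) (by simpa using h1)
    simpa [cmk_eq] using this
  have := hq.scomp x hl
  simp only [cmk_eq]
  simpa [Function.comp_def] using this

lemma hasDerivAt_q_vert (x : ℝ) {y : ℝ} (h0 : 0 < y) (h1 : y < π) :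
    HasDerivAt (fun y' : ℝ => q (Complex.mk x y')) (qd (Complex.mk x y) * Complex.I) y := by
  have hl : HasDerivAt (fun y' : ℝ => ((x : ℂ) + (y' : ℂ) * Complex.I)) Complex.I y := by
    simpa using ((Complex.ofRealCLM.hasDerivAt (x := y)).mul_const Complex.I).const_add (x : ℂ)
  have hq : HasDerivAt q (qd ((x : ℂ) + (y : ℂ) * Complex.I)) ((x : ℂ) + (y : ℂ) * Complex.I) := by
    have := hasDerivAt_q (w := Complex.mk x y) (by simpa using h0) (by simpa using h1)
    simpa [cmk_eq] using this
  have := hq.scomp y hl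
  simp only [cmk_eq]
  simpa [smul_eq_mul, mul_comm, Function.comp_def] using this

/-- the Fubini integrand -/
noncomputable def g (x y : ℝ) : ℝ := (qd (Complex.mk x y)).re

lemma continuous_g_x {y : ℝ} (h0 : 0 < y) (h1 : y < π) :
    Continuous fun x : ℝ => g x y := by
  apply Complex.continuous_re.comp
  rw [continuous_iff_continuousAt]
  intro x
  exact (continuousAt_qd (by simpa using h0) (by simpa using h1)).comp
    (continuous_mkh y).continuousAt

lemma continuousAt_g_y (x : ℝ) {y : ℝ} (h0 : 0 < y) (h1 : y < π) :
    ContinuousAt (fun y' : ℝ => g x y') y := by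
  apply Complex.continuous_re.continuousAt.comp
  exact (continuousAt_qd (by simpa using h0) (by simpa using h1)).comp
    (continuous_mkv x).continuousAt

/-- FTC in the horizontal direction -/
lemma ftc_x {y : ℝ} (h0 : 0 < y) (h1 : y < π) (a b : ℝ) :
    ∫ x in a..b, g x y = (q (Complex.mk b y)).re - (q (Complex.mk a y)).re := by
  apply intervalIntegral.integral_eq_sub_of_hasDerivAt
  · intro x _
    exact hasDerivAt_re' (hasDerivAt_q_horiz h0 h1 x)
  · exact (continuous_g_x h0 h1).intervalIntegrable _ _

/-- FTC in the vertical direction -/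
lemma ftc_y (x : ℝ) {a b : ℝ} (h0 : 0 < a) (hab : a ≤ b) (h1 : b < π) :
    ∫ y in a..b, g x y = (q (Complex.mk x b)).im - (q (Complex.mk x a)).im := by
  apply intervalIntegral.integral_eq_sub_of_hasDerivAt
  · intro y hy
    rw [Set.uIcc_of_le hab] at hy
    have hy0 : 0 < y := lt_of_lt_of_le h0 hy.1
    have hy1 : y < π := lt_of_le_of_lt hy.2 h1
    have h := hasDerivAt_im' (hasDerivAt_q_vert x hy0 hy1)
    have him : (qd (Complex.mk x y) * Complex.I).im = g x y := by
      simp [g, Complex.mul_im]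
    rwa [him] at h
  · apply ContinuousOn.intervalIntegrable
    intro y hy
    rw [Set.uIcc_of_le hab] at hy
    exact (continuousAt_g_y x (lt_of_lt_of_le h0 hy.1) (lt_of_le_of_lt hy.2 h1)).continuousWithinAt

lemma measurable_x1 : Measurable x1 := by
  have : Real.cot = fun y => Real.cos y / Real.sin y := by
    funext y; exact Real.cot_eq_cos_div_sin y
  unfold x1; rw [this]
  exact (measurable_id.mul (Real.measurable_cos.div Real.measurable_sin)).neg

lemma measurable_qd : Measurable qd := by
  unfold qd Fd F
  apply Measurable.div
  · exact ((Complex.measurable_exp.comp measurable_neg).mul (by fun_prop)).div (by fun_prop)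
  · exact measurable_const.sub ((Complex.measurable_exp.comp measurable_neg).div measurable_id)

lemma measurable_g2 : Measurable fun p : ℝ × ℝ => g p.1 p.2 := by
  apply Complex.measurable_re.comp
  apply measurable_qd.comp
  simp only [cmk_eq]
  fun_prop

lemma bdd_intervalIntegrable {f : ℝ → ℝ} (hm : Measurable f) {C a b : ℝ}
    (hb : ∀ x ∈ Set.uIoc a b, |f x| ≤ C) : IntervalIntegrable f volume a b := by
  rw [intervalIntegrable_iff]
  apply Integrable.mono' (integrableOn_const (C := C) measure_Ioc_lt_top.ne)
    hm.aestronglyMeasurable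
  rw [ae_restrict_iff' measurableSet_Ioc]
  filter_upwards with x hx
  simpa using hb x hx

lemma star {δ t₁ : ℝ} (hδ : 0 < δ) (hδt : δ < t₁) (ht₁ : t₁ < π) :
    ∫ y in δ..t₁, psi y =
      (∫ y in δ..t₁, (q (Complex.mk (x1 t₁) y)).re) +
      ∫ x in (x1 δ)..(x1 t₁), (q (Complex.mk x δ)).im := by
  set A := x1 t₁ with hA
  have hδπ : δ < π := hδt.trans ht₁
  have hδmem : δ ∈ Set.Ioo 0 π := ⟨hδ, hδπ⟩
  have ht₁mem : t₁ ∈ Set.Ioo 0 π := ⟨hδ.trans hδt, ht₁⟩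
  have hx1lt : x1 δ < A := x1_strictMonoOn hδmem ht₁mem hδt
  -- the inverse function τ
  have hsurj : ∀ x ∈ Set.Icc (x1 δ) A, ∃ y, y ∈ Set.Icc δ t₁ ∧ x1 y = x := by
    intro x hx
    have hc : ContinuousOn x1 (Set.Icc δ t₁) :=
      continuousOn_x1.mono (fun y hy => ⟨hδ.trans_le hy.1, lt_of_le_of_lt hy.2 ht₁⟩)
    obtain ⟨y, hy, hxy⟩ := intermediate_value_Icc hδt.le hc hx
    exact ⟨y, hy, hxy⟩
  choose! τ hτmem hτeq using hsurj
  -- the Fubini integrand with the region indicator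
  set G : ℝ → ℝ → ℝ := fun x y => if x1 y < x then g x y else 0 with hG
  -- uniform bound
  obtain ⟨C, hC⟩ : ∃ C, ∀ p ∈ (Set.Icc (x1 δ) A) ×ˢ (Set.Icc δ t₁), |g p.1 p.2| ≤ C := by
    have hK : IsCompact ((Set.Icc (x1 δ) A) ×ˢ (Set.Icc δ t₁)) :=
      (isCompact_Icc).prod isCompact_Icc
    have hcont : ContinuousOn (fun p : ℝ × ℝ => g p.1 p.2)
        ((Set.Icc (x1 δ) A) ×ˢ (Set.Icc δ t₁)) := by
      intro p hp
      have h0 : 0 < p.2 := hδ.trans_le hp.2.1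
      have h1 : p.2 < π := lt_of_le_of_lt hp.2.2 ht₁
      apply ContinuousAt.continuousWithinAt
      apply Complex.continuous_re.continuousAt.comp
      exact (continuousAt_qd (by simpa using h0) (by simpa using h1)).comp
        continuous_mk2.continuousAt
    obtain ⟨C, hC⟩ := hK.exists_bound_of_continuousOn hcont
    exact ⟨C, fun p hp => by simpa using hC p hp⟩
  have hC0 : 0 ≤ C := le_trans (abs_nonneg _) (hC (x1 δ, δ) ⟨⟨le_refl _, hx1lt.le⟩, ⟨le_refl _, hδt.le⟩⟩)
  have hGmeas : Measurable fun p : ℝ × ℝ => G p.1 p.2 := by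
    apply Measurable.ite _ measurable_g2 measurable_const
    exact measurableSet_lt (measurable_x1.comp measurable_snd) measurable_fst
  have hGbound : ∀ x y, x ∈ Set.Icc (x1 δ) A → y ∈ Set.Icc δ t₁ → |G x y| ≤ C := by
    intro x y hx hy
    by_cases h : x1 y < x
    · simpa [hG, h] using hC (x, y) ⟨hx, hy⟩
    · simp [hG, h, hC0]
  -- integrable fibers
  have hGint_x : ∀ y (a b : ℝ), Set.uIoc a b ⊆ Set.Icc (x1 δ) A → y ∈ Set.Icc δ t₁ →
      IntervalIntegrable (fun x => G x y) volume a b := by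
    intro y a b hsub hy
    apply bdd_intervalIntegrable
    · exact hGmeas.comp (measurable_id.prodMk measurable_const)
    · exact fun x hx => hGbound x y (hsub hx) hy
  have hGint_y : ∀ x (a b : ℝ), Set.uIoc a b ⊆ Set.Icc δ t₁ → x ∈ Set.Icc (x1 δ) A →
      IntervalIntegrable (fun y => G x y) volume a b := by
    intro x a b hsub hx
    apply bdd_intervalIntegrable
    · exact hGmeas.comp (measurable_const.prodMk measurable_id)
    · exact fun y hy => hGbound x y hx (hsub hy)
  -- Fubini swap
  have hint : Integrable (fun p : ℝ × ℝ => G p.1 p.2)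
      ((volume.restrict (Set.Ioc (x1 δ) A)).prod (volume.restrict (Set.Ioc δ t₁))) := by
    apply Integrable.mono' (integrable_const C) hGmeas.aestronglyMeasurable
    rw [Measure.prod_restrict, ae_restrict_iff' (measurableSet_Ioc.prod measurableSet_Ioc)]
    filter_upwards with p hp
    exact hGbound p.1 p.2 (Set.Ioc_subset_Icc_self hp.1) (Set.Ioc_subset_Icc_self hp.2)
  have hswap : ∫ x in Set.Ioc (x1 δ) A, ∫ y in Set.Ioc δ t₁, G x y =
      ∫ y in Set.Ioc δ t₁, ∫ x in Set.Ioc (x1 δ) A, G x y :=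
    integral_integral_swap hint
  -- fiber computation in x (inner integral over x, for fixed y)
  have hfiber_y : ∀ y ∈ Set.Ioc δ t₁,
      ∫ x in Set.Ioc (x1 δ) A, G x y = (q (Complex.mk A y)).re - psi y := by
    intro y hy
    have hy0 : 0 < y := hδ.trans hy.1
    have hy1 : y < π := lt_of_le_of_lt hy.2 ht₁
    have hyIoo : y ∈ Set.Ioo 0 π := ⟨hy0, hy1⟩
    have hyIcc : y ∈ Set.Icc δ t₁ := ⟨hy.1.le, hy.2⟩
    have hm1 : x1 δ < x1 y := x1_strictMonoOn hδmem hyIoo hy.1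
    have hm2 : x1 y ≤ A := by
      rcases eq_or_lt_of_le hy.2 with h | h
      · rw [h]
      · exact (x1_strictMonoOn hyIoo ht₁mem h).le
    rw [← intervalIntegral.integral_of_le hx1lt.le]
    rw [← intervalIntegral.integral_add_adjacent_intervals (b := x1 y)
      (hGint_x y _ _ (by rw [Set.uIoc_of_le hm1.le]; exact fun x hx => ⟨hx.1.le, hx.2.trans hm2⟩) hyIcc)
      (hGint_x y _ _ (by rw [Set.uIoc_of_le hm2]; exact fun x hx => ⟨(hm1.trans hx.1).le, hx.2⟩) hyIcc)]
    have hz : ∫ x in (x1 δ)..(x1 y), G x y = 0 := by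
      rw [intervalIntegral.integral_congr (g := fun _ => 0), intervalIntegral.integral_zero]
      intro x hx
      rw [Set.uIcc_of_le hm1.le] at hx
      simp only [hG]
      rw [if_neg (not_lt.mpr hx.2)]
    have hgg : ∫ x in (x1 y)..A, G x y = ∫ x in (x1 y)..A, g x y := by
      apply intervalIntegral.integral_congr_ae
      filter_upwards with x hx
      rw [Set.uIoc_of_le hm2] at hx
      simp only [hG]
      rw [if_pos hx.1]
    rw [hz, hgg, zero_add, ftc_x hy0 hy1]
    have hzc : (q (Complex.mk (x1 y) y)).re = psi y := by
      have : Complex.mk (x1 y) y = zc y := rfl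
      rw [this, q_zc hy0 hy1, Complex.ofReal_re]
    rw [hzc]
  -- fiber computation in y (inner integral over y, for fixed x)
  have hfiber_x : ∀ x ∈ Set.Ioc (x1 δ) A,
      ∫ y in Set.Ioc δ t₁, G x y = -(q (Complex.mk x δ)).im := by
    intro x hx
    have hxIcc : x ∈ Set.Icc (x1 δ) A := ⟨hx.1.le, hx.2⟩
    have hτm := hτmem x hxIcc
    have hτe := hτeq x hxIcc
    have hτ0 : 0 < τ x := hδ.trans_le hτm.1
    have hτ1 : τ x < π := lt_of_le_of_lt hτm.2 ht₁
    have hτIoo : τ x ∈ Set.Ioo 0 π := ⟨hτ0, hτ1⟩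
    have hiff : ∀ y ∈ Set.Icc δ t₁, (x1 y < x ↔ y < τ x) := by
      intro y hy
      have hyIoo : y ∈ Set.Ioo 0 π := ⟨hδ.trans_le hy.1, lt_of_le_of_lt hy.2 ht₁⟩
      constructor
      · intro h
        by_contra hc
        push_neg at hc
        have := x1_strictMonoOn.monotoneOn hτIoo hyIoo hc
        rw [hτe] at this
        exact absurd h (not_lt.mpr this)
      · intro h
        have := x1_strictMonoOn hyIoo hτIoo h
        rwa [hτe] at this
    rw [← intervalIntegral.integral_of_le hδt.le]
    rw [← intervalIntegral.integral_add_adjacent_intervals (b := τ x)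
      (hGint_y x _ _ (by rw [Set.uIoc_of_le hτm.1]; exact fun y hy => ⟨hy.1.le, hy.2.trans hτm.2⟩) hxIcc)
      (hGint_y x _ _ (by rw [Set.uIoc_of_le hτm.2]; exact fun y hy => ⟨(lt_of_le_of_lt hτm.1 hy.1).le, hy.2⟩) hxIcc)]
    have h1 : ∫ y in δ..(τ x), G x y = ∫ y in δ..(τ x), g x y := by
      apply intervalIntegral.integral_congr_ae
      have hae : ∀ᵐ y : ℝ, y ≠ τ x := by
        rw [MeasureTheory.ae_iff]
        simpa using measure_singleton (τ x)
      filter_upwards [hae] with y hne hy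
      rw [Set.uIoc_of_le hτm.1] at hy
      have hylt : y < τ x := lt_of_le_of_ne hy.2 hne
      simp only [hG]
      rw [if_pos ((hiff y ⟨hy.1.le, hy.2.trans hτm.2⟩).mpr hylt)]
    have h2 : ∫ y in (τ x)..t₁, G x y = 0 := by
      rw [intervalIntegral.integral_congr (g := fun _ => 0), intervalIntegral.integral_zero]
      intro y hy
      rw [Set.uIcc_of_le hτm.2] at hy
      simp only [hG]
      rw [if_neg]
      rw [hiff y ⟨hτm.1.trans hy.1, hy.2⟩]
      exact not_lt.mpr hy.1
    rw [h1, h2, add_zero, ftc_y x hδ hτm.1 hτ1]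
    have hzc : (q (Complex.mk x (τ x))).im = 0 := by
      have : Complex.mk x (τ x) = zc (τ x) := by simp only [zc, hτe]
      rw [this, q_zc hτ0 hτ1, Complex.ofReal_im]
    rw [hzc]
    ring
  -- put it together
  have hL : ∫ y in Set.Ioc δ t₁, ∫ x in Set.Ioc (x1 δ) A, G x y =
      (∫ y in δ..t₁, (q (Complex.mk A y)).re) - ∫ y in δ..t₁, psi y := by
    rw [setIntegral_congr_fun measurableSet_Ioc hfiber_y]
    rw [← intervalIntegral.integral_of_le hδt.le]
    apply intervalIntegral.integral_sub
    · apply ContinuousOn.intervalIntegrable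
      intro y hy
      rw [Set.uIcc_of_le hδt.le] at hy
      have h0 : 0 < y := hδ.trans_le hy.1
      have h1 : y < π := lt_of_le_of_lt hy.2 ht₁
      apply ContinuousAt.continuousWithinAt
      apply Complex.continuous_re.continuousAt.comp
      exact ((hasDerivAt_q (w := Complex.mk A y) (by simpa using h0)
        (by simpa using h1)).continuousAt).comp (continuous_mkv A).continuousAt
    · apply ContinuousOn.intervalIntegrable
      intro y hy
      rw [Set.uIcc_of_le hδt.le] at hy
      have h0 : 0 < y := hδ.trans_le hy.1
      have h1 : y < π := lt_of_le_of_lt hy.2 ht₁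
      have : psi y = (q (zc y)).re := by rw [q_zc h0 h1, Complex.ofReal_re]
      apply ContinuousWithinAt.congr (f := fun y => (q (zc y)).re) _ _ this
      · apply ContinuousAt.continuousWithinAt
        apply Complex.continuous_re.continuousAt.comp
        apply ((hasDerivAt_q (w := zc y) (by simpa [zc] using h0)
          (by simpa [zc] using h1)).continuousAt).comp
        have : ContinuousAt x1 y := (continuousOn_x1.continuousAt
          (IsOpen.mem_nhds isOpen_Ioo ⟨h0, h1⟩))
        exact continuous_mk2.continuousAt.comp (this.prodMk continuousAt_id)
      · intro z hz
        rw [Set.uIcc_of_le hδt.le] at hz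
        have hz0 : 0 < z := hδ.trans_le hz.1
        have hz1 : z < π := lt_of_le_of_lt hz.2 ht₁
        show psi z = (q (zc z)).re
        rw [q_zc hz0 hz1, Complex.ofReal_re]
  have hR : ∫ x in Set.Ioc (x1 δ) A, ∫ y in Set.Ioc δ t₁, G x y =
      -∫ x in (x1 δ)..A, (q (Complex.mk x δ)).im := by
    rw [setIntegral_congr_fun measurableSet_Ioc hfiber_x]
    rw [← intervalIntegral.integral_of_le hx1lt.le, intervalIntegral.integral_neg]
  rw [hL, hR] at hswap
  linarith [hswap]

-- ===== from frag6.lean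
lemma q_bound {A : ℝ} (hA : 1 ≤ A) (y : ℝ) :
    ‖q (Complex.mk A y)‖ ≤ 2 * Real.exp (-A) := by
  set w : ℂ := Complex.mk A y with hw
  have hA0 : (0:ℝ) < A := lt_of_lt_of_le one_pos hA
  have habs : A ≤ ‖w‖ := le_trans (le_abs_self A) (Complex.abs_re_le_norm w)
  set z : ℂ := -(Complex.exp (-w) / w) with hz
  have hnorm : ‖z‖ = Real.exp (-A) / ‖w‖ := by
    rw [hz, norm_neg, norm_div]
    show ‖Complex.exp (-w)‖ / ‖w‖ = _
    congr 1
    rw [Complex.norm_exp]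
    rfl
  have h1 : ‖z‖ ≤ Real.exp (-A) := by
    rw [hnorm]
    calc Real.exp (-A) / ‖w‖ ≤ Real.exp (-A) / A :=
          div_le_div_of_nonneg_left (Real.exp_pos _).le hA0 habs
      _ ≤ Real.exp (-A) / 1 := div_le_div_of_nonneg_left (Real.exp_pos _).le one_pos hA
      _ = Real.exp (-A) := div_one _
  have h2 : ‖z‖ ≤ 1/2 := by
    refine h1.trans ?_
    have : Real.exp (-A) ≤ Real.exp (-1) := Real.exp_le_exp.mpr (by linarith)
    refine this.trans ?_
    rw [Real.exp_neg]
    have h3 : (2:ℝ) ≤ Real.exp 1 := by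
      have := Real.exp_one_gt_d9
      linarith
    rw [inv_le_comm₀ (by positivity) (by norm_num)]
    linarith
  have hFz : F w = 1 + z := by rw [hz, F]; ring
  have := Complex.norm_log_one_add_half_le_self h2
  rw [← hFz] at this
  calc ‖q w‖ ≤ (3/2) * ‖z‖ := this
    _ ≤ (3/2) * Real.exp (-A) := by nlinarith [norm_nonneg z]
    _ ≤ 2 * Real.exp (-A) := by nlinarith [Real.exp_pos (-A)]


-- ===== limits
lemma psi_abs_le {x : ℝ} (h0 : 0 < x) (h1 : x ≤ π) : |psi x| ≤ Real.log (1 + Real.exp 1) := by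
  rcases lt_or_eq_of_le h1 with h | h
  · rw [abs_of_nonneg (psi_nonneg h0 h)]
    exact psi_bound h0 h
  · have : psi x = 0 := by
      rw [h, psi, Real.sin_pi]
      norm_num
    rw [this, abs_zero]
    apply Real.log_nonneg
    linarith [Real.exp_pos 1]

lemma psi_intervalIntegrable {a b : ℝ} (ha : 0 ≤ a) (hb : b ≤ π) (hab : a ≤ b) :
    IntervalIntegrable psi volume a b := by
  apply bdd_intervalIntegrable measurable_psi (C := Real.log (1 + Real.exp 1))
  intro x hx
  rw [Set.uIoc_of_le hab] at hx
  exact psi_abs_le (lt_of_le_of_lt ha hx.1) (hx.2.trans hb)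

lemma tendsto_sin_div : Tendsto (fun δ : ℝ => Real.sin δ / δ) (nhdsWithin 0 (Set.Ioi 0)) (nhds 1) := by
  have h := (Real.hasDerivAt_sin 0)
  rw [hasDerivAt_iff_tendsto_slope] at h
  rw [Real.cos_zero] at h
  have hm : nhdsWithin (0:ℝ) (Set.Ioi 0) ≤ nhdsWithin 0 {0}ᶜ :=
    nhdsWithin_mono 0 (fun y hy => ne_of_gt hy)
  have h2 := h.mono_left hm
  apply h2.congr
  intro δ
  simp [slope_def_field]

lemma tendsto_x1_zero : Tendsto x1 (nhdsWithin 0 (Set.Ioi 0)) (nhds (-1)) := by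
  have hsd : Tendsto (fun δ : ℝ => (Real.sin δ / δ)⁻¹) (nhdsWithin 0 (Set.Ioi 0)) (nhds 1) := by
    have := tendsto_sin_div.inv₀ (by norm_num)
    simpa using this
  have hcos : Tendsto (fun δ : ℝ => Real.cos δ) (nhdsWithin 0 (Set.Ioi 0)) (nhds 1) := by
    have := Real.continuous_cos.tendsto 0
    rw [Real.cos_zero] at this
    exact this.mono_left nhdsWithin_le_nhds
  have hmul := hcos.mul hsd
  rw [show (1:ℝ) * 1 = 1 by norm_num] at hmul
  have := hmul.neg
  rw [show -(1:ℝ) = -1 by norm_num] at this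
  apply this.congr
  intro δ
  rw [x1, Real.cot_eq_cos_div_sin]
  rcases eq_or_ne δ 0 with h | h
  · simp [h]
  rcases eq_or_ne (Real.sin δ) 0 with hs | hs
  · simp [hs, h]
  field_simp
  try ring
  try tauto

lemma tendsto_x1_pi : Tendsto x1 (nhdsWithin π (Set.Iio π)) atTop := by
  have hsin0 : Tendsto Real.sin (nhdsWithin π (Set.Iio π)) (nhdsWithin 0 (Set.Ioi 0)) := by
    rw [tendsto_nhdsWithin_iff]
    constructor
    · have := Real.continuous_sin.tendsto π
      rw [Real.sin_pi] at this
      exact this.mono_left nhdsWithin_le_nhds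
    · have hmem : Set.Ioo 0 π ∈ nhdsWithin π (Set.Iio π) := by
        apply Ioo_mem_nhdsLT_of_mem
        constructor
        · exact Real.pi_pos
        · exact le_refl π
      filter_upwards [hmem] with t ht
      exact Real.sin_pos_of_pos_of_lt_pi ht.1 ht.2
  have hinv : Tendsto (fun t => (Real.sin t)⁻¹) (nhdsWithin π (Set.Iio π)) atTop :=
    tendsto_inv_nhdsGT_zero.comp hsin0
  have hnum : Tendsto (fun t : ℝ => t * (-Real.cos t)) (nhdsWithin π (Set.Iio π)) (nhds π) := by
    have h1 : Tendsto (fun t : ℝ => t * (-Real.cos t)) (nhds π) (nhds (π * (-Real.cos π))) :=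
      (continuous_id.mul Real.continuous_cos.neg).tendsto π
    rw [Real.cos_pi] at h1
    simpa using h1.mono_left nhdsWithin_le_nhds
  have hmul := Filter.Tendsto.pos_mul_atTop Real.pi_pos hnum hinv
  apply hmul.congr
  intro t
  rw [x1, Real.cot_eq_cos_div_sin]
  ring


lemma T1 {t₁ : ℝ} (ht0 : 0 < t₁) (ht₁ : t₁ < π) :
    Tendsto (fun δ => ∫ y in δ..t₁, psi y) (nhdsWithin 0 (Set.Ioi 0))
      (nhds (∫ y in (0:ℝ)..t₁, psi y)) := by
  set C := Real.log (1 + Real.exp 1) with hC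
  have hev : ∀ᶠ δ in nhdsWithin (0:ℝ) (Set.Ioi 0), δ ∈ Set.Ioo 0 t₁ :=
    Ioo_mem_nhdsGT_of_mem ⟨le_refl 0, ht0⟩
  have hsmall : Tendsto (fun δ : ℝ => ∫ y in (0:ℝ)..δ, psi y) (nhdsWithin 0 (Set.Ioi 0))
      (nhds 0) := by
    apply squeeze_zero_norm' (a := fun δ => C * |δ|)
    · filter_upwards [hev] with δ hδ
      have hb : ∀ y ∈ Set.uIoc (0:ℝ) δ, ‖psi y‖ ≤ C := by
        intro y hy
        rw [Set.uIoc_of_le hδ.1.le] at hy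
        rw [Real.norm_eq_abs]
        exact psi_abs_le hy.1 (le_trans hy.2 (by linarith [hδ.2]))
      have := intervalIntegral.norm_integral_le_of_norm_le_const hb
      simpa using this
    · have : Tendsto (fun δ : ℝ => C * |δ|) (nhds 0) (nhds (C * |(0:ℝ)|)) :=
        (continuous_const.mul (continuous_abs)).tendsto 0
      simp only [abs_zero, mul_zero] at this
      exact this.mono_left nhdsWithin_le_nhds
  have hcongr : ∀ᶠ δ in nhdsWithin (0:ℝ) (Set.Ioi 0),
      (∫ y in (0:ℝ)..t₁, psi y) - (∫ y in (0:ℝ)..δ, psi y) = ∫ y in δ..t₁, psi y := by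
    filter_upwards [hev] with δ hδ
    have h1 : IntervalIntegrable psi volume 0 δ :=
      psi_intervalIntegrable (le_refl 0) (by linarith [hδ.2]) hδ.1.le
    have h2 : IntervalIntegrable psi volume δ t₁ :=
      psi_intervalIntegrable hδ.1.le ht₁.le hδ.2.le
    have := intervalIntegral.integral_add_adjacent_intervals h1 h2
    linarith
  rw [← tendsto_congr' hcongr]
  have := (tendsto_const_nhds (x := ∫ y in (0:ℝ)..t₁, psi y)
    (f := nhdsWithin (0:ℝ) (Set.Ioi 0))).sub hsmall
  simpa using this

lemma T3core {Ω A : ℝ} (hΩ : Ω * Real.exp Ω = 1) (hA : 1 ≤ A) :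
    Tendsto (fun δ : ℝ => ∫ x in (-1:ℝ)..A, (q (Complex.mk x δ)).im)
      (nhdsWithin 0 (Set.Ioi 0)) (nhds (π * Ω)) := by
  have hΩ0 := Omega_pos hΩ
  have hΩ1 := Omega_lt_one hΩ
  have hm1A : (-1:ℝ) ≤ A := by linarith
  have hFmeas : Measurable F :=
    measurable_const.sub ((Complex.measurable_exp.comp measurable_neg).div measurable_id)
  set f : ℝ → ℝ := fun x => Set.indicator (Set.Ioo 0 Ω) (fun _ => π) x with hf
  have hval : ∫ x in Set.Ioc (-1:ℝ) A, f x = π * Ω := by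
    rw [hf, MeasureTheory.integral_indicator measurableSet_Ioo, setIntegral_const,
      measureReal_restrict_apply measurableSet_Ioo]
    have hsub : Set.Ioo (0:ℝ) Ω ∩ Set.Ioc (-1:ℝ) A = Set.Ioo 0 Ω := by
      apply Set.inter_eq_self_of_subset_left
      intro x hx
      exact ⟨by linarith [hx.1], le_trans hx.2.le (by linarith)⟩
    rw [hsub, Real.volume_real_Ioo, max_eq_left (by linarith)]
    simp [smul_eq_mul]
    ring
  have hconv : (fun δ : ℝ => ∫ x in (-1:ℝ)..A, (q (Complex.mk x δ)).im) =
      fun δ : ℝ => ∫ x in Set.Ioc (-1:ℝ) A, (q (Complex.mk x δ)).im := by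
    funext δ
    exact intervalIntegral.integral_of_le hm1A
  rw [hconv, ← hval]
  apply MeasureTheory.tendsto_integral_filter_of_dominated_convergence (bound := fun _ => π)
  · filter_upwards with δ
    apply Measurable.aestronglyMeasurable
    have heq : (fun x => (q (Complex.mk x δ)).im) =
        fun x => Complex.arg (F (Complex.mk x δ)) := by
      funext x
      rw [q, Complex.log_im]
    rw [heq]
    exact Complex.measurable_arg.comp (hFmeas.comp (continuous_mkh δ).measurable)
  · filter_upwards with δ
    filter_upwards with x
    rw [q, Complex.log_im, Real.norm_eq_abs]
    exact Complex.abs_arg_le_pi _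
  · exact integrableOn_const measure_Ioc_lt_top.ne
  · have hae0 : ∀ᵐ x : ℝ, x ≠ 0 := by
      rw [MeasureTheory.ae_iff]
      simpa using measure_singleton (0:ℝ)
    have haeΩ : ∀ᵐ x : ℝ, x ≠ Ω := by
      rw [MeasureTheory.ae_iff]
      simpa using measure_singleton Ω
    filter_upwards [ae_restrict_of_ae (hae0.and haeΩ)] with x hx
    obtain ⟨hx0, hxΩ⟩ := hx
    rcases lt_trichotomy x 0 with h | h | h
    · have ht := tendsto_arg_zero hx0 (Freal_pos_of_neg h)
      have hfx : f x = 0 :=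
        Set.indicator_of_notMem (fun hc => absurd hc.1 (not_lt.mpr h.le)) _
      rw [hfx]
      exact ht
    · exact absurd h hx0
    · rcases lt_trichotomy x Ω with h2 | h2 | h2
      · have ht := tendsto_arg_pi hΩ h h2
        have hfx : f x = π := Set.indicator_of_mem (Set.mem_Ioo.mpr ⟨h, h2⟩) _
        rw [hfx]
        exact ht
      · exact absurd h2 hxΩ
      · have ht := tendsto_arg_zero hx0 (Freal_pos_of_gt hΩ h2)
        have hfx : f x = 0 :=
          Set.indicator_of_notMem (fun hc => absurd hc.2 (not_lt.mpr h2.le)) _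
        rw [hfx]
        exact ht

lemma T3 {Ω t₁ : ℝ} (hΩ : Ω * Real.exp Ω = 1) (ht0 : 0 < t₁) (ht₁ : t₁ < π)
    (hA : 1 ≤ x1 t₁) :
    Tendsto (fun δ => ∫ x in (x1 δ)..(x1 t₁), (q (Complex.mk x δ)).im)
      (nhdsWithin 0 (Set.Ioi 0)) (nhds (π * Ω)) := by
  set A := x1 t₁ with hAdef
  have hint : ∀ δ : ℝ, δ ∈ Set.Ioo (0:ℝ) π → ∀ a b : ℝ,
      IntervalIntegrable (fun x => (q (Complex.mk x δ)).im) volume a b := by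
    intro δ hδ a b
    apply Continuous.intervalIntegrable
    have hc : Continuous (fun x : ℝ => q (Complex.mk x δ)) :=
      continuous_iff_continuousAt.mpr (fun x => (hasDerivAt_q_horiz hδ.1 hδ.2 x).continuousAt)
    exact Complex.continuous_im.comp hc
  have hev : ∀ᶠ δ in nhdsWithin (0:ℝ) (Set.Ioi 0), δ ∈ Set.Ioo (0:ℝ) π :=
    Ioo_mem_nhdsGT_of_mem ⟨le_refl 0, Real.pi_pos⟩
  have hsplit : ∀ᶠ δ in nhdsWithin (0:ℝ) (Set.Ioi 0),
      (∫ x in (-1:ℝ)..A, (q (Complex.mk x δ)).im) -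
        (∫ x in (-1:ℝ)..(x1 δ), (q (Complex.mk x δ)).im) =
      ∫ x in (x1 δ)..A, (q (Complex.mk x δ)).im := by
    filter_upwards [hev] with δ hδ
    have := intervalIntegral.integral_add_adjacent_intervals
      (hint δ hδ (-1) (x1 δ)) (hint δ hδ (x1 δ) A)
    linarith
  have hsecond : Tendsto (fun δ => ∫ x in (-1:ℝ)..(x1 δ), (q (Complex.mk x δ)).im)
      (nhdsWithin 0 (Set.Ioi 0)) (nhds 0) := by
    apply squeeze_zero_norm' (a := fun δ => π * |x1 δ - (-1)|)
    · filter_upwards [hev] with δ hδ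
      have hb : ∀ x ∈ Set.uIoc (-1:ℝ) (x1 δ), ‖(q (Complex.mk x δ)).im‖ ≤ π := by
        intro x _
        rw [q, Complex.log_im, Real.norm_eq_abs]
        exact Complex.abs_arg_le_pi _
      have := intervalIntegral.norm_integral_le_of_norm_le_const hb
      simpa [abs_sub_comm] using this
    · have h1 : Tendsto (fun δ => x1 δ - (-1)) (nhdsWithin (0:ℝ) (Set.Ioi 0)) (nhds 0) := by
        have := tendsto_x1_zero.sub (tendsto_const_nhds (x := (-1:ℝ)))
        simpa using this
      have h2 := h1.abs
      rw [abs_zero] at h2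
      have h3 := h2.const_mul π
      rw [mul_zero] at h3
      exact h3
  rw [← tendsto_congr' hsplit]
  have := (T3core hΩ hA).sub hsecond
  simpa using this

lemma main_est {Ω t₁ : ℝ} (hΩ : Ω * Real.exp Ω = 1) (ht0 : 0 < t₁) (ht₁ : t₁ < π)
    (hA : 1 ≤ x1 t₁) :
    |(∫ t in (0:ℝ)..t₁, psi t) - π * Ω| ≤ 2 * π * Real.exp (-(x1 t₁)) := by
  set A := x1 t₁ with hAdef
  have hΦ : Tendsto (fun δ => (∫ y in δ..t₁, psi y) -
      ∫ x in (x1 δ)..A, (q (Complex.mk x δ)).im) (nhdsWithin 0 (Set.Ioi 0))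
      (nhds ((∫ t in (0:ℝ)..t₁, psi t) - π * Ω)) :=
    (T1 ht0 ht₁).sub (T3 hΩ ht0 ht₁ hA)
  apply le_of_tendsto hΦ.abs
  have hev : ∀ᶠ δ in nhdsWithin (0:ℝ) (Set.Ioi 0), δ ∈ Set.Ioo 0 t₁ :=
    Ioo_mem_nhdsGT_of_mem ⟨le_refl 0, ht0⟩
  filter_upwards [hev] with δ hδ
  have hstar := star hδ.1 hδ.2 ht₁
  have heq : (∫ y in δ..t₁, psi y) - (∫ x in (x1 δ)..A, (q (Complex.mk x δ)).im) =
      ∫ y in δ..t₁, (q (Complex.mk A y)).re := by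
    rw [hstar]
    ring
  rw [heq]
  have hb : ∀ y ∈ Set.uIoc δ t₁, ‖(q (Complex.mk A y)).re‖ ≤ 2 * Real.exp (-A) := by
    intro y _
    rw [Real.norm_eq_abs]
    calc |(q (Complex.mk A y)).re| ≤ ‖q (Complex.mk A y)‖ :=
          Complex.abs_re_le_norm _
      _ ≤ 2 * Real.exp (-A) := q_bound hA y
  have hle := intervalIntegral.norm_integral_le_of_norm_le_const hb
  rw [Real.norm_eq_abs] at hle
  calc |∫ y in δ..t₁, (q (Complex.mk A y)).re| ≤ 2 * Real.exp (-A) * |t₁ - δ| := hle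
    _ ≤ 2 * π * Real.exp (-A) := by
        have h1 : |t₁ - δ| = t₁ - δ := abs_of_nonneg (by linarith [hδ.2])
        have h2 : t₁ - δ ≤ π := by linarith [hδ.1]
        nlinarith [Real.exp_pos (-A), sub_nonneg.mpr hδ.2.le]

lemma integral_psi_eq {Ω : ℝ} (hΩ : Ω * Real.exp Ω = 1) :
    (∫ t in (0:ℝ)..π, psi t) = π * Ω := by
  set C := Real.log (1 + Real.exp 1) with hCdef
  have hev : ∀ᶠ t₁ in nhdsWithin π (Set.Iio π), t₁ ∈ Set.Ioo (0:ℝ) π :=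
    Ioo_mem_nhdsLT_of_mem ⟨Real.pi_pos, le_refl π⟩
  have h1 : Tendsto (fun t₁ => ∫ t in (0:ℝ)..t₁, psi t) (nhdsWithin π (Set.Iio π))
      (nhds (∫ t in (0:ℝ)..π, psi t)) := by
    have hsmall : Tendsto (fun t₁ => ∫ t in t₁..π, psi t) (nhdsWithin π (Set.Iio π))
        (nhds 0) := by
      apply squeeze_zero_norm' (a := fun t₁ => C * |π - t₁|)
      · filter_upwards [hev] with t₁ ht₁
        have hb : ∀ y ∈ Set.uIoc t₁ π, ‖psi y‖ ≤ C := by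
          intro y hy
          rw [Set.uIoc_of_le ht₁.2.le] at hy
          rw [Real.norm_eq_abs]
          exact psi_abs_le (lt_trans ht₁.1 hy.1) hy.2
        exact intervalIntegral.norm_integral_le_of_norm_le_const hb
      · have hc : Tendsto (fun t₁ : ℝ => C * |π - t₁|) (nhds π) (nhds (C * |π - π|)) := by
          apply Tendsto.const_mul
          exact ((continuous_const.sub continuous_id).abs).tendsto π
        simp only [sub_self, abs_zero, mul_zero] at hc
        exact hc.mono_left nhdsWithin_le_nhds
    have hcongr : ∀ᶠ t₁ in nhdsWithin π (Set.Iio π),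
        (∫ t in (0:ℝ)..π, psi t) - (∫ t in t₁..π, psi t) = ∫ t in (0:ℝ)..t₁, psi t := by
      filter_upwards [hev] with t₁ ht₁
      have ha : IntervalIntegrable psi volume 0 t₁ :=
        psi_intervalIntegrable (le_refl 0) ht₁.2.le ht₁.1.le
      have hb : IntervalIntegrable psi volume t₁ π :=
        psi_intervalIntegrable ht₁.1.le (le_refl π) ht₁.2.le
      have := intervalIntegral.integral_add_adjacent_intervals ha hb
      linarith
    rw [← tendsto_congr' hcongr]
    have := (tendsto_const_nhds (x := ∫ t in (0:ℝ)..π, psi t)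
      (f := nhdsWithin π (Set.Iio π))).sub hsmall
    simpa using this
  have h2 : Tendsto (fun t₁ => ∫ t in (0:ℝ)..t₁, psi t) (nhdsWithin π (Set.Iio π))
      (nhds (π * Ω)) := by
    have hevA : ∀ᶠ t₁ in nhdsWithin π (Set.Iio π), 1 ≤ x1 t₁ :=
      tendsto_x1_pi.eventually_ge_atTop 1
    have hbnd : ∀ᶠ t₁ in nhdsWithin π (Set.Iio π),
        ‖(∫ t in (0:ℝ)..t₁, psi t) - π * Ω‖ ≤ 2 * π * Real.exp (-(x1 t₁)) := by
      filter_upwards [hevA, hev] with t₁ hA ht₁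
      rw [Real.norm_eq_abs]
      exact main_est hΩ ht₁.1 ht₁.2 hA
    have hexp : Tendsto (fun t₁ => 2 * π * Real.exp (-(x1 t₁))) (nhdsWithin π (Set.Iio π))
        (nhds 0) := by
      have hneg : Tendsto (fun t₁ => -(x1 t₁)) (nhdsWithin π (Set.Iio π)) atBot :=
        tendsto_neg_atBot_iff.mpr tendsto_x1_pi
      have hexp0 : Tendsto (fun t₁ => Real.exp (-(x1 t₁))) (nhdsWithin π (Set.Iio π))
          (nhds 0) := Real.tendsto_exp_atBot.comp hneg
      have := hexp0.const_mul (2 * π)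
      simpa using this
    have hz := squeeze_zero_norm' hbnd hexp
    have := hz.add_const (π * Ω)
    simpa using this
  exact tendsto_nhds_unique h1 h2

end OmegaRep

open OmegaRep in
theorem omega_integral_rep (Ω : ℝ) (hΩ : Ω * Real.exp Ω = 1) :
    Ω = (1 / π) * ∫ t in (0:ℝ)..π,
      Real.log (1 + (Real.sin t / t) * Real.exp (t * Real.cot t)) := by
  have h := integral_psi_eq hΩ
  have hπ : π ≠ 0 := Real.pi_ne_zero
  have heq : (∫ t in (0:ℝ)..π,
      Real.log (1 + (Real.sin t / t) * Real.exp (t * Real.cot t))) = ∫ t in (0:ℝ)..π, psi t := rfl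
  rw [heq, h]
  field_simp
end
end

section
/- The radius of convergence of the power series ∑_{n=1}^∞ ((-n)^{n-1} / n!) x^n equals 1/e. -/
open Real Filter Topology

private lemma norm_term (x : ℝ) (n : ℕ) :
    ‖(-(n + 1 : ℝ)) ^ n / (n + 1).factorial * x ^ (n + 1)‖
      = (n + 1 : ℝ) ^ n / (n + 1).factorial * |x| ^ (n + 1) := by
  rw [norm_mul, norm_div, norm_pow, norm_pow, Real.norm_eq_abs, Real.norm_eq_abs,
    Real.norm_eq_abs, abs_neg]
  rw [abs_of_nonneg (by positivity : (0:ℝ) ≤ (n+1:ℝ)),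
      abs_of_nonneg (by positivity : (0:ℝ) ≤ ((n+1).factorial : ℝ))]

private lemma ratio_eq (x : ℝ) (hx : x ≠ 0) (n : ℕ) :
    ‖(-(((n+1) : ℕ) + 1 : ℝ)) ^ (n+1) / (((n+1) : ℕ) + 1).factorial * x ^ ((n+1) + 1)‖ /
      ‖(-(n + 1 : ℝ)) ^ n / (n + 1).factorial * x ^ (n + 1)‖
      = ((n + 2 : ℝ) / (n + 1)) ^ n * |x| := by
  have h1 := norm_term x (n+1)
  have h2 := norm_term x n
  push_cast at h1 h2 ⊢
  rw [h1, h2]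
  have hfac : (((n+1) + 1).factorial : ℝ) = ((n+2 : ℝ)) * (n+1).factorial := by
    rw [Nat.factorial_succ]; push_cast; ring
  push_cast at hfac
  rw [hfac]
  have hx' : |x| ≠ 0 := abs_ne_zero.mpr hx
  have h3 : ((n:ℝ)+1) ≠ 0 := by positivity
  have h4 : ((n:ℝ)+1)^n ≠ 0 := by positivity
  have h5 : ((n+1).factorial : ℝ) ≠ 0 := by positivity
  have h6 : ((n:ℝ)+2) ≠ 0 := by positivity
  rw [div_pow]
  field_simp
  ring

private lemma tendsto_ratio : Tendsto (fun n : ℕ => ((n + 2 : ℝ) / (n + 1)) ^ n) atTop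
    (𝓝 (Real.exp 1)) := by
  have h1 : Tendsto (fun n : ℕ => (1 + 1 / ((n:ℝ)+1)) ^ (n+1)) atTop (𝓝 (Real.exp 1)) := by
    have := (Real.tendsto_one_add_div_pow_exp 1).comp (tendsto_add_atTop_nat 1)
    refine this.congr fun n => ?_
    simp [Function.comp]
  have h2 : Tendsto (fun n : ℕ => (1 + 1 / ((n:ℝ)+1))) atTop (𝓝 1) := by
    have : Tendsto (fun n : ℕ => 1 / ((n:ℝ)+1)) atTop (𝓝 0) :=
      tendsto_one_div_add_atTop_nhds_zero_nat
    simpa using (tendsto_const_nhds.add this)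
  have h3 := h1.div h2 one_ne_zero
  simp only [div_one] at h3
  have heq : ∀ n : ℕ, (1 + 1 / ((n:ℝ)+1)) ^ (n+1) / (1 + 1 / ((n:ℝ)+1))
      = ((n + 2 : ℝ) / (n + 1)) ^ n := by
    intro n
    have h0 : ((n:ℝ)+1) ≠ 0 := by positivity
    have : (1 + 1 / ((n:ℝ)+1)) = ((n:ℝ)+2)/((n:ℝ)+1) := by field_simp; ring
    rw [this, pow_succ, mul_div_assoc, div_self (by positivity), mul_one]
  exact h3.congr heq

theorem lambertW_series_radius (x : ℝ) :
    (|x| < 1 / Real.exp 1 →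
      Summable (fun n : ℕ => (-(n + 1 : ℝ)) ^ n / (n + 1).factorial * x ^ (n + 1))) ∧
    (|x| > 1 / Real.exp 1 →
      ¬ Summable (fun n : ℕ => (-(n + 1 : ℝ)) ^ n / (n + 1).factorial * x ^ (n + 1))) := by
  set f : ℕ → ℝ := fun n : ℕ => (-(n + 1 : ℝ)) ^ n / (n + 1).factorial * x ^ (n + 1) with hf
  have hmain : x ≠ 0 → Tendsto
      (fun n : ℕ => ‖f (n+1)‖ / ‖f n‖) atTop (𝓝 (Real.exp 1 * |x|)) := by
    intro hy
    have := tendsto_ratio.mul (tendsto_const_nhds (x := |x|))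
    exact this.congr' (Eventually.of_forall fun n => (ratio_eq x hy n).symm)
  constructor
  · intro hx
    rcases eq_or_ne x 0 with hx0 | hx0
    · apply summable_of_ne_finset_zero (s := ∅)
      intro n _
      simp [hf, hx0]
    · have hne : ∀ n : ℕ, f n ≠ 0 := by
        intro n
        apply mul_ne_zero
        · apply div_ne_zero
          · apply pow_ne_zero; intro h; nlinarith [(h : -((n:ℝ)+1) = 0)]
          · positivity
        · exact pow_ne_zero _ hx0
      apply summable_of_ratio_test_tendsto_lt_one (l := Real.exp 1 * |x|)
      · have he : (0:ℝ) < Real.exp 1 := Real.exp_pos 1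
        rw [lt_div_iff₀ he, mul_comm] at hx
        linarith
      · exact Eventually.of_forall hne
      · exact hmain hx0
  · intro hx hs
    have hx0 : x ≠ 0 := by
      intro h
      have h0 : (0:ℝ) < 1 / Real.exp 1 := by positivity
      rw [h, abs_zero] at hx
      linarith
    have hgt : 1 < Real.exp 1 * |x| := by
      have he : (0:ℝ) < Real.exp 1 := Real.exp_pos 1
      rw [gt_iff_lt, div_lt_iff₀ he, mul_comm] at hx
      linarith
    exact not_summable_of_ratio_test_tendsto_gt_one hgt (hmain hx0) hs
end

section
/- For ν = 1, the integral ∫₀^π (sin t / t) exp(t cot t) dt equals π. -/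
open Real MeasureTheory Filter Metric Set intervalIntegral
open scoped Topology Interval

noncomputable def nbF (t u : ℝ) : ℝ := Real.exp (t * Real.cot t * u) * (Real.sin (t * u) / u)

noncomputable def nbPsi (t : ℝ) : ℝ := ∫ u in (0:ℝ)..1, nbF t u

lemma nb_mul_le_one {a u : ℝ} (ha : a ≤ 1) (hu0 : 0 ≤ u) (hu1 : u ≤ 1) : a * u ≤ 1 := by
  rcases le_or_gt a 0 with h | h
  · nlinarith
  · nlinarith

lemma nb_tcot_le_one {t : ℝ} (ht : 0 < t) (ht' : t ≤ π) : t * Real.cot t ≤ 1 := by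
  rcases lt_or_ge t (π/2) with h | h
  · have hs : 0 < Real.sin t := Real.sin_pos_of_pos_of_lt_pi ht (by linarith [Real.pi_pos])
    have htan := Real.lt_tan ht h
    rw [Real.tan_eq_sin_div_cos] at htan
    rw [Real.cot_eq_cos_div_sin]
    rcases le_or_gt (Real.cos t) 0 with hc | hc
    · have : t * (Real.cos t / Real.sin t) ≤ 0 := by
        apply mul_nonpos_of_nonneg_of_nonpos ht.le
        exact div_nonpos_of_nonpos_of_nonneg hc hs.le
      linarith
    · have htan2 : t * Real.cos t < Real.sin t := (lt_div_iff₀ hc).1 htan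
      have h2 : t * Real.cos t / Real.sin t < 1 := (div_lt_one hs).2 htan2
      calc t * (Real.cos t / Real.sin t) = t * Real.cos t / Real.sin t := by ring
        _ ≤ 1 := h2.le
  · rcases eq_or_lt_of_le ht' with rfl | hlt
    · simp [Real.cot_eq_cos_div_sin]
    · have hs : 0 < Real.sin t := Real.sin_pos_of_pos_of_lt_pi ht hlt
      have hc : Real.cos t ≤ 0 := Real.cos_nonpos_of_pi_div_two_le_of_le h (by linarith [Real.pi_pos])
      have : t * Real.cot t ≤ 0 := by
        rw [Real.cot_eq_cos_div_sin]
        apply mul_nonpos_of_nonneg_of_nonpos ht.le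
        exact div_nonpos_of_nonpos_of_nonneg hc hs.le
      linarith

lemma nbF_meas (t : ℝ) : AEStronglyMeasurable (nbF t) (volume.restrict (Ι (0:ℝ) 1)) := by
  apply Measurable.aestronglyMeasurable
  unfold nbF
  fun_prop

lemma nbF_nonneg {t u : ℝ} (ht : 0 ≤ t) (ht' : t ≤ π) (hu0 : 0 < u) (hu1 : u ≤ 1) :
    0 ≤ nbF t u := by
  unfold nbF
  apply mul_nonneg (Real.exp_pos _).le
  apply div_nonneg _ hu0.le
  apply Real.sin_nonneg_of_nonneg_of_le_pi (by positivity)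
  calc t * u ≤ t * 1 := by nlinarith
    _ ≤ π := by linarith

lemma nbF_le {t u : ℝ} (ht : 0 < t) (ht' : t ≤ π) (hu0 : 0 < u) (hu1 : u ≤ 1) :
    nbF t u ≤ Real.exp 1 * t := by
  unfold nbF
  have h1 : Real.exp (t * Real.cot t * u) ≤ Real.exp 1 :=
    Real.exp_le_exp.2 (nb_mul_le_one (nb_tcot_le_one ht ht') hu0.le hu1)
  have h2 : Real.sin (t * u) / u ≤ t := by
    rw [div_le_iff₀ hu0]
    calc Real.sin (t * u) ≤ t * u := Real.sin_le (by positivity)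
      _ = t * u := rfl
  have h3 : 0 ≤ Real.sin (t*u) / u := by
    apply div_nonneg _ hu0.le
    apply Real.sin_nonneg_of_nonneg_of_le_pi (by positivity)
    nlinarith
  calc Real.exp (t * Real.cot t * u) * (Real.sin (t * u) / u)
      ≤ Real.exp 1 * (Real.sin (t*u)/u) := by apply mul_le_mul_of_nonneg_right h1 h3
    _ ≤ Real.exp 1 * t := by apply mul_le_mul_of_nonneg_left h2 (Real.exp_pos _).le

lemma nbF_intble {t : ℝ} (ht : 0 < t) (ht' : t ≤ π) : IntervalIntegrable (nbF t) volume 0 1 := by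
  apply IntervalIntegrable.mono_fun' (g := fun _ => Real.exp 1 * t)
    (intervalIntegrable_const) (nbF_meas t)
  rw [Filter.EventuallyLE, ae_restrict_iff' measurableSet_uIoc]
  filter_upwards with u hu
  rw [Set.uIoc_of_le (by norm_num : (0:ℝ) ≤ 1)] at hu
  show ‖nbF t u‖ ≤ Real.exp 1 * t
  rw [Real.norm_eq_abs]
  rw [abs_of_nonneg (nbF_nonneg ht.le ht' hu.1 hu.2)]
  exact nbF_le ht ht' hu.1 hu.2

lemma nb_hasDerivAt_cot {t : ℝ} (h : Real.sin t ≠ 0) :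
    HasDerivAt Real.cot (-(1 + Real.cot t ^ 2)) t := by
  have h1 : HasDerivAt (fun x => Real.cos x / Real.sin x)
      ((-Real.sin t * Real.sin t - Real.cos t * Real.cos t) / Real.sin t ^ 2) t :=
    (Real.hasDerivAt_cos t).div (Real.hasDerivAt_sin t) h
  have he : (fun x => Real.cos x / Real.sin x) = Real.cot := by
    funext x; rw [Real.cot_eq_cos_div_sin]
  rw [he] at h1
  convert h1 using 1
  rw [Real.cot_eq_cos_div_sin]
  have h2 := Real.sin_sq_add_cos_sq t
  field_simp
  nlinarith

noncomputable def nbF' (x u : ℝ) : ℝ :=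
  Real.exp (x * Real.cot x * u) *
    ((Real.cot x - x * (1 + Real.cot x ^ 2)) * Real.sin (x * u) + Real.cos (x * u))

lemma nb_deriv {t : ℝ} (ht0 : 0 < t) (htp : t < π) :
    HasDerivAt (fun s => s + nbPsi s) (Real.sin t / t * Real.exp (t * Real.cot t)) t := by
  have hst : Real.sin t ≠ 0 := (Real.sin_pos_of_pos_of_lt_pi ht0 htp).ne'
  set ε := min t (π - t) / 2 with hεdef
  have hε0 : 0 < ε := div_pos (lt_min ht0 (by linarith)) (by norm_num)
  have hεt : ε ≤ t / 2 := by
    have := min_le_left t (π - t); rw [hεdef]; linarith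
  have hεπ : ε ≤ (π - t) / 2 := by
    have := min_le_right t (π - t); rw [hεdef]; linarith
  have hKsub : Set.Icc (t - ε) (t + ε) ⊆ Set.Ioo 0 π := by
    intro x hx
    obtain ⟨h1, h2⟩ := hx
    constructor <;> nlinarith
  have hball : Metric.ball t ε ⊆ Set.Icc (t - ε) (t + ε) := by
    intro x hx
    rw [Metric.mem_ball, Real.dist_eq, abs_lt] at hx
    constructor <;> linarith [hx.1, hx.2]
  -- bound on the derivative coefficient
  have hcont : ContinuousOn (fun x => Real.cot x - x * (1 + Real.cot x ^ 2))
      (Set.Icc (t - ε) (t + ε)) := by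
    have hcot : ContinuousOn Real.cot (Set.Icc (t - ε) (t + ε)) := by
      have : ContinuousOn (fun x => Real.cos x / Real.sin x) (Set.Icc (t - ε) (t + ε)) := by
        apply ContinuousOn.div Real.continuous_cos.continuousOn Real.continuous_sin.continuousOn
        intro x hx
        obtain ⟨hx1, hx2⟩ := hKsub hx
        exact (Real.sin_pos_of_pos_of_lt_pi hx1 hx2).ne'
      convert this using 1
      funext x; rw [Real.cot_eq_cos_div_sin]
    exact hcot.sub (continuousOn_id.mul ((continuousOn_const.add (hcot.pow 2))))
  obtain ⟨C, hC⟩ := isCompact_Icc.exists_bound_of_continuousOn hcont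
  -- apply differentiation under the integral sign
  have key := (intervalIntegral.hasDerivAt_integral_of_dominated_loc_of_deriv_le
    (F := fun x u => nbF x u) (F' := nbF') (x₀ := t) (a := (0:ℝ)) (b := (1:ℝ))
    (bound := fun _ => Real.exp 1 * (C + 1)) (μ := volume) (Metric.ball_mem_nhds t hε0)
    (Filter.Eventually.of_forall fun x => nbF_meas x)
    (nbF_intble ht0 htp.le)
    (by
      apply Continuous.aestronglyMeasurable
      unfold nbF'
      fun_prop)
    (by
      apply Filter.Eventually.of_forall
      intro u hu x hx
      rw [Set.uIoc_of_le (by norm_num : (0:ℝ) ≤ 1)] at hu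
      obtain ⟨hx0, hxp⟩ := hKsub (hball hx)
      have e1 : Real.exp (x * Real.cot x * u) ≤ Real.exp 1 :=
        Real.exp_le_exp.2 (nb_mul_le_one (nb_tcot_le_one hx0 hxp.le) hu.1.le hu.2)
      have e2 : |(Real.cot x - x * (1 + Real.cot x ^ 2)) * Real.sin (x * u) + Real.cos (x * u)|
          ≤ C + 1 := by
        have h3 := hC x (hball hx)
        rw [Real.norm_eq_abs] at h3
        calc |(Real.cot x - x * (1 + Real.cot x ^ 2)) * Real.sin (x * u) + Real.cos (x * u)|
            ≤ |(Real.cot x - x * (1 + Real.cot x ^ 2)) * Real.sin (x * u)| + |Real.cos (x * u)| :=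
              abs_add_le _ _
          _ ≤ |Real.cot x - x * (1 + Real.cot x ^ 2)| * 1 + 1 := by
              rw [abs_mul]
              gcongr
              · exact Real.abs_sin_le_one _
              · exact Real.abs_cos_le_one _
          _ ≤ C + 1 := by rw [mul_one]; gcongr
      unfold nbF'
      rw [Real.norm_eq_abs, abs_mul, abs_of_pos (Real.exp_pos _)]
      have : (0:ℝ) ≤ C + 1 := le_trans (by positivity) e2
      calc Real.exp (x * Real.cot x * u) *
            |(Real.cot x - x * (1 + Real.cot x ^ 2)) * Real.sin (x * u) + Real.cos (x * u)|
          ≤ Real.exp 1 * (C + 1) := by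
            apply mul_le_mul e1 e2 (abs_nonneg _) (Real.exp_pos _).le)
    intervalIntegrable_const
    (by
      apply Filter.Eventually.of_forall
      intro u hu x hx
      rw [Set.uIoc_of_le (by norm_num : (0:ℝ) ≤ 1)] at hu
      obtain ⟨hx0, hxp⟩ := hKsub (hball hx)
      have hsx : Real.sin x ≠ 0 := (Real.sin_pos_of_pos_of_lt_pi hx0 hxp).ne'
      have hc := nb_hasDerivAt_cot hsx
      have hg : HasDerivAt (fun y => y * Real.cot y * u)
          ((1 * Real.cot x + x * (-(1 + Real.cot x ^ 2))) * u) x :=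
        ((hasDerivAt_id x).mul hc).mul_const u
      have hexp := hg.exp
      have hmul : HasDerivAt (fun y : ℝ => y * u) u x := hasDerivAt_mul_const u
      have hsin : HasDerivAt (fun y => Real.sin (y * u)) (Real.cos (x * u) * u) x :=
        hmul.sin
      have h := hexp.mul (hsin.div_const u)
      have hu0 : u ≠ 0 := hu.1.ne'
      refine h.congr_deriv ?_
      unfold nbF'
      field_simp
      ring)).2
  -- evaluate the integral of nbF'
  have hval : (∫ u in (0:ℝ)..1, nbF' t u)
      = Real.exp (t * Real.cot t) *
          ((1 - t * Real.cot t) / t * Real.sin t + Real.cos t) - 1 := by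
    have hA : ∀ u ∈ Set.uIcc (0:ℝ) 1, HasDerivAt
        (fun u => Real.exp (t * Real.cot t * u) *
          ((1 - t * Real.cot t) / t * Real.sin (t * u) + Real.cos (t * u)))
        (nbF' t u) u := by
      intro u _
      have hg : HasDerivAt (fun u : ℝ => t * Real.cot t * u) (t * Real.cot t * 1) u :=
        (hasDerivAt_id u).const_mul (t * Real.cot t)
      rw [mul_one] at hg
      have hexp := hg.exp
      have hsin : HasDerivAt (fun u => Real.sin (t * u)) (Real.cos (t * u) * (t * 1)) u :=
        (Real.hasDerivAt_sin (t * u)).comp u ((hasDerivAt_id u).const_mul t)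
      have hcos : HasDerivAt (fun u => Real.cos (t * u)) (-Real.sin (t * u) * (t * 1)) u :=
        (Real.hasDerivAt_cos (t * u)).comp u ((hasDerivAt_id u).const_mul t)
      have inner := (hsin.const_mul ((1 - t * Real.cot t) / t)).add hcos
      have total := hexp.mul inner
      refine total.congr_deriv ?_
      unfold nbF'
      simp only [Pi.add_apply]
      field_simp
      ring
    have hcF : Continuous (nbF' t) := by unfold nbF'; fun_prop
    rw [intervalIntegral.integral_eq_sub_of_hasDerivAt hA (hcF.intervalIntegrable 0 1)]
    norm_num
  rw [hval] at key
  have hfin := (hasDerivAt_id t).add key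
  refine hfin.congr_deriv ?_
  rw [Real.cot_eq_cos_div_sin]
  field_simp
  ring

lemma nb_frac_le {t u : ℝ} (ht : 0 ≤ t) (hu : 0 < u) : Real.sin (t * u) / u ≤ t := by
  rw [div_le_iff₀ hu]
  exact Real.sin_le (by positivity)

lemma nbPsi_nonneg {t : ℝ} (h0 : 0 ≤ t) (hp : t ≤ π) : 0 ≤ nbPsi t := by
  apply intervalIntegral.integral_nonneg (by norm_num)
  intro u hu
  rcases eq_or_lt_of_le hu.1 with rfl | hu0
  · simp [nbF]
  · exact nbF_nonneg h0 hp hu0 hu.2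

lemma nbPsi_le {t : ℝ} (h0 : 0 < t) (hp : t ≤ π) : nbPsi t ≤ Real.exp 1 * t := by
  rw [show Real.exp 1 * t = ∫ _ in (0:ℝ)..1, Real.exp 1 * t by simp]
  apply intervalIntegral.integral_mono_on (by norm_num) (nbF_intble h0 hp)
    intervalIntegrable_const
  intro u hu
  rcases eq_or_lt_of_le hu.1 with rfl | hu0
  · simp [nbF]; positivity
  · exact nbF_le h0 hp hu0 hu.2

lemma nbPsi_ub {t : ℝ} (h1 : π / 2 < t) (h2 : t < π) :
    nbPsi t ≤ π * ((Real.exp (t * Real.cot t) - 1) / (t * Real.cot t)) := by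
  have ht0 : 0 < t := lt_trans (by positivity) h1
  have hs : 0 < Real.sin t := Real.sin_pos_of_pos_of_lt_pi ht0 h2
  have hcos : Real.cos t < 0 := Real.cos_neg_of_pi_div_two_lt_of_lt h1 (by linarith)
  have hg : t * Real.cot t < 0 := by
    rw [Real.cot_eq_cos_div_sin]
    apply mul_neg_of_pos_of_neg ht0
    exact div_neg_of_neg_of_pos hcos hs
  set g := t * Real.cot t with hgdef
  have step1 : nbPsi t ≤ ∫ u in (0:ℝ)..1, π * Real.exp (g * u) := by
    apply intervalIntegral.integral_mono_on (by norm_num) (nbF_intble ht0 h2.le)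
      ((by fun_prop : Continuous fun u : ℝ => π * Real.exp (g * u)).intervalIntegrable 0 1)
    intro u hu
    rcases eq_or_lt_of_le hu.1 with rfl | hu0
    · simp [nbF]; positivity
    · unfold nbF
      rw [← hgdef]
      have hfrac : Real.sin (t * u) / u ≤ π := le_trans (nb_frac_le ht0.le hu0) h2.le
      have hfrac0 : 0 ≤ Real.sin (t * u) / u := by
        apply div_nonneg _ hu0.le
        apply Real.sin_nonneg_of_nonneg_of_le_pi (by positivity)
        nlinarith [hu.2]
      calc Real.exp (g * u) * (Real.sin (t * u) / u) ≤ Real.exp (g * u) * π := by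
            exact mul_le_mul_of_nonneg_left hfrac (Real.exp_pos _).le
        _ = π * Real.exp (g * u) := by ring
  have step2 : (∫ u in (0:ℝ)..1, π * Real.exp (g * u))
      = π * ((Real.exp g - 1) / g) := by
    have hA : ∀ u ∈ Set.uIcc (0:ℝ) 1, HasDerivAt (fun u => π * (Real.exp (g * u) / g))
        (π * Real.exp (g * u)) u := by
      intro u _
      have hgu : HasDerivAt (fun u : ℝ => g * u) (g * 1) u := (hasDerivAt_id u).const_mul g
      have h := ((hgu.exp).div_const g).const_mul π
      refine h.congr_deriv ?_
      rw [mul_one, mul_div_cancel_right₀ _ hg.ne]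
    rw [intervalIntegral.integral_eq_sub_of_hasDerivAt hA
      ((by fun_prop : Continuous fun u : ℝ => π * Real.exp (g * u)).intervalIntegrable 0 1)]
    rw [mul_one, mul_zero, Real.exp_zero]
    field_simp
  linarith [step1, step2.le, step2.ge]

lemma nb_cot_atBot : Filter.Tendsto (fun t => t * Real.cot t) (nhdsWithin π (Set.Iio π)) Filter.atBot := by
  have h1 : Filter.Tendsto Real.sin (nhdsWithin π (Set.Iio π)) (nhdsWithin 0 (Set.Ioi 0)) := by
    rw [tendsto_nhdsWithin_iff]
    constructor
    · have := (Real.continuous_sin.tendsto π).mono_left (nhdsWithin_le_nhds (s := Set.Iio π))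
      rwa [Real.sin_pi] at this
    · have hmem : Set.Ioi (0:ℝ) ∈ nhdsWithin π (Set.Iio π) := by
        apply nhdsWithin_le_nhds
        exact isOpen_Ioi.mem_nhds (Set.mem_Ioi.mpr Real.pi_pos)
      filter_upwards [hmem, self_mem_nhdsWithin] with t ht1 ht2
      exact Real.sin_pos_of_pos_of_lt_pi ht1 ht2
  have h2 : Filter.Tendsto (fun t => (Real.sin t)⁻¹) (nhdsWithin π (Set.Iio π)) Filter.atTop :=
    tendsto_inv_nhdsGT_zero.comp h1
  have h3 : Filter.Tendsto Real.cos (nhdsWithin π (Set.Iio π)) (nhds (-1)) := by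
    have := (Real.continuous_cos.tendsto π).mono_left (nhdsWithin_le_nhds (s := Set.Iio π))
    rwa [Real.cos_pi] at this
  have h4 : Filter.Tendsto (fun t => Real.cos t * (Real.sin t)⁻¹)
      (nhdsWithin π (Set.Iio π)) Filter.atBot :=
    Filter.Tendsto.neg_mul_atTop (by norm_num) h3 h2
  have h5 : Filter.Tendsto (fun t : ℝ => t) (nhdsWithin π (Set.Iio π)) (nhds π) :=
    Filter.tendsto_id.mono_left nhdsWithin_le_nhds
  have h6 := Filter.Tendsto.pos_mul_atBot Real.pi_pos h5 h4
  convert h6 using 2 with t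
  rw [Real.cot_eq_cos_div_sin, div_eq_mul_inv]

lemma nb_r_tendsto : Filter.Tendsto
    (fun t => π * ((Real.exp (t * Real.cot t) - 1) / (t * Real.cot t)))
    (nhdsWithin π (Set.Iio π)) (nhds 0) := by
  have hinv : Filter.Tendsto (fun x : ℝ => x⁻¹) Filter.atBot (nhds 0) := by
    have h := (tendsto_inv_atTop_zero (𝕜 := ℝ)).comp tendsto_neg_atBot_atTop
    have h2 := h.neg
    simp only [Function.comp] at h2
    have h3 : (fun x : ℝ => -(-x)⁻¹) = fun x : ℝ => x⁻¹ := by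
      funext x; rw [inv_neg, neg_neg]
    rw [← h3]
    simpa using h2
  have h6 : Filter.Tendsto (fun x : ℝ => (Real.exp x - 1) * x⁻¹) Filter.atBot (nhds 0) := by
    have := (Real.tendsto_exp_atBot.sub (tendsto_const_nhds (x := (1:ℝ)))).mul hinv
    simpa using this
  have h7 := (h6.comp nb_cot_atBot).const_mul π
  simp only [Function.comp] at h7
  simpa [div_eq_mul_inv, mul_zero] using h7

noncomputable def nbf (t : ℝ) : ℝ := if t < π then t + nbPsi t else π

lemma nbPsi_zero : nbPsi 0 = 0 := by
  unfold nbPsi nbF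
  simp

lemma nbf_eq_near {x : ℝ} (hx : x < π) : nbf =ᶠ[nhds x] fun t => t + nbPsi t := by
  filter_upwards [isOpen_Iio.eventually_mem hx] with t ht
  exact if_pos ht

lemma nbf_zero : nbf 0 = 0 := by
  rw [nbf, if_pos Real.pi_pos, nbPsi_zero, add_zero]

lemma nbf_pi : nbf π = π := by rw [nbf, if_neg (lt_irrefl π)]

lemma nbf_cont : ContinuousOn nbf (Set.Icc 0 π) := by
  intro x hx
  rcases eq_or_lt_of_le hx.2 with rfl | hxlt
  · -- x = π
    rw [← continuousWithinAt_diff_self]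
    have hsub : Set.Icc (0:ℝ) π \ {π} ⊆ Set.Iio π := fun t ht => lt_of_le_of_ne ht.1.2 ht.2
    unfold ContinuousWithinAt
    rw [nbf_pi]
    apply tendsto_of_tendsto_of_tendsto_of_le_of_le'
      (f := nbf) (g := fun t : ℝ => t)
      (h := fun t => t + π * ((Real.exp (t * Real.cot t) - 1) / (t * Real.cot t)))
    · exact Filter.tendsto_id.mono_left nhdsWithin_le_nhds
    · have hr := nb_r_tendsto.mono_left (nhdsWithin_mono _ hsub)
      have := (Filter.tendsto_id.mono_left nhdsWithin_le_nhds).add hr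
      simpa using this
    · filter_upwards [self_mem_nhdsWithin] with t ht
      have ht' : t ∈ Set.Icc (0:ℝ) π := ht.1
      have htlt : t < π := lt_of_le_of_ne ht'.2 (by simpa using ht.2)
      rw [nbf, if_pos htlt]
      have := nbPsi_nonneg ht'.1 ht'.2
      linarith
    · have hhalf : Set.Ioi (π/2) ∈ nhdsWithin π (Set.Icc (0:ℝ) π \ {π}) := by
        apply nhdsWithin_le_nhds
        apply isOpen_Ioi.mem_nhds
        simp only [Set.mem_Ioi]
        linarith [Real.pi_pos]
      filter_upwards [self_mem_nhdsWithin, hhalf] with t ht ht2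
      have htlt : t < π := lt_of_le_of_ne ht.1.2 (by simpa using ht.2)
      rw [nbf, if_pos htlt]
      have := nbPsi_ub ht2 htlt
      linarith
  · rcases eq_or_lt_of_le hx.1 with rfl | hx0
    · -- x = 0
      rw [← continuousWithinAt_diff_self]
      unfold ContinuousWithinAt
      rw [nbf_zero]
      have hsub : Set.Icc (0:ℝ) π \ {0} ⊆ Set.Ioc 0 π := fun t ht =>
        ⟨lt_of_le_of_ne ht.1.1 (Ne.symm ht.2), ht.1.2⟩
      apply squeeze_zero'
      · filter_upwards [self_mem_nhdsWithin] with t ht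
        have ht' := hsub ht
        rcases lt_or_ge t π with h | h
        · rw [nbf, if_pos h]
          have := nbPsi_nonneg ht'.1.le ht'.2
          linarith [ht'.1]
        · rw [nbf, if_neg (not_lt.mpr h)]
          exact Real.pi_pos.le
      · filter_upwards [self_mem_nhdsWithin] with t ht
        have ht' := hsub ht
        show nbf t ≤ (1 + Real.exp 1) * t
        rcases lt_or_ge t π with h | h
        · rw [nbf, if_pos h]
          have := nbPsi_le ht'.1 ht'.2
          nlinarith [ht'.1]
        · rw [nbf, if_neg (not_lt.mpr h)]
          nlinarith [Real.exp_pos 1, ht'.1, Real.pi_pos]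
      · have : Filter.Tendsto (fun t : ℝ => (1 + Real.exp 1) * t) (nhds 0) (nhds 0) := by
          have h := ((continuous_const (y := (1 + Real.exp 1))).mul continuous_id).tendsto (0:ℝ)
          simpa [Pi.mul_def] using h
        exact this.mono_left nhdsWithin_le_nhds
    · -- interior
      have hd := nb_deriv hx0 hxlt
      have hc : ContinuousAt (fun t => t + nbPsi t) x := hd.continuousAt
      exact (hc.congr (nbf_eq_near hxlt).symm).continuousWithinAt

theorem nuttall_bouwkamp_one :
    ∫ t in (0:ℝ)..π, (Real.sin t / t) * Real.exp (t * Real.cot t) = π := by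
  have h0π : (0:ℝ) ≤ π := Real.pi_pos.le
  have hderiv : ∀ x ∈ Set.Ioo (0:ℝ) π,
      HasDerivWithinAt nbf (Real.sin x / x * Real.exp (x * Real.cot x)) (Set.Ioi x) x := by
    intro x hx
    exact ((nb_deriv hx.1 hx.2).congr_of_eventuallyEq (nbf_eq_near hx.2)).hasDerivWithinAt
  have hint : IntervalIntegrable (fun t => Real.sin t / t * Real.exp (t * Real.cot t))
      volume 0 π := by
    apply IntervalIntegrable.mono_fun' (g := fun _ => 1 * Real.exp 1) intervalIntegrable_const
    · apply Measurable.aestronglyMeasurable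
      have heq : (fun t => Real.sin t / t * Real.exp (t * Real.cot t))
          = fun t => Real.sin t / t * Real.exp (t * (Real.cos t / Real.sin t)) := by
        funext t; rw [Real.cot_eq_cos_div_sin]
      rw [heq]
      fun_prop
    · rw [Filter.EventuallyLE, ae_restrict_iff' measurableSet_uIoc]
      filter_upwards with t ht
      rw [Set.uIoc_of_le h0π] at ht
      have hs : 0 ≤ Real.sin t := Real.sin_nonneg_of_nonneg_of_le_pi ht.1.le ht.2
      have hr1 : Real.sin t / t ≤ 1 := by
        rw [div_le_one ht.1]
        exact Real.sin_le ht.1.le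
      have hr0 : 0 ≤ Real.sin t / t := div_nonneg hs ht.1.le
      have he : Real.exp (t * Real.cot t) ≤ Real.exp 1 :=
        Real.exp_le_exp.2 (nb_tcot_le_one ht.1 ht.2)
      show ‖Real.sin t / t * Real.exp (t * Real.cot t)‖ ≤ 1 * Real.exp 1
      rw [Real.norm_eq_abs, abs_of_nonneg (by positivity)]
      apply mul_le_mul hr1 he (Real.exp_pos _).le (by norm_num)
  have hres := intervalIntegral.integral_eq_sub_of_hasDeriv_right_of_le h0π nbf_cont hderiv hint
  rw [hres, nbf_pi, nbf_zero, sub_zero]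
end
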